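/- arXiv:1710.03936 — 6 statements merged into one kernel-verified Lean document; each statement's English description precedes it below -/
import Mathlib

section
/- Let ρ₀ > 0 and let G : (0,ρ₀) → ℝ be differentiable. Suppose there are real numbers a₀, b₀, a₁, b₁ and d₀, c₁, d₁, and a constant C > 0, such that for all sufficiently small ρ > 0: |G(ρ) − (a₀ ln ρ + b₀ + a₁ ρ ln ρ + b₁ ρ)| ≤ C ρ²(1 + |ln ρ|) and |G'(ρ) − (d₀/ρ + c₁ ln ρ + d₁)| ≤ C ρ(1 + |ln ρ|). Then d₀ = a₀, c₁ = a₁ and d₁ = b₁ + a₁. -/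
open Filter Real Set Topology

lemma aux_hasDerivAt (d₀ c₁ d₁ : ℝ) {x : ℝ} (hx : 0 < x) :
    HasDerivAt (fun y : ℝ => d₀ * Real.log y + c₁ * y * Real.log y + (d₁ - c₁) * y)
      (d₀ / x + c₁ * Real.log x + d₁) x := by
  have h1 : HasDerivAt Real.log x⁻¹ x := Real.hasDerivAt_log hx.ne'
  have h2 : HasDerivAt (fun y : ℝ => y * Real.log y) (Real.log x + 1) x := by
    have h := (hasDerivAt_id x).mul h1
    exact h.congr_deriv (by simp [hx.ne'])
  have h3 := ((h1.const_mul d₀).add (h2.const_mul c₁)).add ((hasDerivAt_id x).const_mul (d₁ - c₁))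
  have h4 : HasDerivAt (fun y : ℝ => d₀ * Real.log y + c₁ * y * Real.log y + (d₁ - c₁) * y)
      (d₀ * x⁻¹ + c₁ * (Real.log x + 1) + (d₁ - c₁) * 1) x := by
    refine HasDerivAt.congr_of_eventuallyEq h3 ?_
    filter_upwards with y
    simp only [id, Pi.add_apply]
    ring
  convert h4 using 1
  field_simp
  ring

lemma aux_mul_log : Tendsto (fun ρ : ℝ => ρ * Real.log ρ) (𝓝[>] 0) (𝓝 0) := by
  have h := tendsto_log_mul_rpow_nhdsGT_zero (r := 1) one_pos
  refine h.congr' ?_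
  filter_upwards [self_mem_nhdsWithin] with x hx
  rw [Real.rpow_one]; ring

lemma aux_id : Tendsto (fun ρ : ℝ => ρ) (𝓝[>] 0) (𝓝 0) :=
  Filter.Tendsto.mono_left tendsto_id nhdsWithin_le_nhds

lemma aux_mul_one_add_abs_log :
    Tendsto (fun ρ : ℝ => ρ * (1 + |Real.log ρ|)) (𝓝[>] 0) (𝓝 0) := by
  have h1 : Tendsto (fun ρ : ℝ => ρ + -(ρ * Real.log ρ)) (𝓝[>] 0) (𝓝 0) := by
    simpa using aux_id.add aux_mul_log.neg
  refine h1.congr' ?_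
  have hmem : Set.Ioo (0:ℝ) 1 ∈ 𝓝[>] (0:ℝ) :=
    Ioo_mem_nhdsGT_of_mem (by constructor <;> norm_num)
  filter_upwards [hmem] with x hx
  rw [abs_of_nonpos (Real.log_nonpos hx.1.le hx.2.le)]
  ring

lemma aux_sq_mul_one_add_abs_log :
    Tendsto (fun ρ : ℝ => ρ ^ 2 * (1 + |Real.log ρ|)) (𝓝[>] 0) (𝓝 0) := by
  have := aux_id.mul aux_mul_one_add_abs_log
  simpa [sq, mul_assoc] using this

lemma aux_coeffs (α β δ K : ℝ)
    (h : ∀ᶠ ρ in 𝓝[>] (0:ℝ),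
      |α + β * (ρ * Real.log ρ) + δ * ρ| ≤ K * (ρ ^ 2 * (1 + |Real.log ρ|))) :
    α = 0 ∧ β = 0 ∧ δ = 0 := by
  have hRHS : Tendsto (fun ρ : ℝ => K * (ρ ^ 2 * (1 + |Real.log ρ|))) (𝓝[>] 0) (𝓝 0) := by
    simpa using aux_sq_mul_one_add_abs_log.const_mul K
  have hf : Tendsto (fun ρ : ℝ => α + β * (ρ * Real.log ρ) + δ * ρ) (𝓝[>] 0) (𝓝 α) := by
    simpa using ((tendsto_const_nhds (x := α)).add (aux_mul_log.const_mul β)).add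
      (aux_id.const_mul δ)
  have habs : Tendsto (fun ρ : ℝ => |α + β * (ρ * Real.log ρ) + δ * ρ|) (𝓝[>] 0) (𝓝 0) :=
    squeeze_zero' (Eventually.of_forall fun _ => abs_nonneg _) h hRHS
  have hf0 : Tendsto (fun ρ : ℝ => α + β * (ρ * Real.log ρ) + δ * ρ) (𝓝[>] 0) (𝓝 0) := by
    rwa [tendsto_zero_iff_abs_tendsto_zero]
  have hα : α = 0 := tendsto_nhds_unique hf hf0
  subst hα
  have h2 : ∀ᶠ ρ in 𝓝[>] (0:ℝ),
      |β * Real.log ρ + δ| ≤ K * (ρ * (1 + |Real.log ρ|)) := by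
    filter_upwards [h, self_mem_nhdsWithin] with ρ hρ hρpos
    have hρpos' : (0:ℝ) < ρ := hρpos
    have heq : 0 + β * (ρ * Real.log ρ) + δ * ρ = ρ * (β * Real.log ρ + δ) := by ring
    rw [heq, abs_mul, abs_of_pos hρpos'] at hρ
    have : ρ * |β * Real.log ρ + δ| ≤ ρ * (K * (ρ * (1 + |Real.log ρ|))) := by
      calc ρ * |β * Real.log ρ + δ| ≤ K * (ρ ^ 2 * (1 + |Real.log ρ|)) := hρ
        _ = ρ * (K * (ρ * (1 + |Real.log ρ|))) := by ring
    exact le_of_mul_le_mul_left this hρpos'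
  have hRHS2 : Tendsto (fun ρ : ℝ => K * (ρ * (1 + |Real.log ρ|))) (𝓝[>] 0) (𝓝 0) := by
    simpa using aux_mul_one_add_abs_log.const_mul K
  have hg0 : Tendsto (fun ρ : ℝ => β * Real.log ρ + δ) (𝓝[>] 0) (𝓝 0) := by
    rw [tendsto_zero_iff_abs_tendsto_zero]
    exact squeeze_zero' (Eventually.of_forall fun _ => abs_nonneg _) h2 hRHS2
  have hβ : β = 0 := by
    by_contra hβ
    have hlog : Tendsto Real.log (𝓝[>] (0:ℝ)) atBot := Real.tendsto_log_nhdsGT_zero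
    have : Tendsto Real.log (𝓝[>] (0:ℝ)) (𝓝 ((0 - δ) * β⁻¹)) := by
      have := (hg0.sub (tendsto_const_nhds (x := δ))).mul (tendsto_const_nhds (x := β⁻¹))
      refine this.congr fun ρ => ?_
      field_simp
      ring
    exact not_tendsto_nhds_of_tendsto_atBot hlog _ this
  subst hβ
  have hδ : δ = 0 := by
    have : Tendsto (fun _ : ℝ => δ) (𝓝[>] (0:ℝ)) (𝓝 δ) := tendsto_const_nhds
    refine tendsto_nhds_unique this (hg0.congr fun ρ => by ring)
  exact ⟨rfl, rfl, hδ⟩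

/-- If a differentiable function `G` on `(0,ρ₀)` and its derivative admit asymptotic
expansions in `ρ^k ln ρ, ρ^k` as `ρ → 0⁺`, the coefficients of the derivative expansion
are obtained by formal differentiation. -/
theorem formal_differentiation_of_expansion
    (ρ₀ : ℝ) (hρ₀ : 0 < ρ₀) (G : ℝ → ℝ)
    (hdiff : ∀ ρ ∈ Set.Ioo (0:ℝ) ρ₀, DifferentiableAt ℝ G ρ)
    (a₀ b₀ a₁ b₁ d₀ c₁ d₁ C : ℝ) (hC : 0 < C)
    (hG : ∀ᶠ ρ in nhdsWithin 0 (Set.Ioi (0:ℝ)),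
      |G ρ - (a₀ * Real.log ρ + b₀ + a₁ * ρ * Real.log ρ + b₁ * ρ)|
        ≤ C * ρ ^ 2 * (1 + |Real.log ρ|))
    (hG' : ∀ᶠ ρ in nhdsWithin 0 (Set.Ioi (0:ℝ)),
      |deriv G ρ - (d₀ / ρ + c₁ * Real.log ρ + d₁)|
        ≤ C * ρ * (1 + |Real.log ρ|)) :
    d₀ = a₀ ∧ c₁ = a₁ ∧ d₁ = b₁ + a₁ := by
  obtain ⟨ε, hε, hsub⟩ := mem_nhdsGT_iff_exists_Ioo_subset.mp (hG.and hG')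
  have hεpos : (0:ℝ) < ε := hε
  set α := a₀ - d₀ with hαdef
  set β := a₁ - c₁ with hβdef
  set γ := b₁ + c₁ - d₁ with hγdef
  set δ := 2 * β * Real.log 2 + γ with hδdef
  set m := min (min (ε / 2) (ρ₀ / 2)) (1 / 2) with hmdef
  have hm : 0 < m := by positivity
  -- the key eventual estimate
  have hkey : ∀ᶠ ρ in 𝓝[>] (0:ℝ),
      |α * Real.log 2 + β * (ρ * Real.log ρ) + δ * ρ|
        ≤ (7 * C) * (ρ ^ 2 * (1 + |Real.log ρ|)) := by
    filter_upwards [Ioo_mem_nhdsGT_of_mem (left_mem_Ico.mpr hm)] with ρ hρ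
    obtain ⟨hρpos, hρm⟩ := hρ
    have hρε2 : ρ < ε / 2 := lt_of_lt_of_le hρm (le_trans (min_le_left _ _) (min_le_left _ _))
    have hρρ₀ : ρ < ρ₀ / 2 := lt_of_lt_of_le hρm (le_trans (min_le_left _ _) (min_le_right _ _))
    have hρhalf : ρ < 1 / 2 := lt_of_lt_of_le hρm (min_le_right _ _)
    have h2ρε : 2 * ρ < ε := by linarith
    have h2ρ1 : 2 * ρ < 1 := by linarith
    -- set up MVT for F on [ρ, 2ρ]
    set F : ℝ → ℝ := fun y => G y -
      (d₀ * Real.log y + c₁ * y * Real.log y + (d₁ - c₁) * y) with hFdef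
    set F' : ℝ → ℝ := fun y => deriv G y - (d₀ / y + c₁ * Real.log y + d₁) with hF'def
    have hFderiv : ∀ x ∈ Set.Icc ρ (2 * ρ), HasDerivAt F (F' x) x := by
      intro x hx
      have hxpos : 0 < x := lt_of_lt_of_le hρpos hx.1
      have hxρ₀ : x < ρ₀ := by
        have := hx.2; linarith
      exact ((hdiff x ⟨hxpos, hxρ₀⟩).hasDerivAt).sub (aux_hasDerivAt d₀ c₁ d₁ hxpos)
    obtain ⟨ξ, hξ, hslope⟩ := exists_hasDerivAt_eq_slope F F' (by linarith : ρ < 2 * ρ)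
      (fun x hx => (hFderiv x hx).continuousAt.continuousWithinAt)
      (fun x hx => hFderiv x (Set.mem_Icc_of_Ioo hx))
    have hξpos : 0 < ξ := lt_trans hρpos hξ.1
    have hξε : ξ < ε := lt_trans hξ.2 h2ρε
    have hξ1 : ξ < 1 := lt_trans hξ.2 h2ρ1
    -- bound on F(2ρ) - F(ρ)
    have hFd : F (2 * ρ) - F ρ = F' ξ * ρ := by
      have h2 : (2:ℝ) * ρ - ρ = ρ := by ring
      rw [hslope, h2]
      field_simp
    have hbound' := (hsub ⟨hξpos, hξε⟩).2
    have hlogξ : |Real.log ξ| ≤ |Real.log ρ| := by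
      rw [abs_of_nonpos (Real.log_nonpos hξpos.le hξ1.le),
        abs_of_nonpos (Real.log_nonpos hρpos.le (by linarith))]
      have := Real.log_le_log hρpos (le_of_lt hξ.1)
      linarith
    have hFbound : |F (2 * ρ) - F ρ| ≤ 2 * C * (ρ ^ 2 * (1 + |Real.log ρ|)) := by
      rw [hFd, abs_mul, abs_of_pos hρpos]
      calc |F' ξ| * ρ ≤ C * ξ * (1 + |Real.log ξ|) * ρ := by
            exact mul_le_mul_of_nonneg_right hbound' hρpos.le
        _ ≤ C * (2 * ρ) * (1 + |Real.log ρ|) * ρ := by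
            apply mul_le_mul_of_nonneg_right _ hρpos.le
            apply mul_le_mul (by nlinarith [hξ.2]) (by linarith) (by positivity) (by positivity)
        _ = 2 * C * (ρ ^ 2 * (1 + |Real.log ρ|)) := by ring
    -- the expansion bounds
    have hE1 := (hsub ⟨hρpos, by linarith⟩).1
    have hE2 := (hsub ⟨(by linarith : (0:ℝ) < 2 * ρ), h2ρε⟩).1
    have hlog2ρ : |Real.log (2 * ρ)| ≤ |Real.log ρ| := by
      rw [abs_of_nonpos (Real.log_nonpos (by linarith) h2ρ1.le),
        abs_of_nonpos (Real.log_nonpos hρpos.le (by linarith))]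
      have := Real.log_le_log hρpos (by linarith : ρ ≤ 2 * ρ)
      linarith
    have hE2' : |G (2 * ρ) - (a₀ * Real.log (2 * ρ) + b₀ + a₁ * (2 * ρ) * Real.log (2 * ρ)
        + b₁ * (2 * ρ))| ≤ 4 * C * (ρ ^ 2 * (1 + |Real.log ρ|)) := by
      calc _ ≤ C * (2 * ρ) ^ 2 * (1 + |Real.log (2 * ρ)|) := hE2
        _ ≤ C * (2 * ρ) ^ 2 * (1 + |Real.log ρ|) := by
            apply mul_le_mul_of_nonneg_left (by linarith) (by positivity)
        _ = 4 * C * (ρ ^ 2 * (1 + |Real.log ρ|)) := by ring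
    -- the algebraic identity
    have hlog2 : Real.log (2 * ρ) = Real.log 2 + Real.log ρ :=
      Real.log_mul two_ne_zero hρpos.ne'
    have hid : α * Real.log 2 + β * (ρ * Real.log ρ) + δ * ρ =
        (F (2 * ρ) - F ρ)
        - (G (2 * ρ) - (a₀ * Real.log (2 * ρ) + b₀ + a₁ * (2 * ρ) * Real.log (2 * ρ)
            + b₁ * (2 * ρ)))
        + (G ρ - (a₀ * Real.log ρ + b₀ + a₁ * ρ * Real.log ρ + b₁ * ρ)) := by
      simp only [hFdef, hαdef, hβdef, hδdef, hγdef, hlog2]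
      ring
    rw [hid]
    have hE1' : |G ρ - (a₀ * Real.log ρ + b₀ + a₁ * ρ * Real.log ρ + b₁ * ρ)|
        ≤ C * (ρ ^ 2 * (1 + |Real.log ρ|)) := by
      calc _ ≤ C * ρ ^ 2 * (1 + |Real.log ρ|) := hE1
        _ = C * (ρ ^ 2 * (1 + |Real.log ρ|)) := by ring
    calc _ ≤ |F (2 * ρ) - F ρ| + |G (2 * ρ) - (a₀ * Real.log (2 * ρ) + b₀
            + a₁ * (2 * ρ) * Real.log (2 * ρ) + b₁ * (2 * ρ))|
            + |G ρ - (a₀ * Real.log ρ + b₀ + a₁ * ρ * Real.log ρ + b₁ * ρ)| := by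
          apply (abs_add_le _ _).trans
          gcongr
          exact abs_sub _ _
      _ ≤ 2 * C * (ρ ^ 2 * (1 + |Real.log ρ|)) + 4 * C * (ρ ^ 2 * (1 + |Real.log ρ|))
            + C * (ρ ^ 2 * (1 + |Real.log ρ|)) := by gcongr
      _ = (7 * C) * (ρ ^ 2 * (1 + |Real.log ρ|)) := by ring
  obtain ⟨h1, h2, h3⟩ := aux_coeffs (α * Real.log 2) β δ (7 * C) hkey
  have hα : α = 0 := by
    have : Real.log 2 ≠ 0 := ne_of_gt (Real.log_pos one_lt_two)
    exact (mul_eq_zero.mp h1).resolve_right this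
  have hγ0 : γ = 0 := by
    rw [hδdef, h2] at h3; linarith [h3]
  refine ⟨by linarith [hα], by linarith [h2], by linarith [hγ0, h2]⟩
end

section
/- Let f : [0,1) → ℝ be infinitely differentiable and integrable on (0,1). Define F(ρ) := ∫₀¹ f(x)·√(x(x+ρ)) dx for ρ > 0. Then there exist ρ₀ > 0 and C > 0 such that for all ρ ∈ (0,ρ₀): |F(ρ) − (∫₀¹ x f(x) dx + (ρ/2)·∫₀¹ f(x) dx + (f(0)/8)·ρ² ln ρ)| ≤ C ρ². -/
open MeasureTheory

namespace ExpansionFAux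

noncomputable def wfun (ρ x : ℝ) : ℝ := Real.sqrt (x*(x+ρ)) + x + ρ/2

lemma wfun_lb {ρ x : ℝ} (hρ : 0 < ρ) (hx : 0 < x) : 2*x + ρ/2 ≤ wfun ρ x := by
  have hs2 : (Real.sqrt (x*(x+ρ)))^2 = x*(x+ρ) := Real.sq_sqrt (by positivity)
  have hs0 : 0 ≤ Real.sqrt (x*(x+ρ)) := Real.sqrt_nonneg _
  have : x ≤ Real.sqrt (x * (x + ρ)) := by nlinarith
  unfold wfun; linarith

lemma wfun_ub {ρ x : ℝ} (hρ : 0 < ρ) (hx : 0 < x) : wfun ρ x ≤ 2*x + ρ := by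
  have hs2 : (Real.sqrt (x*(x+ρ)))^2 = x*(x+ρ) := Real.sq_sqrt (by positivity)
  have hs0 : 0 ≤ Real.sqrt (x*(x+ρ)) := Real.sqrt_nonneg _
  have : Real.sqrt (x * (x + ρ)) ≤ x + ρ/2 := by nlinarith
  unfold wfun; linarith

lemma wfun_pos {ρ x : ℝ} (hρ : 0 < ρ) (hx : 0 < x) : 0 < wfun ρ x := by
  have := wfun_lb hρ hx; linarith

lemma wfun_half (ρ x : ℝ) (hρ : 0 < ρ) (hx : 0 < x) : ρ/2 ≤ wfun ρ x := by
  have := wfun_lb hρ hx; linarith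

lemma continuous_wfun (ρ : ℝ) : Continuous (wfun ρ) := by
  unfold wfun
  exact ((Real.continuous_sqrt.comp (by fun_prop)).add continuous_id).add continuous_const

lemma sqrt_eq' {ρ x : ℝ} (hρ : 0 < ρ) (hx : 0 < x) :
    Real.sqrt (x*(x+ρ)) = x + ρ/2 - ρ^2 / (4 * wfun ρ x) := by
  have hs2 : (Real.sqrt (x*(x+ρ)))^2 = x*(x+ρ) := Real.sq_sqrt (by positivity)
  have hs0 : 0 ≤ Real.sqrt (x*(x+ρ)) := Real.sqrt_nonneg _
  have hw : 0 < Real.sqrt (x*(x+ρ)) + x + ρ/2 := by linarith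
  unfold wfun
  set s := Real.sqrt (x*(x+ρ)) with hs
  field_simp
  nlinarith [hs2]

/-- value of `∫₀¹ (2x+ρ/2)⁻¹`. -/
lemma int_inv_lin {ρ : ℝ} (hρ : 0 < ρ) :
    ∫ x in Set.Ioo (0:ℝ) 1, (2*x+ρ/2)⁻¹
      = Real.log (2+ρ/2)/2 - Real.log (ρ/2)/2 := by
  have hpos : ∀ x ∈ Set.uIcc (0:ℝ) 1, 0 < 2*x+ρ/2 := by
    intro x hx
    rw [Set.uIcc_of_le (by norm_num : (0:ℝ) ≤ 1)] at hx
    nlinarith [hx.1]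
  have hderiv : ∀ x ∈ Set.uIcc (0:ℝ) 1,
      HasDerivAt (fun y => Real.log (2*y+ρ/2) / 2) ((2*x+ρ/2)⁻¹) x := by
    intro x hx
    have h1 : HasDerivAt (fun y : ℝ => 2*y+ρ/2) 2 x := by
      simpa using ((hasDerivAt_id x).const_mul 2).add_const (ρ/2)
    have h2 := (Real.hasDerivAt_log (ne_of_gt (hpos x hx))).comp x h1
    have := h2.div_const 2
    exact this.congr_deriv (by ring)
  have hcont : ContinuousOn (fun x : ℝ => (2*x+ρ/2)⁻¹) (Set.uIcc (0:ℝ) 1) := by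
    apply ContinuousOn.inv₀
    · fun_prop
    · exact fun x hx => ne_of_gt (hpos x hx)
  have hcalc := intervalIntegral.integral_eq_sub_of_hasDerivAt hderiv hcont.intervalIntegrable
  rw [intervalIntegral.integral_of_le (by norm_num : (0:ℝ) ≤ 1),
    integral_Ioc_eq_integral_Ioo] at hcalc
  rw [hcalc]
  norm_num

/-- value of `∫₀¹ 1/(2x+ρ/2)²`. -/
lemma int_inv_sq {ρ : ℝ} (hρ : 0 < ρ) :
    ∫ x in Set.Ioo (0:ℝ) 1, 1/(2*x+ρ/2)^2
      = (ρ/2)⁻¹/2 - (2+ρ/2)⁻¹/2 := by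
  have hpos : ∀ x ∈ Set.uIcc (0:ℝ) 1, 0 < 2*x+ρ/2 := by
    intro x hx
    rw [Set.uIcc_of_le (by norm_num : (0:ℝ) ≤ 1)] at hx
    nlinarith [hx.1]
  have hderiv : ∀ x ∈ Set.uIcc (0:ℝ) 1,
      HasDerivAt (fun y => -((2*y+ρ/2)⁻¹/2)) (1/(2*x+ρ/2)^2) x := by
    intro x hx
    have h1 : HasDerivAt (fun y : ℝ => 2*y+ρ/2) 2 x := by
      simpa using ((hasDerivAt_id x).const_mul 2).add_const (ρ/2)
    have h3 := ((h1.inv (ne_of_gt (hpos x hx))).div_const 2).neg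
    have h4 : -(-2/(2*x+ρ/2)^2/2) = 1/(2*x+ρ/2)^2 := by
      generalize (2*x+ρ/2) = a
      ring
    exact h4 ▸ h3
  have hcont : ContinuousOn (fun x : ℝ => 1/(2*x+ρ/2)^2) (Set.uIcc (0:ℝ) 1) := by
    apply ContinuousOn.div continuousOn_const
    · fun_prop
    · exact fun x hx => pow_ne_zero _ (ne_of_gt (hpos x hx))
  have hcalc := intervalIntegral.integral_eq_sub_of_hasDerivAt hderiv hcont.intervalIntegrable
  rw [intervalIntegral.integral_of_le (by norm_num : (0:ℝ) ≤ 1),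
    integral_Ioc_eq_integral_Ioo] at hcalc
  rw [hcalc]
  norm_num
  ring

end ExpansionFAux

open ExpansionFAux

set_option maxHeartbeats 2000000 in
/-- Expansion of `F(ρ) = ∫₀¹ f(x) √(x(x+ρ)) dx` as `ρ → 0⁺`. -/
theorem expansion_F
    (f : ℝ → ℝ)
    (hf : ContDiffOn ℝ (⊤ : ℕ∞) f (Set.Ico 0 1))
    (hfint : IntegrableOn f (Set.Ioo 0 1)) :
    ∃ ρ₀ > (0:ℝ), ∃ C > (0:ℝ), ∀ ρ ∈ Set.Ioo (0:ℝ) ρ₀,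
      |(∫ x in Set.Ioo (0:ℝ) 1, f x * Real.sqrt (x * (x + ρ)))
        - ((∫ x in Set.Ioo (0:ℝ) 1, x * f x)
           + (ρ / 2) * (∫ x in Set.Ioo (0:ℝ) 1, f x)
           + (f 0 / 8) * ρ ^ 2 * Real.log ρ)|
      ≤ C * ρ ^ 2 := by
  -- a Lipschitz-type bound near 0
  obtain ⟨M, hM0, hM⟩ : ∃ M ≥ (0:ℝ), ∀ x ∈ Set.Icc (0:ℝ) (1/2), |f x - f 0| ≤ M * x := by
    have hsub : Set.Icc (0:ℝ) (1/2) ⊆ Set.Ico 0 1 := by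
      intro x hx; exact ⟨hx.1, by linarith [hx.2]⟩
    have hf1 : ContDiffOn ℝ 1 f (Set.Icc 0 (1/2)) :=
      (hf.mono hsub).of_le (by exact_mod_cast le_top)
    have hdiff : DifferentiableOn ℝ f (Set.Icc 0 (1/2)) := hf1.differentiableOn one_ne_zero
    have hcont : ContinuousOn (derivWithin f (Set.Icc 0 (1/2))) (Set.Icc 0 (1/2)) :=
      hf1.continuousOn_derivWithin (uniqueDiffOn_Icc (by norm_num)) le_rfl
    obtain ⟨M, hM⟩ := (isCompact_Icc).exists_bound_of_continuousOn hcont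
    refine ⟨M, le_trans (norm_nonneg _) (hM 0 (by norm_num)), fun x hx => ?_⟩
    have := norm_image_sub_le_of_norm_deriv_le_segment hdiff
      (fun y hy => hM y (Set.mem_Icc_of_Ico hy)) x hx
    simpa using this
  set I1 : ℝ := ∫ x in Set.Ioo (1/2:ℝ) 1, |f x| with hI1
  have hI1nn : 0 ≤ I1 := integral_nonneg (fun x => abs_nonneg _)
  refine ⟨1/2, by norm_num, (M + I1 + 3*|f 0| + 2)/4, by positivity, ?_⟩
  rintro ρ ⟨hρ0, hρh⟩
  -- integrability facts
  have hwmeas : AEStronglyMeasurable (wfun ρ) (volume.restrict (Set.Ioo (0:ℝ) 1)) :=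
    (continuous_wfun ρ).aestronglyMeasurable.restrict
  have hu_int : IntegrableOn (fun x => f x / wfun ρ x) (Set.Ioo 0 1) := by
    apply Integrable.mono' ((hfint.norm).const_mul (2/ρ))
    · exact (hfint.aestronglyMeasurable.aemeasurable.div hwmeas.aemeasurable).aestronglyMeasurable
    · filter_upwards [ae_restrict_mem measurableSet_Ioo] with x hx
      have h2 := wfun_pos hρ0 hx.1
      have h3 := wfun_half ρ x hρ0 hx.1
      rw [norm_div, Real.norm_eq_abs, Real.norm_eq_abs, abs_of_pos h2, div_le_iff₀ h2]
      calc |f x| = (2/ρ) * |f x| * (ρ/2) := by field_simp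
        _ ≤ (2/ρ) * |f x| * wfun ρ x := by
            apply mul_le_mul_of_nonneg_left h3
            positivity
  have h1w_int : IntegrableOn (fun x => (wfun ρ x)⁻¹) (Set.Ioo 0 1) := by
    apply Integrable.mono' (integrable_const (2/ρ))
    · exact ((continuous_wfun ρ).measurable.inv.aestronglyMeasurable).restrict
    · filter_upwards [ae_restrict_mem measurableSet_Ioo] with x hx
      have h2 := wfun_pos hρ0 hx.1
      have h3 := wfun_half ρ x hρ0 hx.1
      rw [Real.norm_eq_abs, abs_of_pos (by positivity : (0:ℝ) < (wfun ρ x)⁻¹),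
        inv_le_comm₀ h2 (by positivity)]
      calc (2/ρ)⁻¹ = ρ/2 := by field_simp
        _ ≤ wfun ρ x := h3
  have hxf_int : IntegrableOn (fun x => x * f x) (Set.Ioo 0 1) := by
    apply Integrable.mono' hfint.norm
    · exact (continuous_id.aestronglyMeasurable.restrict).mul hfint.aestronglyMeasurable
    · filter_upwards [ae_restrict_mem measurableSet_Ioo] with x hx
      rw [Real.norm_eq_abs, Real.norm_eq_abs, abs_mul]
      have h1 : |x| ≤ 1 := by rw [abs_of_pos hx.1]; linarith [hx.2]
      nlinarith [abs_nonneg (f x), abs_nonneg x]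
  have hsub_int : IntegrableOn (fun x => (f x - f 0) / wfun ρ x) (Set.Ioo 0 1) := by
    have heq : (fun x => (f x - f 0) / wfun ρ x)
        = fun x => f x / wfun ρ x - f 0 * (wfun ρ x)⁻¹ := by
      funext x; ring
    rw [heq]
    exact hu_int.sub (h1w_int.const_mul (f 0))
  -- the key splitting of the main integral
  have key : (∫ x in Set.Ioo (0:ℝ) 1, f x * Real.sqrt (x * (x + ρ)))
      = (∫ x in Set.Ioo (0:ℝ) 1, x * f x)
        + (ρ/2) * (∫ x in Set.Ioo (0:ℝ) 1, f x)
        - ρ^2/4 * (∫ x in Set.Ioo (0:ℝ) 1, f x / wfun ρ x) := by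
    have hcongr : Set.EqOn (fun x => f x * Real.sqrt (x * (x + ρ)))
        (fun x => (x * f x + ρ/2 * f x) - ρ^2/4 * (f x / wfun ρ x)) (Set.Ioo 0 1) := by
      intro x hx
      have hid := sqrt_eq' hρ0 hx.1
      have hwne : wfun ρ x ≠ 0 := ne_of_gt (wfun_pos hρ0 hx.1)
      simp only
      rw [hid]
      field_simp
    have h1' : IntegrableOn (fun x => x * f x + ρ/2 * f x) (Set.Ioo 0 1) := by
      exact hxf_int.add (hfint.const_mul (ρ/2))
    have h2' : IntegrableOn (fun x => ρ^2/4 * (f x / wfun ρ x)) (Set.Ioo 0 1) := by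
      exact hu_int.const_mul (ρ^2/4)
    rw [setIntegral_congr_fun measurableSet_Ioo hcongr,
      integral_sub h1' h2',
      integral_add hxf_int (hfint.const_mul (ρ/2)),
      MeasureTheory.integral_const_mul, MeasureTheory.integral_const_mul]
  rw [key]
  -- reduce to bounding |U + f0/2 log ρ|
  rw [show (∫ x in Set.Ioo (0:ℝ) 1, x * f x)
        + (ρ/2) * (∫ x in Set.Ioo (0:ℝ) 1, f x)
        - ρ^2/4 * (∫ x in Set.Ioo (0:ℝ) 1, f x / wfun ρ x)
        - ((∫ x in Set.Ioo (0:ℝ) 1, x * f x)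
           + (ρ / 2) * (∫ x in Set.Ioo (0:ℝ) 1, f x)
           + (f 0 / 8) * ρ ^ 2 * Real.log ρ)
      = -(ρ^2/4) * ((∫ x in Set.Ioo (0:ℝ) 1, f x / wfun ρ x)
          + f 0 / 2 * Real.log ρ) from by ring]
  rw [abs_mul, abs_neg, abs_of_pos (by positivity : (0:ℝ) < ρ^2/4)]
  have hfinal : |(∫ x in Set.Ioo (0:ℝ) 1, f x / wfun ρ x) + f 0 / 2 * Real.log ρ|
      ≤ M + I1 + 3*|f 0| + 2 := by
    -- split U = T1 + f0 * T2
    have hUsplit : (∫ x in Set.Ioo (0:ℝ) 1, f x / wfun ρ x)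
        = (∫ x in Set.Ioo (0:ℝ) 1, (f x - f 0) / wfun ρ x)
          + f 0 * (∫ x in Set.Ioo (0:ℝ) 1, (wfun ρ x)⁻¹) := by
      rw [← MeasureTheory.integral_const_mul,
        ← integral_add hsub_int (h1w_int.const_mul (f 0))]
      apply setIntegral_congr_fun measurableSet_Ioo
      intro x hx
      simp only
      ring
    -- bound T1 on (0,1/2]
    have hsubIoc : Set.Ioc (0:ℝ) (1/2) ⊆ Set.Ioo 0 1 := by
      intro x hx; exact ⟨hx.1, by linarith [hx.2]⟩
    have hsubIoo : Set.Ioo (1/2:ℝ) 1 ⊆ Set.Ioo 0 1 := by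
      intro x hx; exact ⟨by linarith [hx.1], hx.2⟩
    have hT1a : |∫ x in Set.Ioc (0:ℝ) (1/2), (f x - f 0) / wfun ρ x| ≤ M/2 * (1/2) := by
      have hb := norm_setIntegral_le_of_norm_le_const_ae
        (C := M/2) (s := Set.Ioc (0:ℝ) (1/2)) (μ := volume)
        (f := fun x => (f x - f 0) / wfun ρ x)
        (by rw [Real.volume_Ioc]; exact ENNReal.ofReal_lt_top)
        ?_
      · rw [Real.norm_eq_abs] at hb
        calc |∫ x in Set.Ioc (0:ℝ) (1/2), (f x - f 0) / wfun ρ x|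
            ≤ M/2 * (volume (Set.Ioc (0:ℝ) (1/2))).toReal := hb
          _ = M/2 * (1/2) := by
              rw [Real.volume_Ioc, ENNReal.toReal_ofReal (by norm_num)]
              norm_num
      · filter_upwards [ae_restrict_mem measurableSet_Ioc] with x hx
        have hx0 : 0 < x := hx.1
        have hw := wfun_pos hρ0 hx0
        have hwl := wfun_lb hρ0 hx0
        rw [Real.norm_eq_abs, abs_div, abs_of_pos hw]
        calc |f x - f 0| / wfun ρ x ≤ (M*x) / (2*x) := by
              apply div_le_div₀ (by positivity) (hM x ⟨hx0.le, hx.2⟩) (by linarith)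
              linarith
          _ = M/2 := by rw [mul_comm M x, mul_comm 2 x, mul_div_mul_left _ _ (ne_of_gt hx0)]
    -- bound T1 on (1/2,1)
    have hT1b : |∫ x in Set.Ioo (1/2:ℝ) 1, (f x - f 0) / wfun ρ x| ≤ I1 + |f 0| * (1/2) := by
      have habs : IntegrableOn (fun x => |f x|) (Set.Ioo 0 1) := hfint.abs
      have habs_int : IntegrableOn (fun x => |f x| + |f 0|) (Set.Ioo (1/2:ℝ) 1) := by
        exact (habs.mono_set hsubIoo).add (integrable_const _)
      have hb := norm_integral_le_of_norm_le (μ := volume.restrict (Set.Ioo (1/2:ℝ) 1))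
        (f := fun x => (f x - f 0) / wfun ρ x) habs_int ?_
      · rw [Real.norm_eq_abs] at hb
        calc |∫ x in Set.Ioo (1/2:ℝ) 1, (f x - f 0) / wfun ρ x|
            ≤ ∫ x in Set.Ioo (1/2:ℝ) 1, (|f x| + |f 0|) := hb
          _ = I1 + |f 0| * (1/2) := by
              rw [integral_add (habs.mono_set hsubIoo) (integrable_const _),
                setIntegral_const, measureReal_def, Real.volume_Ioo, ENNReal.toReal_ofReal (by norm_num)]
              norm_num [hI1]
              ring
      · filter_upwards [ae_restrict_mem measurableSet_Ioo] with x hx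
        have hx0 : 0 < x := by linarith [hx.1]
        have hw := wfun_pos hρ0 hx0
        have hwl := wfun_lb hρ0 hx0
        have hw1 : 1 ≤ wfun ρ x := by linarith [hx.1]
        rw [Real.norm_eq_abs, abs_div, abs_of_pos hw]
        calc |f x - f 0| / wfun ρ x ≤ |f x - f 0| := div_le_self (abs_nonneg _) hw1
          _ ≤ |f x| + |f 0| := by
              have := norm_sub_le (f x) (f 0)
              simpa [Real.norm_eq_abs] using this
    -- split T1
    have hT1eq : (∫ x in Set.Ioo (0:ℝ) 1, (f x - f 0) / wfun ρ x)
        = (∫ x in Set.Ioc (0:ℝ) (1/2), (f x - f 0) / wfun ρ x)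
          + (∫ x in Set.Ioo (1/2:ℝ) 1, (f x - f 0) / wfun ρ x) := by
      rw [← Set.Ioc_union_Ioo_eq_Ioo (by norm_num : (0:ℝ) ≤ 1/2) (by norm_num : (1/2:ℝ) < 1)]
      apply setIntegral_union
      · rw [Set.disjoint_left]
        rintro x ⟨_, h1⟩ ⟨h2, _⟩
        linarith
      · exact measurableSet_Ioo
      · exact hsub_int.mono_set hsubIoc
      · exact hsub_int.mono_set hsubIoo
    have hT1 : |∫ x in Set.Ioo (0:ℝ) 1, (f x - f 0) / wfun ρ x|
        ≤ M/2 * (1/2) + (I1 + |f 0| * (1/2)) := by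
      rw [hT1eq]
      exact le_trans (abs_add_le _ _) (add_le_add hT1a hT1b)
    -- bound T2 + log ρ / 2
    have hm_pos : ∀ x ∈ Set.Ioo (0:ℝ) 1, 0 < 2*x+ρ/2 := by
      intro x hx; nlinarith [hx.1]
    have hm_int : IntegrableOn (fun x => (2*x+ρ/2)⁻¹) (Set.Ioo 0 1) := by
      apply IntegrableOn.mono_set _ Set.Ioo_subset_Icc_self
      apply ContinuousOn.integrableOn_Icc
      apply ContinuousOn.inv₀ (by fun_prop)
      intro x hx
      have : 0 < 2*x+ρ/2 := by nlinarith [hx.1]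
      exact ne_of_gt this
    have hm2_int : IntegrableOn (fun x => 1/(2*x+ρ/2)^2) (Set.Ioo 0 1) := by
      apply IntegrableOn.mono_set _ Set.Ioo_subset_Icc_self
      apply ContinuousOn.integrableOn_Icc
      apply ContinuousOn.div continuousOn_const (by fun_prop)
      intro x hx
      have : 0 < 2*x+ρ/2 := by nlinarith [hx.1]
      exact pow_ne_zero _ (ne_of_gt this)
    have hT2diff : |(∫ x in Set.Ioo (0:ℝ) 1, (wfun ρ x)⁻¹)
        - (∫ x in Set.Ioo (0:ℝ) 1, (2*x+ρ/2)⁻¹)| ≤ 1/2 := by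
      rw [← integral_sub h1w_int hm_int]
      have hb := norm_integral_le_of_norm_le (μ := volume.restrict (Set.Ioo (0:ℝ) 1))
        (f := fun x => (wfun ρ x)⁻¹ - (2*x+ρ/2)⁻¹)
        (g := fun x => (ρ/2) * (1/(2*x+ρ/2)^2)) (hm2_int.const_mul (ρ/2)) ?_
      · rw [Real.norm_eq_abs] at hb
        refine le_trans hb ?_
        rw [MeasureTheory.integral_const_mul, int_inv_sq hρ0]
        have h1 : (0:ℝ) < 2+ρ/2 := by linarith
        have h2 : (0:ℝ) ≤ (2+ρ/2)⁻¹ := by positivity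
        have h3 : ρ/2 * (ρ/2)⁻¹ = 1 := mul_inv_cancel₀ (by positivity)
        nlinarith [h2, h3]
      · filter_upwards [ae_restrict_mem measurableSet_Ioo] with x hx
        have hx0 : 0 < x := hx.1
        have hm := hm_pos x hx
        have hw := wfun_pos hρ0 hx0
        have hwl := wfun_lb hρ0 hx0
        have hwu := wfun_ub hρ0 hx0
        rw [Real.norm_eq_abs, abs_sub_comm, abs_of_nonneg
          (by
            have := inv_anti₀ hm hwl
            linarith)]
        have hmne : (2*x+ρ/2) ≠ 0 := ne_of_gt hm
        have hwne : wfun ρ x ≠ 0 := ne_of_gt hw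
        have e1 : (2*x+ρ/2)⁻¹ - (wfun ρ x)⁻¹
            = (wfun ρ x - (2*x+ρ/2)) / ((2*x+ρ/2) * wfun ρ x) := by
          rw [inv_eq_one_div, inv_eq_one_div, div_sub_div _ _ hmne hwne, one_mul, mul_one]
        rw [e1]
        calc (wfun ρ x - (2*x+ρ/2)) / ((2*x+ρ/2) * wfun ρ x)
            ≤ (ρ/2) / ((2*x+ρ/2)^2) := by
              apply div_le_div₀ (by positivity) (by linarith) (by positivity)
              nlinarith
          _ = (ρ/2) * (1/(2*x+ρ/2)^2) := by rw [div_eq_mul_one_div]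
    have hJm : (∫ x in Set.Ioo (0:ℝ) 1, (2*x+ρ/2)⁻¹) + Real.log ρ / 2
        = (Real.log (2+ρ/2) + Real.log 2)/2 := by
      rw [int_inv_lin hρ0, Real.log_div (ne_of_gt hρ0) (by norm_num)]
      ring
    have hlog1 : (0:ℝ) ≤ Real.log (2+ρ/2) := Real.log_nonneg (by linarith)
    have hlog2 : Real.log (2+ρ/2) ≤ 3/2 := by
      have := Real.log_le_sub_one_of_pos (by linarith : (0:ℝ) < 2+ρ/2)
      linarith
    have hlog3 : (0:ℝ) ≤ Real.log 2 := Real.log_nonneg (by norm_num)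
    have hlog4 : Real.log 2 ≤ 1 := by
      have := Real.log_le_sub_one_of_pos (by norm_num : (0:ℝ) < 2)
      linarith
    have hT2 : |(∫ x in Set.Ioo (0:ℝ) 1, (wfun ρ x)⁻¹) + Real.log ρ / 2| ≤ 2 := by
      have : (∫ x in Set.Ioo (0:ℝ) 1, (wfun ρ x)⁻¹) + Real.log ρ / 2
          = ((∫ x in Set.Ioo (0:ℝ) 1, (wfun ρ x)⁻¹)
              - (∫ x in Set.Ioo (0:ℝ) 1, (2*x+ρ/2)⁻¹))
            + ((∫ x in Set.Ioo (0:ℝ) 1, (2*x+ρ/2)⁻¹) + Real.log ρ / 2) := by ring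
      rw [this]
      refine le_trans (abs_add_le _ _) ?_
      rw [hJm]
      have : |(Real.log (2+ρ/2) + Real.log 2)/2| ≤ 3/2 := by
        rw [abs_le]
        constructor <;> linarith
      linarith
    -- assemble
    rw [hUsplit, show (∫ x in Set.Ioo (0:ℝ) 1, (f x - f 0) / wfun ρ x)
        + f 0 * (∫ x in Set.Ioo (0:ℝ) 1, (wfun ρ x)⁻¹) + f 0 / 2 * Real.log ρ
      = (∫ x in Set.Ioo (0:ℝ) 1, (f x - f 0) / wfun ρ x)
        + f 0 * ((∫ x in Set.Ioo (0:ℝ) 1, (wfun ρ x)⁻¹) + Real.log ρ / 2) from by ring]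
    refine le_trans (abs_add_le _ _) ?_
    rw [abs_mul]
    have := mul_le_mul_of_nonneg_left hT2 (abs_nonneg (f 0))
    linarith [hT1, this, abs_nonneg (f 0)]
  calc ρ^2/4 * |(∫ x in Set.Ioo (0:ℝ) 1, f x / wfun ρ x) + f 0 / 2 * Real.log ρ|
      ≤ ρ^2/4 * (M + I1 + 3*|f 0| + 2) := by
        apply mul_le_mul_of_nonneg_left hfinal (by positivity)
    _ = (M + I1 + 3*|f 0| + 2)/4 * ρ^2 := by ring
end

section
/- Let h : [0,1) → ℝ be infinitely differentiable and integrable on (0,1). Define H(ρ) := ∫₀¹ h(x)/√(x(x+ρ)³) dx for ρ > 0. Then there exist ρ₀ > 0 and C > 0 such that for all ρ ∈ (0,ρ₀): |H(ρ) − 2h(0)/ρ| ≤ C(1 + |ln ρ|). -/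
open MeasureTheory

open Set

lemma sqrt_prod_eq {ρ x : ℝ} (hx : 0 ≤ x) (hρ : 0 < ρ) :
    Real.sqrt (x * (x + ρ) ^ 3)
      = Real.sqrt x * ((x + ρ) * Real.sqrt (x + ρ)) := by
  have hxρ : (0:ℝ) ≤ x + ρ := by linarith
  rw [Real.sqrt_mul hx]
  congr 1
  rw [pow_succ, Real.sqrt_mul (by positivity), Real.sqrt_sq hxρ]

lemma hasDerivAt_F {ρ : ℝ} (hρ : 0 < ρ) {x : ℝ} (hx : 0 < x) :
    HasDerivAt (fun y => 2 * Real.sqrt y / (ρ * Real.sqrt (y + ρ)))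
      (1 / Real.sqrt (x * (x + ρ) ^ 3)) x := by
  have hxρ : (0:ℝ) < x + ρ := by linarith
  have h1 : HasDerivAt (fun y : ℝ => 2 * Real.sqrt y) (2 * (1 / (2 * Real.sqrt x))) x :=
    (Real.hasDerivAt_sqrt hx.ne').const_mul 2
  have h2 : HasDerivAt (fun y : ℝ => y + ρ) 1 x := (hasDerivAt_id x).add_const ρ
  have h3 : HasDerivAt (fun y : ℝ => Real.sqrt (y + ρ)) (1 / (2 * Real.sqrt (x + ρ))) x := by
    simpa [Function.comp_def] using (Real.hasDerivAt_sqrt hxρ.ne').comp x h2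
  have h4 : HasDerivAt (fun y : ℝ => ρ * Real.sqrt (y + ρ))
      (ρ * (1 / (2 * Real.sqrt (x + ρ)))) x := h3.const_mul ρ
  have hsx : 0 < Real.sqrt x := Real.sqrt_pos.2 hx
  have hsxρ : 0 < Real.sqrt (x + ρ) := Real.sqrt_pos.2 hxρ
  have hden : ρ * Real.sqrt (x + ρ) ≠ 0 := by positivity
  have h5 := h1.div h4 hden
  refine h5.congr_deriv ?_
  symm
  rw [sqrt_prod_eq hx.le hρ]
  have e1 : Real.sqrt x * Real.sqrt x = x := Real.mul_self_sqrt hx.le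
  have e2 : Real.sqrt (x + ρ) * Real.sqrt (x + ρ) = x + ρ := Real.mul_self_sqrt hxρ.le
  field_simp
  linear_combination (-x)*e2 + (x+ρ)*e1

lemma integrable_w {ρ : ℝ} (hρ : 0 < ρ) :
    IntegrableOn (fun x => 1 / Real.sqrt (x * (x + ρ) ^ 3)) (Ioo (0:ℝ) 1) := by
  have hmeas : AEStronglyMeasurable (fun x => 1 / Real.sqrt (x * (x + ρ) ^ 3))
      (volume.restrict (Ioo (0:ℝ) 1)) := by
    apply ContinuousOn.aestronglyMeasurable _ measurableSet_Ioo
    apply ContinuousOn.div continuousOn_const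
    · exact (Real.continuous_sqrt.comp (by fun_prop)).continuousOn
    · intro x hx
      have h1 : 0 < x := hx.1
      have h2 : 0 < x + ρ := by linarith
      positivity
  have hint : IntegrableOn (fun x : ℝ => (ρ * Real.sqrt ρ)⁻¹ * x ^ (-(1/2) : ℝ))
      (Ioo (0:ℝ) 1) := by
    apply Integrable.const_mul
    have h := intervalIntegral.intervalIntegrable_rpow' (a := 0) (b := 1)
      (r := -(1/2)) (by norm_num)
    rw [intervalIntegrable_iff_integrableOn_Ioc_of_le (by norm_num)] at h
    exact h.mono_set Ioo_subset_Ioc_self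
  apply Integrable.mono' hint hmeas
  rw [ae_restrict_iff' measurableSet_Ioo]
  filter_upwards with x hx
  have h1 : 0 < x := hx.1
  have h2 : 0 < x + ρ := by linarith
  have hsx : 0 < Real.sqrt x := Real.sqrt_pos.2 h1
  have hsρ : 0 < Real.sqrt ρ := Real.sqrt_pos.2 hρ
  have hS : 0 < Real.sqrt (x * (x + ρ) ^ 3) := Real.sqrt_pos.2 (by positivity)
  rw [Real.norm_eq_abs, abs_of_nonneg (by positivity)]
  have hrp : x ^ (-(1/2) : ℝ) = (Real.sqrt x)⁻¹ := by
    rw [Real.rpow_neg h1.le, Real.sqrt_eq_rpow]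
  rw [hrp, sqrt_prod_eq h1.le hρ]
  have key : Real.sqrt x * (ρ * Real.sqrt ρ)
      ≤ Real.sqrt x * ((x + ρ) * Real.sqrt (x + ρ)) := by
    have : Real.sqrt ρ ≤ Real.sqrt (x + ρ) := Real.sqrt_le_sqrt (by linarith)
    have : ρ * Real.sqrt ρ ≤ (x + ρ) * Real.sqrt (x + ρ) := by nlinarith
    nlinarith
  calc 1 / (Real.sqrt x * ((x + ρ) * Real.sqrt (x + ρ)))
      ≤ 1 / (Real.sqrt x * (ρ * Real.sqrt ρ)) :=
        one_div_le_one_div_of_le (by positivity) key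
    _ = (ρ * Real.sqrt ρ)⁻¹ * (Real.sqrt x)⁻¹ := by
        rw [one_div, mul_inv]; ring

lemma integral_w {ρ : ℝ} (hρ : 0 < ρ) :
    ∫ x in Ioo (0:ℝ) 1, 1 / Real.sqrt (x * (x + ρ) ^ 3)
      = 2 / (ρ * Real.sqrt (1 + ρ)) := by
  have h01 : (0:ℝ) ≤ 1 := by norm_num
  have hcont : ContinuousOn (fun y => 2 * Real.sqrt y / (ρ * Real.sqrt (y + ρ)))
      (Icc (0:ℝ) 1) := by
    apply ContinuousOn.div
    · exact (continuous_const.mul Real.continuous_sqrt).continuousOn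
    · exact (continuous_const.mul (Real.continuous_sqrt.comp
        (continuous_id.add continuous_const))).continuousOn
    · intro x hx
      have h2 : 0 < x + ρ := by have := hx.1; linarith
      positivity
  have hint : IntervalIntegrable (fun x => 1 / Real.sqrt (x * (x + ρ) ^ 3)) volume 0 1 := by
    rw [intervalIntegrable_iff_integrableOn_Ioc_of_le h01,
      integrableOn_Ioc_iff_integrableOn_Ioo]
    exact integrable_w hρ
  have key := intervalIntegral.integral_eq_sub_of_hasDeriv_right_of_le h01 hcont
      (fun x hx => (hasDerivAt_F hρ hx.1).hasDerivWithinAt) hint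
  rw [intervalIntegral.integral_of_le h01, integral_Ioc_eq_integral_Ioo] at key
  rw [key, Real.sqrt_zero, Real.sqrt_one]
  ring

lemma integral_inv_add {ρ : ℝ} (hρ : 0 < ρ) :
    ∫ x in Ioo (0:ℝ) 1, 1 / (x + ρ) = Real.log (1 + ρ) - Real.log ρ := by
  have hderiv : ∀ x ∈ Set.uIcc (0:ℝ) 1,
      HasDerivAt (fun y => Real.log (y + ρ)) (1 / (x + ρ)) x := by
    intro x hx
    rw [Set.uIcc_of_le (by norm_num)] at hx
    have hxρ : 0 < x + ρ := by have := hx.1; linarith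
    simpa [one_div, Function.comp_def] using (Real.hasDerivAt_log hxρ.ne').comp x ((hasDerivAt_id x).add_const ρ)
  have hint : IntervalIntegrable (fun x => 1 / (x + ρ)) volume 0 1 := by
    apply ContinuousOn.intervalIntegrable
    apply ContinuousOn.div continuousOn_const (by fun_prop)
    intro x hx
    rw [Set.uIcc_of_le (by norm_num)] at hx
    have : 0 < x + ρ := by have := hx.1; linarith
    exact this.ne'
  have key := intervalIntegral.integral_eq_sub_of_hasDerivAt hderiv hint
  rw [intervalIntegral.integral_of_le (by norm_num), integral_Ioc_eq_integral_Ioo] at key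
  rw [key]
  norm_num

/-- Leading-order behavior of `H(ρ) = ∫₀¹ h(x)/√(x(x+ρ)³) dx` as `ρ → 0⁺`. -/
theorem expansion_H
    (h : ℝ → ℝ)
    (hh : ContDiffOn ℝ (⊤ : ℕ∞) h (Set.Ico 0 1))
    (hhint : IntegrableOn h (Set.Ioo 0 1)) :
    ∃ ρ₀ > (0:ℝ), ∃ C > (0:ℝ), ∀ ρ ∈ Set.Ioo (0:ℝ) ρ₀,
      |(∫ x in Set.Ioo (0:ℝ) 1, h x / Real.sqrt (x * (x + ρ) ^ 3)) - 2 * h 0 / ρ|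
        ≤ C * (1 + |Real.log ρ|) := by
  have hsub : Icc (0:ℝ) (1/2) ⊆ Ico (0:ℝ) 1 := fun x hx => ⟨hx.1, by
    have := hx.2; linarith⟩
  have hh1 : ContDiffOn ℝ 1 h (Icc (0:ℝ) (1/2)) := (hh.of_le (by exact_mod_cast le_top)).mono hsub
  have hdiff : DifferentiableOn ℝ h (Icc (0:ℝ) (1/2)) :=
    hh1.differentiableOn one_ne_zero
  have hderivcont : ContinuousOn (derivWithin h (Icc (0:ℝ) (1/2))) (Icc (0:ℝ) (1/2)) :=
    hh1.continuousOn_derivWithin (uniqueDiffOn_Icc (by norm_num)) le_rfl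
  obtain ⟨K, hK⟩ := isCompact_Icc.exists_bound_of_continuousOn hderivcont
  have hK0 : 0 ≤ K := le_trans (norm_nonneg _) (hK 0 ⟨le_rfl, by norm_num⟩)
  have hlip : ∀ x ∈ Icc (0:ℝ) (1/2), |h x - h 0| ≤ K * x := by
    intro x hx
    have := Convex.norm_image_sub_le_of_norm_derivWithin_le hdiff hK (convex_Icc _ _)
      (⟨le_rfl, by norm_num⟩ : (0:ℝ) ∈ Icc (0:ℝ) (1/2)) hx
    simpa [Real.norm_eq_abs, abs_of_nonneg hx.1] using this
  have hcont01 : ContinuousOn h (Ioo (0:ℝ) 1) := hh.continuousOn.mono Ioo_subset_Ico_self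
  set M : ℝ := ∫ x in Ioo (0:ℝ) 1, |h x| with hMdef
  have hM0 : 0 ≤ M := integral_nonneg fun x => abs_nonneg _
  refine ⟨1, one_pos, K + 4*M + 5*|h 0| + 1, by positivity, ?_⟩
  rintro ρ ⟨hρ, hρ1⟩
  -- integrabilities
  have Iw := integrable_w hρ
  have Iinv : IntegrableOn (fun x => 1/(x+ρ)) (Ioo (0:ℝ) 1) := by
    apply (ContinuousOn.integrableOn_Icc ?_).mono_set Ioo_subset_Icc_self
    apply ContinuousOn.div continuousOn_const (by fun_prop)
    intro x hx
    have : 0 < x + ρ := by have := hx.1; linarith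
    exact this.ne'
  have Ihabs : IntegrableOn (fun x => |h x|) (Ioo (0:ℝ) 1) := hhint.abs
  have Iconst : IntegrableOn (fun _ : ℝ => |h 0|) (Ioo (0:ℝ) 1) :=
    integrableOn_const (by simp [Real.volume_Ioo])
  have Ig : IntegrableOn (fun x => K * (1/(x+ρ)) + 4*(|h x| + |h 0|)) (Ioo (0:ℝ) 1) :=
    (Iinv.const_mul K).add ((Ihabs.add Iconst).const_mul 4)
  -- pointwise bound
  have hbound : ∀ x ∈ Ioo (0:ℝ) 1,
      |(h x - h 0) / Real.sqrt (x*(x+ρ)^3)| ≤ K * (1/(x+ρ)) + 4*(|h x| + |h 0|) := by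
    intro x hx
    have h1 : 0 < x := hx.1
    have h2 : 0 < x + ρ := by linarith
    have hS : 0 < Real.sqrt (x*(x+ρ)^3) := Real.sqrt_pos.2 (by positivity)
    rw [abs_div, abs_of_nonneg hS.le]
    rcases le_or_gt x (1/2) with hhalf | hhalf
    · have hb1 : |h x - h 0| ≤ K * x := hlip x ⟨h1.le, hhalf⟩
      have hxw : x / Real.sqrt (x*(x+ρ)^3) ≤ 1/(x+ρ) := by
        rw [sqrt_prod_eq h1.le hρ, div_le_div_iff₀ (by positivity) h2]
        have e1 : Real.sqrt x * Real.sqrt x = x := Real.mul_self_sqrt h1.le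
        have e2 : Real.sqrt (x+ρ) * Real.sqrt (x+ρ) = x + ρ := Real.mul_self_sqrt h2.le
        have hle : Real.sqrt x ≤ Real.sqrt (x+ρ) := Real.sqrt_le_sqrt (by linarith)
        have hsx : 0 ≤ Real.sqrt x := Real.sqrt_nonneg x
        nlinarith [Real.sqrt_nonneg (x+ρ), mul_le_mul_of_nonneg_left hle hsx]
      have step1 : |h x - h 0| / Real.sqrt (x*(x+ρ)^3) ≤ K * (x / Real.sqrt (x*(x+ρ)^3)) := by
        rw [← mul_div_assoc]
        exact div_le_div_of_nonneg_right hb1 hS.le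
      have step2 : K * (x / Real.sqrt (x*(x+ρ)^3)) ≤ K * (1/(x+ρ)) :=
        mul_le_mul_of_nonneg_left hxw hK0
      have : 0 ≤ 4*(|h x| + |h 0|) := by positivity
      linarith
    · have hS4 : (1/4 : ℝ) ≤ Real.sqrt (x*(x+ρ)^3) := by
        have hp : (1/2:ℝ)^3 ≤ (x+ρ)^3 := pow_le_pow_left₀ (by norm_num) (by linarith) 3
        have hx16 : (1/16 : ℝ) ≤ x*(x+ρ)^3 := by nlinarith
        calc (1/4:ℝ) = Real.sqrt (1/16) := by
              rw [show (1/16:ℝ) = (1/4)^2 by norm_num, Real.sqrt_sq (by norm_num)]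
          _ ≤ _ := Real.sqrt_le_sqrt hx16
      have habs : |h x - h 0| ≤ |h x| + |h 0| := abs_sub _ _
      have step1 : |h x - h 0| / Real.sqrt (x*(x+ρ)^3) ≤ (|h x| + |h 0|) * 4 := by
        rw [div_le_iff₀ hS]
        nlinarith [abs_nonneg (h x), abs_nonneg (h 0), abs_nonneg (h x - h 0)]
      have : 0 ≤ K * (1/(x+ρ)) := by positivity
      linarith
  have meas_diff : AEStronglyMeasurable (fun x => (h x - h 0)/Real.sqrt (x*(x+ρ)^3))
      (volume.restrict (Ioo (0:ℝ) 1)) := by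
    apply ContinuousOn.aestronglyMeasurable _ measurableSet_Ioo
    apply ContinuousOn.div (hcont01.sub continuousOn_const)
    · exact (Real.continuous_sqrt.comp (by fun_prop)).continuousOn
    · intro x hx
      have h1 : 0 < x := hx.1
      have h2 : 0 < x + ρ := by linarith
      positivity
  have Idiff : IntegrableOn (fun x => (h x - h 0)/Real.sqrt (x*(x+ρ)^3)) (Ioo (0:ℝ) 1) := by
    apply Integrable.mono' Ig meas_diff
    rw [ae_restrict_iff' measurableSet_Ioo]
    filter_upwards with x hx
    rw [Real.norm_eq_abs]
    exact hbound x hx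
  -- split the integral
  have hint_fh : (∫ x in Ioo (0:ℝ) 1, h x / Real.sqrt (x * (x + ρ) ^ 3))
      = (∫ x in Ioo (0:ℝ) 1, (h x - h 0)/Real.sqrt (x*(x+ρ)^3))
        + h 0 * (2/(ρ * Real.sqrt (1+ρ))) := by
    calc (∫ x in Ioo (0:ℝ) 1, h x / Real.sqrt (x * (x + ρ) ^ 3))
        = ∫ x in Ioo (0:ℝ) 1,
            ((h x - h 0)/Real.sqrt (x*(x+ρ)^3) + h 0 * (1/Real.sqrt (x*(x+ρ)^3))) := by
          apply setIntegral_congr_fun measurableSet_Ioo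
          intro x _
          dsimp only
          rw [mul_one_div, ← add_div, sub_add_cancel]
      _ = (∫ x in Ioo (0:ℝ) 1, (h x - h 0)/Real.sqrt (x*(x+ρ)^3))
            + ∫ x in Ioo (0:ℝ) 1, h 0 * (1/Real.sqrt (x*(x+ρ)^3)) :=
          integral_add Idiff (Iw.const_mul (h 0))
      _ = _ := by rw [integral_const_mul, integral_w hρ]
  -- bound on the difference integral
  have hI1 : |∫ x in Ioo (0:ℝ) 1, (h x - h 0)/Real.sqrt (x*(x+ρ)^3)|
      ≤ ∫ x in Ioo (0:ℝ) 1, (K * (1/(x+ρ)) + 4*(|h x| + |h 0|)) := by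
    rw [← Real.norm_eq_abs]
    apply norm_integral_le_of_norm_le Ig
    rw [ae_restrict_iff' measurableSet_Ioo]
    filter_upwards with x hx
    rw [Real.norm_eq_abs]
    exact hbound x hx
  have hIg : (∫ x in Ioo (0:ℝ) 1, (K * (1/(x+ρ)) + 4*(|h x| + |h 0|)))
      = K*(Real.log (1+ρ) - Real.log ρ) + 4*(M + |h 0|) := by
    have e1 : ∫ x in Ioo (0:ℝ) 1, K * (1/(x+ρ)) = K * (Real.log (1+ρ) - Real.log ρ) := by
      rw [integral_const_mul, integral_inv_add hρ]
    have e2 : ∫ x in Ioo (0:ℝ) 1, (4:ℝ) * (|h x| + |h 0|) = 4*(M + |h 0|) := by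
      rw [integral_const_mul, integral_add Ihabs
        (show Integrable (fun _ : ℝ => |h 0|) (volume.restrict (Ioo (0:ℝ) 1)) from Iconst),
        setIntegral_const]
      simp [Real.volume_Ioo, hMdef]
    rw [integral_add (Iinv.const_mul K)
      (show Integrable (fun x : ℝ => (4:ℝ) * (|h x| + |h 0|)) (volume.restrict (Ioo (0:ℝ) 1)) from
        (Ihabs.add Iconst).const_mul 4), e1, e2]
  -- bound on the correction term
  have hterm2 : |h 0 * (2/(ρ*Real.sqrt (1+ρ)) - 2/ρ)| ≤ |h 0| := by
    rw [abs_mul]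
    have hsq : Real.sqrt (1+ρ) * Real.sqrt (1+ρ) = 1+ρ := Real.mul_self_sqrt (by linarith)
    have hs1 : 1 ≤ Real.sqrt (1+ρ) := by
      nlinarith [Real.sqrt_nonneg (1+ρ)]
    have hspos : 0 < Real.sqrt (1+ρ) := by linarith
    have hle : 2/(ρ*Real.sqrt (1+ρ)) ≤ 2/ρ := by
      rw [div_le_div_iff₀ (by positivity) hρ]
      nlinarith [mul_le_mul_of_nonneg_left hs1 hρ.le]
    have hge : 2/ρ - 2/(ρ*Real.sqrt (1+ρ)) ≤ 1 := by
      have key : 2/ρ - 2/(ρ*Real.sqrt (1+ρ))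
          = (2*Real.sqrt (1+ρ) - 2)/(ρ*Real.sqrt (1+ρ)) := by
        field_simp
      rw [key, div_le_one (by positivity)]
      nlinarith [sq_nonneg (Real.sqrt (1+ρ) - 1)]
    have : |2/(ρ*Real.sqrt (1+ρ)) - 2/ρ| ≤ 1 := by
      rw [abs_sub_comm, abs_of_nonneg (by linarith)]
      linarith
    calc |h 0| * |2/(ρ*Real.sqrt (1+ρ)) - 2/ρ| ≤ |h 0| * 1 :=
          mul_le_mul_of_nonneg_left this (abs_nonneg _)
      _ = |h 0| := mul_one _
  -- log bounds
  have hlogneg : Real.log ρ < 0 := Real.log_neg hρ hρ1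
  have habslog : |Real.log ρ| = -Real.log ρ := abs_of_neg hlogneg
  have hlog2 : Real.log (1+ρ) ≤ 1 := by
    calc Real.log (1+ρ) ≤ Real.log 2 := Real.log_le_log (by linarith) (by linarith)
      _ ≤ 1 := by nlinarith [Real.log_two_lt_d9]
  -- assemble
  calc |(∫ x in Ioo (0:ℝ) 1, h x / Real.sqrt (x * (x + ρ) ^ 3)) - 2 * h 0 / ρ|
      = |(∫ x in Ioo (0:ℝ) 1, (h x - h 0)/Real.sqrt (x*(x+ρ)^3))
          + h 0 * (2/(ρ*Real.sqrt (1+ρ)) - 2/ρ)| := by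
        rw [hint_fh]; congr 1; ring
    _ ≤ |∫ x in Ioo (0:ℝ) 1, (h x - h 0)/Real.sqrt (x*(x+ρ)^3)|
          + |h 0 * (2/(ρ*Real.sqrt (1+ρ)) - 2/ρ)| := abs_add_le _ _
    _ ≤ (K*(Real.log (1+ρ) - Real.log ρ) + 4*(M + |h 0|)) + |h 0| := by
        rw [← hIg]
        exact add_le_add hI1 hterm2
    _ ≤ (K + 4*M + 5*|h 0| + 1) * (1 + |Real.log ρ|) := by
        have habs0 : 0 ≤ |h 0| := abs_nonneg _
        have hal : 0 ≤ |Real.log ρ| := abs_nonneg _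
        nlinarith [mul_nonneg (by positivity : (0:ℝ) ≤ 4*M + 5*|h 0| + 1) hal,
          mul_nonneg hK0 hal]
end

section
/- Let d ≥ 1 and let 𝒲 : ℝ × ℝ^d → ℝ be infinitely differentiable, writing 𝒲(v;p) and ∂_v for the partial derivative in the first variable. Suppose p* ∈ ℝ^d and real numbers v_{s*} < v_{0*} < v^{s*} satisfy: 𝒲(v_{0*};p*) < 𝒲(v_{s*};p*) = 𝒲(v^{s*};p*); ∂_v𝒲(v_{0*};p*) = ∂_v𝒲(v_{s*};p*) = 0; ∂_v²𝒲(v_{s*};p*) < 0; ∂_v²𝒲(v_{0*};p*) > 0; ∂_v𝒲(v;p*) < 0 for all v ∈ (v_{s*}, v_{0*}); and ∂_v𝒲(v;p*) > 0 for all v ∈ (v_{0*}, v^{s*}]. Then there exist an open neighborhood Λ of p* and infinitely differentiable functions v_s, v_0, v^s : Λ → ℝ with v_s(p*) = v_{s*}, v_0(p*) = v_{0*}, v^s(p*) = v^{s*}, such that for every p ∈ Λ: v_s(p) < v_0(p) < v^s(p); 𝒲(v_0(p);p) < 𝒲(v_s(p);p) = 𝒲(v^s(p);p); ∂_v𝒲(v_0(p);p)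 = ∂_v𝒲(v_s(p);p) = 0; ∂_v²𝒲(v_s(p);p) < 0; ∂_v²𝒲(v_0(p);p) > 0; ∂_v𝒲(v;p) < 0 for all v ∈ (v_s(p), v_0(p)); and ∂_v𝒲(v;p) > 0 for all v ∈ (v_0(p), v^s(p)]. -/
open Set Metric Filter Topology

lemma contDiff_pderiv {E : Type*} [NormedAddCommGroup E] [NormedSpace ℝ E]
    (W : ℝ × E → ℝ) (hW : ContDiff ℝ (⊤ : ℕ∞) W) :
    ContDiff ℝ (⊤ : ℕ∞) (fun q : ℝ × E => deriv (fun v => W (v, q.2)) q.1) := by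
  have hu : ContDiff ℝ (⊤ : ℕ∞) (Function.uncurry fun (q : ℝ × E) (v : ℝ) => W (v, q.2)) := by
    exact hW.comp (contDiff_snd.prodMk (contDiff_snd.comp contDiff_fst))
  have h := ContDiff.fderiv_apply (f := fun (q : ℝ × E) (v : ℝ) => W (v, q.2))
    (g := fun q : ℝ × E => q.1) (k := fun _ => 1) hu contDiff_fst contDiff_const (show ((⊤:ℕ∞) : WithTop ℕ∞) + 1 ≤ ((⊤:ℕ∞):WithTop ℕ∞) from le_rfl)
  convert h using 2
  rw [fderiv_apply_one_eq_deriv]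

lemma pointwise_ift {E : Type*} [NormedAddCommGroup E] [NormedSpace ℝ E] [FiniteDimensional ℝ E]
    (G : ℝ × E → ℝ) (v₁ : ℝ) (p₁ : E) (hG : ContDiffAt ℝ (⊤:ℕ∞) G (v₁, p₁))
    (ha : deriv (fun v => G (v, p₁)) v₁ ≠ 0) :
    ∃ ψ : E → ℝ, ψ p₁ = v₁ ∧ ContDiffAt ℝ (⊤:ℕ∞) ψ p₁ ∧
      ∀ᶠ p in 𝓝 p₁, G (ψ p, p) = G (v₁, p₁) := by
  have hone : (1:WithTop ℕ∞) ≤ ((⊤:ℕ∞) : WithTop ℕ∞) := by exact_mod_cast le_top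
  have hdiff : DifferentiableAt ℝ G (v₁, p₁) := hG.differentiableAt (ne_of_gt (lt_of_lt_of_le zero_lt_one hone))
  set L := fderiv ℝ G (v₁, p₁) with hL
  set a := L (1, 0) with haa
  have hda : HasDerivAt (fun v => G (v, p₁)) a v₁ := by
    have h1 : HasDerivAt (fun v : ℝ => (v, p₁)) ((1:ℝ), (0:E)) v₁ :=
      (hasDerivAt_id v₁).prodMk (hasDerivAt_const v₁ p₁)
    exact hdiff.hasFDerivAt.comp_hasDerivAt v₁ h1
  have ha' : a ≠ 0 := by rwa [hda.deriv] at ha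
  -- inverse linear map
  have hz2 : ∀ y : E, L ((0:ℝ), y) = L (0, y) := fun _ => rfl
  let glin : (ℝ × E) →ₗ[ℝ] (ℝ × E) :=
    { toFun := fun z => ((z.1 - L (0, z.2)) * a⁻¹, z.2)
      map_add' := by
        intro z w
        have h1 : L ((0:ℝ), z.2 + w.2) = L (0, z.2) + L (0, w.2) := by
          rw [show ((0:ℝ), z.2 + w.2) = ((0:ℝ), z.2) + ((0:ℝ), w.2) by simp, map_add]
        simp [Prod.ext_iff, h1]; ring
      map_smul' := by
        intro c z
        have h1 : L ((0:ℝ), c • z.2) = c • L (0, z.2) := by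
          rw [show ((0:ℝ), c • z.2) = c • ((0:ℝ), z.2) by simp, map_smul]
        simp [Prod.ext_iff, h1, smul_eq_mul]; ring }
  let g : (ℝ × E) →L[ℝ] (ℝ × E) := glin.toContinuousLinearMap
  have hsplit : ∀ z : ℝ × E, L z = z.1 * a + L (0, z.2) := by
    intro z
    have : z = z.1 • ((1:ℝ), (0:E)) + ((0:ℝ), z.2) := by
      simp [Prod.ext_iff, smul_eq_mul]
    conv_lhs => rw [this]
    rw [map_add, map_smul, smul_eq_mul]
  let e : (ℝ × E) ≃L[ℝ] (ℝ × E) :=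
    ContinuousLinearEquiv.equivOfInverse (L.prod (ContinuousLinearMap.snd ℝ ℝ E)) g
      (by
        intro z
        show ((L z - L (0, z.2)) * a⁻¹, z.2) = z
        rw [hsplit z]
        simp [Prod.ext_iff]
        field_simp)
      (by
        intro z
        show (L ((z.1 - L (0, z.2)) * a⁻¹, z.2), z.2) = z
        rw [hsplit ((z.1 - L (0, z.2)) * a⁻¹, z.2)]
        simp [Prod.ext_iff]
        field_simp
        ring)
  set Φ : ℝ × E → ℝ × E := fun q => (G q, q.2) with hΦdef
  have ΦCD : ContDiffAt ℝ (⊤:ℕ∞) Φ (v₁, p₁) := hG.prodMk contDiffAt_snd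
  have hstrict : HasStrictFDerivAt Φ (e : (ℝ × E) →L[ℝ] (ℝ × E)) (v₁, p₁) := by
    have hGs : HasStrictFDerivAt G L (v₁, p₁) := hG.hasStrictFDerivAt (ne_of_gt (lt_of_lt_of_le zero_lt_one hone))
    exact hGs.prodMk hasStrictFDerivAt_snd
  have hΦ' : HasFDerivAt Φ (e : (ℝ × E) →L[ℝ] (ℝ × E)) (v₁, p₁) := hstrict.hasFDerivAt
  set Ψ := ΦCD.localInverse hΦ' (ne_of_gt (lt_of_lt_of_le zero_lt_one hone)) with hΨdef
  have hΨsm : ContDiffAt ℝ (⊤:ℕ∞) Ψ (Φ (v₁, p₁)) := ΦCD.to_localInverse hΦ' (ne_of_gt (lt_of_lt_of_le zero_lt_one hone))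
  have hΨeq : Ψ = hstrict.localInverse Φ e (v₁, p₁) := rfl
  have hΨat : Ψ (Φ (v₁, p₁)) = (v₁, p₁) := ΦCD.localInverse_apply_image hΦ' (ne_of_gt (lt_of_lt_of_le zero_lt_one hone))
  have hrinv : ∀ᶠ y in 𝓝 (Φ (v₁, p₁)), Φ (Ψ y) = y := by
    rw [hΨeq]; exact hstrict.eventually_right_inverse
  refine ⟨fun p => (Ψ (G (v₁, p₁), p)).1, ?_, ?_, ?_⟩
  · show (Ψ (G (v₁, p₁), p₁)).1 = v₁
    have : (G (v₁, p₁), p₁) = Φ (v₁, p₁) := rfl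
    rw [this, hΨat]
  · have hc : ContDiffAt ℝ (⊤:ℕ∞) (fun p : E => ((G (v₁, p₁), p) : ℝ × E)) p₁ :=
      contDiffAt_const.prodMk contDiffAt_id
    have : ContDiffAt ℝ (⊤:ℕ∞) (fun p : E => Ψ (G (v₁, p₁), p)) p₁ := hΨsm.comp p₁ hc
    exact contDiffAt_fst.comp p₁ this
  · have ht : Tendsto (fun p : E => ((G (v₁, p₁), p) : ℝ × E)) (𝓝 p₁) (𝓝 (Φ (v₁, p₁))) := by
      have : Continuous (fun p : E => ((G (v₁, p₁), p) : ℝ × E)) :=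
        continuous_const.prodMk continuous_id
      exact this.continuousAt.tendsto
    filter_upwards [ht.eventually hrinv] with p hp
    have h2 : (Ψ (G (v₁, p₁), p)).2 = p := congrArg Prod.snd hp
    have h1 : G (Ψ (G (v₁, p₁), p)) = G (v₁, p₁) := congrArg Prod.fst hp
    have hpair : ((Ψ (G (v₁, p₁), p)).1, p) = Ψ (G (v₁, p₁), p) := Prod.ext rfl h2.symm
    rw [hpair]
    exact h1

lemma implicit_fn_pos {E : Type*} [NormedAddCommGroup E] [NormedSpace ℝ E] [FiniteDimensional ℝ E]
    (F : ℝ × E → ℝ) (hF : ContDiff ℝ (⊤:ℕ∞) F)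
    (c : E → ℝ) (U₀ : Set E) (hU₀ : IsOpen U₀) (hc : ContDiffOn ℝ (⊤:ℕ∞) c U₀)
    (v₀ : ℝ) (p₀ : E) (hp₀ : p₀ ∈ U₀)
    (hz : F (v₀, p₀) = c p₀)
    (ha : 0 < deriv (fun v => F (v, p₀)) v₀) :
    ∃ U : Set E, IsOpen U ∧ p₀ ∈ U ∧ U ⊆ U₀ ∧ ∃ φ : E → ℝ,
      φ p₀ = v₀ ∧ ContDiffOn ℝ (⊤:ℕ∞) φ U ∧ ∀ p ∈ U, F (φ p, p) = c p := by
  classical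
  have hone : (1:WithTop ℕ∞) ≤ ((⊤:ℕ∞) : WithTop ℕ∞) := by exact_mod_cast le_top
  set Fd : ℝ × E → ℝ := fun q => deriv (fun v => F (v, q.2)) q.1 with hFddef
  have hFdsmooth := contDiff_pderiv F hF
  have hFdcont : Continuous Fd := hFdsmooth.continuous
  have hopen : IsOpen {q : ℝ × E | 0 < Fd q} := isOpen_lt continuous_const hFdcont
  obtain ⟨u, w, hu, hw, hvu, hpw, huw⟩ := isOpen_prod_iff.1 hopen v₀ p₀ ha
  obtain ⟨ε, hε, hball⟩ := Metric.isOpen_iff.1 hu v₀ hvu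
  set W := w ∩ U₀ with hWdef
  have hWopen : IsOpen W := hw.inter hU₀
  have hp₀W : p₀ ∈ W := ⟨hpw, hp₀⟩
  have hrect : ∀ v ∈ ball v₀ ε, ∀ p ∈ W, 0 < Fd (v, p) := fun v hv p hp =>
    huw (Set.mk_mem_prod (hball hv) hp.1)
  have hFcont : Continuous F := hF.continuous
  have hFv : ∀ p : E, Continuous (fun v => F (v, p)) := fun p =>
    hFcont.comp (continuous_id.prodMk continuous_const)
  have hmono : ∀ p ∈ W, StrictMonoOn (fun v => F (v, p)) (ball v₀ ε) := by
    intro p hp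
    apply strictMonoOn_of_deriv_pos (convex_ball v₀ ε) (hFv p).continuousOn
    intro v hv
    rw [interior_eq_iff_isOpen.2 isOpen_ball] at hv
    exact hrect v hv p hp
  set ε' := ε / 2 with hε'def
  have hε' : 0 < ε' := by positivity
  have hsub : Icc (v₀ - ε') (v₀ + ε') ⊆ ball v₀ ε := by
    intro v hv
    rw [mem_ball, Real.dist_eq, abs_sub_lt_iff]
    constructor <;> [linarith [hv.2]; linarith [hv.1]]
  have hmem0 : v₀ ∈ ball v₀ ε := mem_ball_self hε
  have hlowmem : v₀ - ε' ∈ ball v₀ ε := hsub ⟨by linarith, by linarith⟩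
  have hhighmem : v₀ + ε' ∈ ball v₀ ε := hsub ⟨by linarith, by linarith⟩
  have hlow : F (v₀ - ε', p₀) < c p₀ := by
    rw [← hz]; exact hmono p₀ hp₀W hlowmem hmem0 (by linarith)
  have hhigh : c p₀ < F (v₀ + ε', p₀) := by
    rw [← hz]; exact hmono p₀ hp₀W hmem0 hhighmem (by linarith)
  have hccont : ContinuousOn c U₀ := hc.continuousOn
  have hAopen : IsOpen (U₀ ∩ (fun p => F (v₀ - ε', p) - c p) ⁻¹' Iio 0) := by
    apply ContinuousOn.isOpen_inter_preimage _ hU₀ isOpen_Iio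
    exact (hFcont.comp (continuous_const.prodMk continuous_id)).continuousOn.sub hccont
  have hBopen : IsOpen (U₀ ∩ (fun p => c p - F (v₀ + ε', p)) ⁻¹' Iio 0) := by
    apply ContinuousOn.isOpen_inter_preimage _ hU₀ isOpen_Iio
    exact hccont.sub (hFcont.comp (continuous_const.prodMk continuous_id)).continuousOn
  set W' := W ∩ ((U₀ ∩ (fun p => F (v₀ - ε', p) - c p) ⁻¹' Iio 0) ∩
      (U₀ ∩ (fun p => c p - F (v₀ + ε', p)) ⁻¹' Iio 0)) with hW'def
  have hW'open : IsOpen W' := hWopen.inter (hAopen.inter hBopen)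
  have hp₀W' : p₀ ∈ W' := ⟨hp₀W, ⟨⟨hp₀, by simpa using hlow⟩, ⟨hp₀, by simp; linarith⟩⟩⟩
  have hW'W : W' ⊆ W := fun p hp => hp.1
  have hW'U₀ : W' ⊆ U₀ := fun p hp => hp.1.2
  -- the implicit function
  set φ : E → ℝ := fun p =>
    if h : ∃ v ∈ Icc (v₀ - ε') (v₀ + ε'), F (v, p) = c p then h.choose else v₀ with hφdef
  have hφspec : ∀ p ∈ W', φ p ∈ Icc (v₀ - ε') (v₀ + ε') ∧ F (φ p, p) = c p := by
    intro p hp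
    have hex : ∃ v ∈ Icc (v₀ - ε') (v₀ + ε'), F (v, p) = c p := by
      have h1 : F (v₀ - ε', p) < c p := by have := hp.2.1.2; simpa using this
      have h2 : c p < F (v₀ + ε', p) := by have := hp.2.2.2; simp at this; linarith
      have := intermediate_value_Icc (by linarith : v₀ - ε' ≤ v₀ + ε')
        ((hFv p).continuousOn : ContinuousOn (fun v => F (v, p)) (Icc (v₀ - ε') (v₀ + ε')))
      have hcmem : c p ∈ Icc (F (v₀ - ε', p)) (F (v₀ + ε', p)) := ⟨le_of_lt h1, le_of_lt h2⟩
      obtain ⟨v, hv, hveq⟩ := this hcmem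
      exact ⟨v, hv, hveq⟩
    rw [hφdef]
    simp only [dif_pos hex]
    exact ⟨hex.choose_spec.1, hex.choose_spec.2⟩
  have huniq : ∀ p ∈ W', ∀ v ∈ ball v₀ ε, F (v, p) = c p → v = φ p := by
    intro p hp v hv hveq
    have h2 := hφspec p hp
    exact (hmono p (hW'W hp)).injOn hv (hsub h2.1) (by rw [hveq, h2.2])
  have hφp₀ : φ p₀ = v₀ := (huniq p₀ hp₀W' v₀ hmem0 hz).symm
  -- smoothness at each point of W'
  have hφsmooth : ∀ p₁ ∈ W', ContDiffAt ℝ (⊤:ℕ∞) φ p₁ := by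
    intro p₁ hp₁
    set G : ℝ × E → ℝ := fun q => F q - c q.2 with hGdef
    have hGc : ContDiffAt ℝ (⊤:ℕ∞) G (φ p₁, p₁) := by
      apply hF.contDiffAt.sub
      exact (hc.contDiffAt (hU₀.mem_nhds (hW'U₀ hp₁))).comp _ contDiffAt_snd
    have hφmem : φ p₁ ∈ ball v₀ ε := hsub (hφspec p₁ hp₁).1
    have hder : deriv (fun v => G (v, p₁)) (φ p₁) ≠ 0 := by
      have : (fun v => G (v, p₁)) = fun v => F (v, p₁) - c p₁ := rfl
      rw [this, deriv_sub_const]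
      exact ne_of_gt (hrect _ hφmem p₁ (hW'W hp₁))
    obtain ⟨ψ, hψ₁, hψsm, hψev⟩ := pointwise_ift G (φ p₁) p₁ hGc hder
    have hG0 : G (φ p₁, p₁) = 0 := by
      have := (hφspec p₁ hp₁).2; simp [hGdef]; linarith [this]
    have hev : φ =ᶠ[𝓝 p₁] ψ := by
      have h1 : ∀ᶠ p in 𝓝 p₁, p ∈ W' := hW'open.mem_nhds hp₁
      have h2 : ∀ᶠ p in 𝓝 p₁, ψ p ∈ ball v₀ ε := by
        have hcψ : ContinuousAt ψ p₁ := hψsm.continuousAt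
        have : ψ p₁ ∈ ball v₀ ε := by rw [hψ₁]; exact hφmem
        exact hcψ.eventually_mem (isOpen_ball.mem_nhds this)
      filter_upwards [h1, h2, hψev] with p hp hψp hFψ
      have : F (ψ p, p) = c p := by
        rw [hG0] at hFψ
        have : F (ψ p, p) - c p = 0 := hFψ
        linarith
      exact (huniq p hp (ψ p) hψp this).symm
    exact hψsm.congr_of_eventuallyEq hev
  exact ⟨W', hW'open, hp₀W', hW'U₀, φ, hφp₀,
    fun p hp => (hφsmooth p hp).contDiffWithinAt,
    fun p hp => (hφspec p hp).2⟩


lemma implicit_fn {E : Type*} [NormedAddCommGroup E] [NormedSpace ℝ E] [FiniteDimensional ℝ E]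
    (F : ℝ × E → ℝ) (hF : ContDiff ℝ (⊤:ℕ∞) F)
    (c : E → ℝ) (U₀ : Set E) (hU₀ : IsOpen U₀) (hc : ContDiffOn ℝ (⊤:ℕ∞) c U₀)
    (v₀ : ℝ) (p₀ : E) (hp₀ : p₀ ∈ U₀)
    (hz : F (v₀, p₀) = c p₀)
    (ha : deriv (fun v => F (v, p₀)) v₀ ≠ 0) :
    ∃ U : Set E, IsOpen U ∧ p₀ ∈ U ∧ U ⊆ U₀ ∧ ∃ φ : E → ℝ,
      φ p₀ = v₀ ∧ ContDiffOn ℝ (⊤:ℕ∞) φ U ∧ ∀ p ∈ U, F (φ p, p) = c p := by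
  rcases ha.lt_or_gt with hlt | hgt
  · obtain ⟨U, hU, hp, hsub, φ, hφ0, hφsm, hφeq⟩ :=
      implicit_fn_pos (fun q => -F q) hF.neg (fun p => -c p) U₀ hU₀ hc.neg v₀ p₀ hp₀
        (by simp [hz])
        (by
          show 0 < deriv (fun v => -F (v, p₀)) v₀
          rw [deriv.fun_neg]
          linarith)
    exact ⟨U, hU, hp, hsub, φ, hφ0, hφsm, fun p hp' => by
      have := hφeq p hp'; simpa using this⟩
  · exact implicit_fn_pos F hF c U₀ hU₀ hc v₀ p₀ hp₀ hz hgt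

/-- Persistence of the basic phase portrait (Proposition on perturbation of the
potential): the center `v₀`, the saddle `vₛ` and the conjugate point `vˢ` persist
smoothly under perturbation of the parameters. -/
theorem phase_portrait_persistence
    (d : ℕ) (hd : 1 ≤ d)
    (𝒲 : ℝ → (Fin d → ℝ) → ℝ)
    (h𝒲 : ContDiff ℝ (⊤ : ℕ∞) (fun q : ℝ × (Fin d → ℝ) => 𝒲 q.1 q.2))
    (pstar : Fin d → ℝ) (vsstar v0star vSstar : ℝ)
    (horder1 : vsstar < v0star) (horder2 : v0star < vSstar)
    (hval1 : 𝒲 v0star pstar < 𝒲 vsstar pstar)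
    (hval2 : 𝒲 vsstar pstar = 𝒲 vSstar pstar)
    (hcrit0 : deriv (fun v => 𝒲 v pstar) v0star = 0)
    (hcrits : deriv (fun v => 𝒲 v pstar) vsstar = 0)
    (hs2 : deriv (deriv (fun v => 𝒲 v pstar)) vsstar < 0)
    (h02 : 0 < deriv (deriv (fun v => 𝒲 v pstar)) v0star)
    (hneg : ∀ v ∈ Set.Ioo vsstar v0star, deriv (fun v => 𝒲 v pstar) v < 0)
    (hpos : ∀ v ∈ Set.Ioc v0star vSstar, 0 < deriv (fun v => 𝒲 v pstar) v) :
    ∃ Λ : Set (Fin d → ℝ), IsOpen Λ ∧ pstar ∈ Λ ∧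
      ∃ vs v0 vS : (Fin d → ℝ) → ℝ,
        ContDiffOn ℝ (⊤ : ℕ∞) vs Λ ∧ ContDiffOn ℝ (⊤ : ℕ∞) v0 Λ ∧
        ContDiffOn ℝ (⊤ : ℕ∞) vS Λ ∧
        vs pstar = vsstar ∧ v0 pstar = v0star ∧ vS pstar = vSstar ∧
        ∀ p ∈ Λ,
          (vs p < v0 p ∧ v0 p < vS p) ∧
          (𝒲 (v0 p) p < 𝒲 (vs p) p ∧ 𝒲 (vs p) p = 𝒲 (vS p) p) ∧
          deriv (fun v => 𝒲 v p) (v0 p) = 0 ∧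
          deriv (fun v => 𝒲 v p) (vs p) = 0 ∧
          deriv (deriv (fun v => 𝒲 v p)) (vs p) < 0 ∧
          0 < deriv (deriv (fun v => 𝒲 v p)) (v0 p) ∧
          (∀ v ∈ Set.Ioo (vs p) (v0 p), deriv (fun v => 𝒲 v p) v < 0) ∧
          (∀ v ∈ Set.Ioc (v0 p) (vS p), 0 < deriv (fun v => 𝒲 v p) v) := by
  classical
  set F : ℝ × (Fin d → ℝ) → ℝ := fun q => deriv (fun v => 𝒲 v q.2) q.1 with hFdef
  have hFsm : ContDiff ℝ (⊤:ℕ∞) F := contDiff_pderiv (fun q => 𝒲 q.1 q.2) h𝒲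
  set F2 : ℝ × (Fin d → ℝ) → ℝ := fun q => deriv (fun v => F (v, q.2)) q.1 with hF2def
  have hF2sm : ContDiff ℝ (⊤:ℕ∞) F2 := contDiff_pderiv F hFsm
  have hFcont : Continuous F := hFsm.continuous
  have hF2cont : Continuous F2 := hF2sm.continuous
  have hFvcont : ∀ p : Fin d → ℝ, Continuous fun v => F (v, p) := fun p =>
    hFcont.comp (continuous_id.prodMk continuous_const)
  -- translations
  have hs2' : F2 (vsstar, pstar) < 0 := hs2
  have h02' : 0 < F2 (v0star, pstar) := h02
  -- implicit functions vs and v0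
  obtain ⟨Us, hUsopen, hpUs, -, vs, hvs0, hvssm, hvseq⟩ :=
    implicit_fn F hFsm (fun _ => (0:ℝ)) univ isOpen_univ contDiffOn_const vsstar pstar
      (mem_univ _) hcrits (show F2 (vsstar, pstar) ≠ 0 from hs2.ne)
  obtain ⟨U0, hU0open, hpU0, -, v0, hv00, hv0sm, hv0eq⟩ :=
    implicit_fn F hFsm (fun _ => (0:ℝ)) univ isOpen_univ contDiffOn_const v0star pstar
      (mem_univ _) hcrit0 (show F2 (v0star, pstar) ≠ 0 from h02.ne')
  -- implicit function vS
  have hcS : ContDiffOn ℝ (⊤:ℕ∞) (fun p => 𝒲 (vs p) p) Us := by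
    exact h𝒲.comp_contDiffOn (hvssm.prodMk contDiffOn_id)
  obtain ⟨US, hUSopen, hpUS, hUSsub, vS, hvS0, hvSsm, hvSeq⟩ :=
    implicit_fn (fun q : ℝ × (Fin d → ℝ) => 𝒲 q.1 q.2) h𝒲 (fun p => 𝒲 (vs p) p) Us hUsopen hcS
      vSstar pstar hpUs (by show 𝒲 vSstar pstar = 𝒲 (vs pstar) pstar; rw [hvs0]; exact hval2.symm)
      (show F (vSstar, pstar) ≠ 0 from (hpos vSstar ⟨horder2, le_refl _⟩).ne')
  -- rectangles
  obtain ⟨us, Ws, hus, hWs, hvus, hpWs, husWs⟩ :=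
    isOpen_prod_iff.1 (isOpen_lt hF2cont continuous_const) vsstar pstar hs2'
  obtain ⟨εs, hεs, hballs⟩ := Metric.isOpen_iff.1 hus vsstar hvus
  have hrects : ∀ v ∈ ball vsstar εs, ∀ p ∈ Ws, F2 (v, p) < 0 := fun v hv p hp =>
    husWs (Set.mk_mem_prod (hballs hv) hp)
  obtain ⟨u0, W0, hu0, hW0, hvu0, hpW0, hu0W0⟩ :=
    isOpen_prod_iff.1 (isOpen_lt continuous_const hF2cont) v0star pstar h02'
  obtain ⟨ε0, hε0, hball0⟩ := Metric.isOpen_iff.1 hu0 v0star hvu0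
  have hrect0 : ∀ v ∈ ball v0star ε0, ∀ p ∈ W0, 0 < F2 (v, p) := fun v hv p hp =>
    hu0W0 (Set.mk_mem_prod (hball0 hv) hp)
  obtain ⟨uS, WS, huS, hWS, hvuS, hpWS, huSWS⟩ :=
    isOpen_prod_iff.1 (isOpen_lt continuous_const hFcont) vSstar pstar
      (hpos vSstar ⟨horder2, le_refl _⟩)
  obtain ⟨εS, hεS, hballS⟩ := Metric.isOpen_iff.1 huS vSstar hvuS
  have hrectS : ∀ v ∈ ball vSstar εS, ∀ p ∈ WS, 0 < F (v, p) := fun v hv p hp =>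
    huSWS (Set.mk_mem_prod (hballS hv) hp)
  set δs := εs / 2 with hδsdef
  set δ0 := ε0 / 2 with hδ0def
  set δS := εS / 2 with hδSdef
  have hδs : 0 < δs := by positivity
  have hδ0 : 0 < δ0 := by positivity
  have hδS : 0 < δS := by positivity
  have hballmem : ∀ (c ε v : ℝ), |v - c| < ε → v ∈ ball c ε := fun c ε v h => by
    rwa [mem_ball, Real.dist_eq]
  -- tube lemmas
  obtain ⟨u1, T1, hu1, hT1open, hK1u1, hpT1', hu1T1⟩ :=
    generalized_tube_lemma (isCompact_Icc (a := vsstar + δs) (b := v0star - δ0))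
      isCompact_singleton (isOpen_lt hFcont continuous_const)
      (by
        rintro ⟨v, p⟩ ⟨hv, hp⟩
        rw [mem_singleton_iff] at hp; subst hp
        exact hneg v ⟨by linarith [hv.1, hδs], by linarith [hv.2, hδ0]⟩)
  have hpT1 : pstar ∈ T1 := hpT1' rfl
  have hT1prop : ∀ v ∈ Icc (vsstar + δs) (v0star - δ0), ∀ p ∈ T1, F (v, p) < 0 :=
    fun v hv p hp => hu1T1 (Set.mk_mem_prod (hK1u1 hv) hp)
  obtain ⟨u2, T2, hu2, hT2open, hK2u2, hpT2', hu2T2⟩ :=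
    generalized_tube_lemma (isCompact_Icc (a := v0star + δ0) (b := vSstar - δS))
      isCompact_singleton (isOpen_lt continuous_const hFcont)
      (by
        rintro ⟨v, p⟩ ⟨hv, hp⟩
        rw [mem_singleton_iff] at hp; subst hp
        exact hpos v ⟨by linarith [hv.1, hδ0], by linarith [hv.2, hδS]⟩)
  have hpT2 : pstar ∈ T2 := hpT2' rfl
  have hT2prop : ∀ v ∈ Icc (v0star + δ0) (vSstar - δS), ∀ p ∈ T2, 0 < F (v, p) :=
    fun v hv p hp => hu2T2 (Set.mk_mem_prod (hK2u2 hv) hp)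
  -- pointwise-open conditions
  have hWcont : Continuous (fun q : ℝ × (Fin d → ℝ) => 𝒲 q.1 q.2) := h𝒲.continuous
  set As := Us ∩ (fun p => |vs p - vsstar|) ⁻¹' Iio δs with hAsdef
  set A0 := U0 ∩ (fun p => |v0 p - v0star|) ⁻¹' Iio δ0 with hA0def
  set AS := US ∩ (fun p => |vS p - vSstar|) ⁻¹' Iio δS with hASdef
  set B1 := (Us ∩ U0) ∩ (fun p => vs p - v0 p) ⁻¹' Iio 0 with hB1def
  set B2 := (U0 ∩ US) ∩ (fun p => v0 p - vS p) ⁻¹' Iio 0 with hB2def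
  set B3 := (Us ∩ U0) ∩ (fun p => 𝒲 (v0 p) p - 𝒲 (vs p) p) ⁻¹' Iio 0 with hB3def
  have hAsopen : IsOpen As :=
    ContinuousOn.isOpen_inter_preimage
      ((hvssm.continuousOn.sub continuousOn_const).abs) hUsopen isOpen_Iio
  have hA0open : IsOpen A0 :=
    ContinuousOn.isOpen_inter_preimage
      ((hv0sm.continuousOn.sub continuousOn_const).abs) hU0open isOpen_Iio
  have hASopen : IsOpen AS :=
    ContinuousOn.isOpen_inter_preimage
      ((hvSsm.continuousOn.sub continuousOn_const).abs) hUSopen isOpen_Iio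
  have hB1open : IsOpen B1 :=
    ContinuousOn.isOpen_inter_preimage
      ((hvssm.continuousOn.mono inter_subset_left).sub
        (hv0sm.continuousOn.mono inter_subset_right)) (hUsopen.inter hU0open) isOpen_Iio
  have hB2open : IsOpen B2 :=
    ContinuousOn.isOpen_inter_preimage
      ((hv0sm.continuousOn.mono inter_subset_left).sub
        (hvSsm.continuousOn.mono inter_subset_right)) (hU0open.inter hUSopen) isOpen_Iio
  have hB3open : IsOpen B3 := by
    apply ContinuousOn.isOpen_inter_preimage _ (hUsopen.inter hU0open) isOpen_Iio
    have c1 : ContinuousOn (fun p => 𝒲 (v0 p) p) (Us ∩ U0) :=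
      hWcont.comp_continuousOn
        ((hv0sm.continuousOn.mono inter_subset_right).prodMk continuousOn_id)
    have c2 : ContinuousOn (fun p => 𝒲 (vs p) p) (Us ∩ U0) :=
      hWcont.comp_continuousOn
        ((hvssm.continuousOn.mono inter_subset_left).prodMk continuousOn_id)
    exact c1.sub c2
  set Λ := As ∩ (A0 ∩ (AS ∩ (Ws ∩ (W0 ∩ (WS ∩ (T1 ∩ (T2 ∩ (B1 ∩ (B2 ∩ B3))))))))) with hΛdef
  have hΛopen : IsOpen Λ :=
    hAsopen.inter (hA0open.inter (hASopen.inter (hWs.inter (hW0.inter (hWS.inter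
      (hT1open.inter (hT2open.inter (hB1open.inter (hB2open.inter hB3open)))))))))
  have hpΛ : pstar ∈ Λ := by
    refine ⟨⟨hpUs, ?_⟩, ⟨hpU0, ?_⟩, ⟨hpUS, ?_⟩, hpWs, hpW0, hpWS, hpT1, hpT2,
      ⟨⟨hpUs, hpU0⟩, ?_⟩, ⟨⟨hpU0, hpUS⟩, ?_⟩, ⟨⟨hpUs, hpU0⟩, ?_⟩⟩
    · show |vs pstar - vsstar| < δs; rw [hvs0]; simpa using hδs
    · show |v0 pstar - v0star| < δ0; rw [hv00]; simpa using hδ0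
    · show |vS pstar - vSstar| < δS; rw [hvS0]; simpa using hδS
    · show vs pstar - v0 pstar < 0; rw [hvs0, hv00]; linarith
    · show v0 pstar - vS pstar < 0; rw [hv00, hvS0]; linarith
    · show 𝒲 (v0 pstar) pstar - 𝒲 (vs pstar) pstar < 0; rw [hvs0, hv00]; linarith
  have hΛUs : Λ ⊆ Us := fun p hp => hp.1.1
  have hΛU0 : Λ ⊆ U0 := fun p hp => hp.2.1.1
  have hΛUS : Λ ⊆ US := fun p hp => hp.2.2.1.1
  -- monotonicity helpers
  have hmonoIcc : ∀ (a b : ℝ) (p : Fin d → ℝ), (∀ v ∈ Icc a b, 0 < F2 (v, p)) →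
      StrictMonoOn (fun v => F (v, p)) (Icc a b) := by
    intro a b p h
    apply strictMonoOn_of_deriv_pos (convex_Icc a b) (hFvcont p).continuousOn
    intro v hv
    rw [interior_Icc] at hv
    exact h v ⟨le_of_lt hv.1, le_of_lt hv.2⟩
  have hantiIcc : ∀ (a b : ℝ) (p : Fin d → ℝ), (∀ v ∈ Icc a b, F2 (v, p) < 0) →
      StrictAntiOn (fun v => F (v, p)) (Icc a b) := by
    intro a b p h
    apply strictAntiOn_of_deriv_neg (convex_Icc a b) (hFvcont p).continuousOn
    intro v hv
    rw [interior_Icc] at hv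
    exact h v ⟨le_of_lt hv.1, le_of_lt hv.2⟩
  refine ⟨Λ, hΛopen, hpΛ, vs, v0, vS, hvssm.mono hΛUs, hv0sm.mono hΛU0, hvSsm.mono hΛUS,
    hvs0, hv00, hvS0, ?_⟩
  intro p hp
  obtain ⟨hAs, hA0, hAS, hWsm, hW0m, hWSm, hT1m, hT2m, hB1m, hB2m, hB3m⟩ := hp
  have hpUs' : p ∈ Us := hAs.1
  have hpU0' : p ∈ U0 := hA0.1
  have hpUS' : p ∈ US := hAS.1
  have hvsb : |vs p - vsstar| < δs := hAs.2
  have hv0b : |v0 p - v0star| < δ0 := hA0.2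
  have hvSb : |vS p - vSstar| < δS := hAS.2
  have hFvs : F (vs p, p) = 0 := hvseq p hpUs'
  have hFv0 : F (v0 p, p) = 0 := hv0eq p hpU0'
  have hWeq : 𝒲 (vS p) p = 𝒲 (vs p) p := hvSeq p hpUS'
  have horder1' : vs p < v0 p := by have := hB1m.2; simp at this; linarith
  have horder2' : v0 p < vS p := by have := hB2m.2; simp at this; linarith
  have habs : ∀ x c δ : ℝ, |x - c| < δ → c - δ < x ∧ x < c + δ := by
    intro x c δ h
    rw [abs_sub_lt_iff] at h
    constructor <;> linarith [h.1, h.2]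
  obtain ⟨hvs1, hvs2⟩ := habs _ _ _ hvsb
  obtain ⟨hv01, hv02⟩ := habs _ _ _ hv0b
  obtain ⟨hvS1, hvS2⟩ := habs _ _ _ hvSb
  -- local monotonicity on the three key intervals
  have hanti_s : StrictAntiOn (fun v => F (v, p)) (Icc (vsstar - δs) (vsstar + δs)) := by
    apply hantiIcc
    intro v hv
    apply hrects v _ p hWsm
    apply hballmem
    rw [abs_sub_lt_iff]
    constructor <;> [linarith [hv.2, hεs]; linarith [hv.1, hεs]]
  have hmono_0 : StrictMonoOn (fun v => F (v, p)) (Icc (v0star - δ0) (v0star + δ0)) := by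
    apply hmonoIcc
    intro v hv
    apply hrect0 v _ p hW0m
    apply hballmem
    rw [abs_sub_lt_iff]
    constructor <;> [linarith [hv.2, hε0]; linarith [hv.1, hε0]]
  have hvs_mem : vs p ∈ Icc (vsstar - δs) (vsstar + δs) := ⟨le_of_lt hvs1, le_of_lt hvs2⟩
  have hv0_mem : v0 p ∈ Icc (v0star - δ0) (v0star + δ0) := ⟨le_of_lt hv01, le_of_lt hv02⟩
  refine ⟨⟨horder1', horder2'⟩, ⟨?_, hWeq.symm⟩, hFv0, hFvs, ?_, ?_, ?_, ?_⟩
  · have := hB3m.2; simp at this; linarith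
  · show F2 (vs p, p) < 0
    apply hrects _ _ p hWsm
    apply hballmem
    calc |vs p - vsstar| < δs := hvsb
    _ < εs := by rw [hδsdef]; linarith
  · show 0 < F2 (v0 p, p)
    apply hrect0 _ _ p hW0m
    apply hballmem
    calc |v0 p - v0star| < δ0 := hv0b
    _ < ε0 := by rw [hδ0def]; linarith
  · -- negativity on Ioo (vs p) (v0 p)
    intro v hv
    show F (v, p) < 0
    by_cases hc1 : v ≤ vsstar + δs
    · have hvmem : v ∈ Icc (vsstar - δs) (vsstar + δs) :=
        ⟨by linarith [hv.1], hc1⟩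
      have := hanti_s hvs_mem hvmem hv.1
      simpa only [hFvs] using this
    · by_cases hc2 : v0star - δ0 ≤ v
      · have hvmem : v ∈ Icc (v0star - δ0) (v0star + δ0) :=
          ⟨hc2, by linarith [hv.2]⟩
        have := hmono_0 hvmem hv0_mem hv.2
        simpa only [hFv0] using this
      · exact hT1prop v ⟨by linarith, by linarith⟩ p hT1m
  · -- positivity on Ioc (v0 p) (vS p)
    intro v hv
    show 0 < F (v, p)
    by_cases hc1 : v ≤ v0star + δ0
    · have hvmem : v ∈ Icc (v0star - δ0) (v0star + δ0) :=
        ⟨by linarith [hv.1], hc1⟩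
      have := hmono_0 hv0_mem hvmem hv.1
      simpa only [hFv0] using this
    · by_cases hc2 : vSstar - δS ≤ v
      · apply hrectS v _ p hWSm
        apply hballmem
        rw [abs_sub_lt_iff]
        constructor
        · have : v ≤ vS p := hv.2
          linarith
        · linarith
      · exact hT2prop v ⟨by linarith, by linarith⟩ p hT2m
end

section
/- In the harmonic (small amplitude) setting, for every continuous function φ : (A,B) → ℝ one has lim_{μ → μ₀⁺} ∫_{v₂(μ)}^{v₃(μ)} φ(v)/√(μ − W(v)) dv = π · φ(v₀) · √(2/W''(v₀)). -/
open MeasureTheory Set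


lemma key_integrable {c e r : ℝ} (hc : 0 < c) (hr : 0 < r) (hre : c * r ^ 2 ≤ e) :
    IntegrableOn (fun s => 1 / Real.sqrt (e - c * s ^ 2)) (Ioo 0 r) := by
  have he : 0 < e := lt_of_lt_of_le (by positivity) hre
  set ρ := Real.sqrt (e / c) with hρdef
  have hρ : 0 < ρ := Real.sqrt_pos.2 (by positivity)
  have hρ2 : c * ρ ^ 2 = e := by
    rw [hρdef, Real.sq_sqrt (by positivity : (0:ℝ) ≤ e / c)]
    field_simp
  have hrρ : r ≤ ρ := by
    rw [hρdef]
    rw [show e / c = r ^ 2 + (e - c * r ^ 2) / c by field_simp; ring]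
    have h0 : 0 ≤ (e - c * r ^ 2) / c := by
      apply div_nonneg _ hc.le; linarith
    calc r = Real.sqrt (r ^ 2) := by rw [Real.sqrt_sq hr.le]
    _ ≤ _ := Real.sqrt_le_sqrt (by linarith)
  -- majorant
  have hmaj : IntegrableOn (fun s => (1 / Real.sqrt (c * ρ)) * ((ρ - s) ^ (-(1/2) : ℝ)))
      (Ioo 0 r) := by
    have h1 : IntervalIntegrable (fun x : ℝ => x ^ (-(1/2) : ℝ)) volume (ρ - r) ρ :=
      intervalIntegral.intervalIntegrable_rpow' (by norm_num)
    have h2 : IntervalIntegrable (fun s : ℝ => (ρ - s) ^ (-(1/2) : ℝ)) volume 0 r := by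
      simpa using (h1.comp_sub_left ρ).symm
    have h3 := (h2.const_mul (1 / Real.sqrt (c * ρ)))
    rw [intervalIntegrable_iff_integrableOn_Ioo_of_le hr.le] at h3
    exact h3
  refine hmaj.integrable.mono' ?_ ?_
  · refine (Measurable.aestronglyMeasurable ?_)
    have : Measurable fun s : ℝ => Real.sqrt (e - c * s ^ 2) :=
      (Real.continuous_sqrt.comp (by continuity)).measurable
    simpa [one_div, Pi.inv_def] using this.inv
  · rw [ae_restrict_iff' measurableSet_Ioo]
    refine Filter.Eventually.of_forall fun s hs => ?_
    have hs0 : 0 < s := hs.1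
    have hsr : s < r := hs.2
    have hsρ : s < ρ := lt_of_lt_of_le hsr hrρ
    have h1 : c * ρ * (ρ - s) ≤ e - c * s ^ 2 := by
      nlinarith [mul_nonneg (mul_nonneg hc.le hs0.le) (sub_nonneg.2 hsρ.le)]
    have h2 : (0:ℝ) < ρ - s := by linarith
    have h3 : Real.sqrt (c * ρ * (ρ - s)) ≤ Real.sqrt (e - c * s ^ 2) :=
      Real.sqrt_le_sqrt h1
    rw [Real.norm_eq_abs, abs_of_nonneg (by positivity)]
    rw [Real.sqrt_mul (by positivity) (ρ - s)] at h3
    have h4 : (ρ - s) ^ (-(1/2) : ℝ) = 1 / Real.sqrt (ρ - s) := by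
      rw [Real.rpow_neg h2.le, Real.sqrt_eq_rpow]; norm_num
    rw [h4, div_mul_div_comm, one_mul]
    apply one_div_le_one_div_of_le
    · positivity
    · exact h3

lemma key_value {c e r : ℝ} (hc : 0 < c) (hr : 0 < r) (hre : c * r ^ 2 ≤ e) :
    ∫ s in Ioo 0 r, 1 / Real.sqrt (e - c * s ^ 2)
      = Real.arcsin (r * Real.sqrt (c / e)) / Real.sqrt c := by
  have he : 0 < e := lt_of_lt_of_le (by positivity) hre
  have hce : (0:ℝ) ≤ c / e := by positivity
  have hsc : (0:ℝ) < Real.sqrt c := Real.sqrt_pos.2 hc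
  have hse : (0:ℝ) < Real.sqrt e := Real.sqrt_pos.2 he
  set k := Real.sqrt (c / e) with hk
  have hkce : k = Real.sqrt c / Real.sqrt e := Real.sqrt_div hc.le e
  set Φ : ℝ → ℝ := fun s => Real.arcsin (s * k) / Real.sqrt c with hΦ
  have hint : IntervalIntegrable (fun s => 1 / Real.sqrt (e - c * s ^ 2)) volume 0 r := by
    rw [intervalIntegrable_iff_integrableOn_Ioo_of_le hr.le]
    exact key_integrable hc hr hre
  have hcont : ContinuousOn Φ (Icc 0 r) := by
    apply Continuous.continuousOn
    exact (Real.continuous_arcsin.comp (continuous_id.mul continuous_const)).div_const _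
  have hderiv : ∀ s ∈ Ioo 0 r, HasDerivWithinAt Φ (1 / Real.sqrt (e - c * s ^ 2)) (Ioi s) s := by
    intro s hs
    have hs0 : 0 < s := hs.1
    have hsr : s < r := hs.2
    have hsq : s ^ 2 < r ^ 2 := by nlinarith
    have hpos : 0 < e - c * s ^ 2 := by nlinarith
    have hx1 : s * k ≠ -1 := by
      have : 0 ≤ s * k := by positivity
      intro h; rw [h] at this; linarith
    have hx2 : s * k ≠ 1 := by
      have hk2 : k ^ 2 = c / e := Real.sq_sqrt hce
      intro h
      have : (s * k) ^ 2 = 1 := by rw [h]; norm_num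
      rw [mul_pow, hk2] at this
      have : s ^ 2 * c = e := by field_simp at this; linarith [this]
      nlinarith
    have h1 : HasDerivAt (fun s : ℝ => Real.arcsin (s * k))
        ((1 / Real.sqrt (1 - (s * k) ^ 2)) * k) s := by
      have := (Real.hasDerivAt_arcsin hx1 hx2).comp s
        ((hasDerivAt_id s).mul_const k)
      simpa [Function.comp_def] using this
    have h2 : HasDerivAt Φ ((1 / Real.sqrt (1 - (s * k) ^ 2)) * k / Real.sqrt c) s :=
      h1.div_const _
    have h3 : (1 / Real.sqrt (1 - (s * k) ^ 2)) * k / Real.sqrt c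
        = 1 / Real.sqrt (e - c * s ^ 2) := by
      have hk2 : k ^ 2 = c / e := Real.sq_sqrt hce
      have e1 : 1 - (s * k) ^ 2 = (e - c * s ^ 2) / e := by
        rw [mul_pow, hk2]; field_simp
      rw [e1, Real.sqrt_div hpos.le, hkce]
      have h5 : Real.sqrt (e - c * s ^ 2) ≠ 0 := by positivity
      field_simp
    rw [h3] at h2
    exact h2.hasDerivWithinAt
  have := intervalIntegral.integral_eq_sub_of_hasDeriv_right_of_le hr.le hcont hderiv hint
  rw [intervalIntegral.integral_of_le hr.le, integral_Ioc_eq_integral_Ioo] at this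
  rw [this, hΦ]
  simp [Real.arcsin_zero]


lemma side_estimate {c₁ c₂ ε s₃ η q : ℝ} {g p : ℝ → ℝ}
    (hc1 : 0 < c₁) (hc12 : c₁ ≤ c₂) (hs₃ : 0 < s₃)
    (hε1 : c₁ * s₃ ^ 2 ≤ ε) (hε2 : ε ≤ c₂ * s₃ ^ 2)
    (hgpos : ∀ s ∈ Ioo 0 s₃, 0 < g s)
    (hglow : ∀ s ∈ Ioo 0 s₃, c₁ * (s₃ ^ 2 - s ^ 2) ≤ g s)
    (hgup : ∀ s ∈ Ioo 0 s₃, g s ≤ ε - c₁ * s ^ 2)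
    (hgm : ContinuousOn g (Icc 0 s₃))
    (hη : 0 ≤ η)
    (hpq : ∀ s ∈ Ioo 0 s₃, |p s - q| ≤ η)
    (hpm : ContinuousOn p (Icc 0 s₃)) :
    IntegrableOn (fun s => 1 / Real.sqrt (g s)) (Ioo 0 s₃) ∧
    IntegrableOn (fun s => p s / Real.sqrt (g s)) (Ioo 0 s₃) ∧
    (∫ s in Ioo 0 s₃, 1 / Real.sqrt (g s)) ≤ Real.pi / (2 * Real.sqrt c₁) ∧
    Real.arcsin (Real.sqrt (c₁ / c₂)) / Real.sqrt c₁ ≤ ∫ s in Ioo 0 s₃, 1 / Real.sqrt (g s) ∧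
    |(∫ s in Ioo 0 s₃, p s / Real.sqrt (g s))
        - q * ∫ s in Ioo 0 s₃, 1 / Real.sqrt (g s)|
      ≤ η * ∫ s in Ioo 0 s₃, 1 / Real.sqrt (g s) := by
  have hε0 : 0 < ε := lt_of_lt_of_le (by positivity) hε1
  have hc2 : 0 < c₂ := lt_of_lt_of_le hc1 hc12
  -- measurability
  have hgae : AEMeasurable g (volume.restrict (Ioo 0 s₃)) :=
    ((hgm.mono Ioo_subset_Icc_self).aemeasurable measurableSet_Ioo)
  have hGae : AEStronglyMeasurable (fun s => 1 / Real.sqrt (g s))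
      (volume.restrict (Ioo 0 s₃)) := by
    have := (Real.continuous_sqrt.measurable.comp_aemeasurable hgae).inv
    simpa [one_div, Pi.inv_def, Function.comp_def] using this.aestronglyMeasurable
  -- the upper majorant
  have hMint : IntegrableOn (fun s => 1 / Real.sqrt (c₁ * s₃ ^ 2 - c₁ * s ^ 2)) (Ioo 0 s₃) :=
    key_integrable hc1 hs₃ le_rfl
  have hMval : (∫ s in Ioo 0 s₃, 1 / Real.sqrt (c₁ * s₃ ^ 2 - c₁ * s ^ 2))
      = Real.pi / (2 * Real.sqrt c₁) := by
    rw [key_value hc1 hs₃ le_rfl]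
    have h1 : c₁ / (c₁ * s₃ ^ 2) = (1 / s₃) ^ 2 := by field_simp
    rw [h1, Real.sqrt_sq (by positivity), mul_one_div, div_self hs₃.ne',
      Real.arcsin_one]
    ring
  have hle : ∀ s ∈ Ioo 0 s₃, 1 / Real.sqrt (g s)
      ≤ 1 / Real.sqrt (c₁ * s₃ ^ 2 - c₁ * s ^ 2) := by
    intro s hs
    have hss : s ^ 2 < s₃ ^ 2 := by nlinarith [hs.1, hs.2]
    have h2 := hglow s hs
    apply one_div_le_one_div_of_le
    · apply Real.sqrt_pos.2; nlinarith
    · apply Real.sqrt_le_sqrt; nlinarith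
  -- C1
  have hGint : IntegrableOn (fun s => 1 / Real.sqrt (g s)) (Ioo 0 s₃) := by
    refine hMint.integrable.mono' hGae ?_
    rw [ae_restrict_iff' measurableSet_Ioo]
    refine Filter.Eventually.of_forall fun s hs => ?_
    rw [Real.norm_eq_abs, abs_of_nonneg (by positivity)]
    exact hle s hs
  -- C2
  have hGup : (∫ s in Ioo 0 s₃, 1 / Real.sqrt (g s)) ≤ Real.pi / (2 * Real.sqrt c₁) := by
    rw [← hMval]
    exact setIntegral_mono_on hGint hMint measurableSet_Ioo hle
  -- C3
  have hGnonneg : ∀ s, 0 ≤ 1 / Real.sqrt (g s) := fun s => by positivity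
  have hGlow : Real.arcsin (Real.sqrt (c₁ / c₂)) / Real.sqrt c₁
      ≤ ∫ s in Ioo 0 s₃, 1 / Real.sqrt (g s) := by
    have hr : 0 < Real.sqrt (ε / c₂) := Real.sqrt_pos.2 (by positivity)
    have hr2 : (Real.sqrt (ε / c₂)) ^ 2 = ε / c₂ := Real.sq_sqrt (by positivity)
    have hrs : Real.sqrt (ε / c₂) ≤ s₃ := by
      calc Real.sqrt (ε / c₂) ≤ Real.sqrt (s₃ ^ 2) :=
            Real.sqrt_le_sqrt (by rw [div_le_iff₀ hc2]; linarith)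
        _ = s₃ := Real.sqrt_sq hs₃.le
    have hcr : c₁ * (Real.sqrt (ε / c₂)) ^ 2 ≤ ε := by
      rw [hr2]
      calc c₁ * (ε / c₂) ≤ c₂ * (ε / c₂) := by
            apply mul_le_mul_of_nonneg_right hc12; positivity
        _ = ε := by field_simp
    have hLint : IntegrableOn (fun s => 1 / Real.sqrt (ε - c₁ * s ^ 2))
        (Ioo 0 (Real.sqrt (ε / c₂))) := key_integrable hc1 hr hcr
    have hLval : (∫ s in Ioo 0 (Real.sqrt (ε / c₂)), 1 / Real.sqrt (ε - c₁ * s ^ 2))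
        = Real.arcsin (Real.sqrt (c₁ / c₂)) / Real.sqrt c₁ := by
      rw [key_value hc1 hr hcr]
      congr 2
      rw [← Real.sqrt_mul (by positivity)]
      congr 1
      field_simp
    have step1 : (∫ s in Ioo 0 (Real.sqrt (ε / c₂)), 1 / Real.sqrt (ε - c₁ * s ^ 2))
        ≤ ∫ s in Ioo 0 (Real.sqrt (ε / c₂)), 1 / Real.sqrt (g s) := by
      apply setIntegral_mono_on hLint (hGint.mono_set (Ioo_subset_Ioo le_rfl hrs))
        measurableSet_Ioo
      intro s hs
      have hs' : s ∈ Ioo 0 s₃ := ⟨hs.1, lt_of_lt_of_le hs.2 hrs⟩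
      apply one_div_le_one_div_of_le
      · exact Real.sqrt_pos.2 (hgpos s hs')
      · exact Real.sqrt_le_sqrt (hgup s hs')
    have step2 : (∫ s in Ioo 0 (Real.sqrt (ε / c₂)), 1 / Real.sqrt (g s))
        ≤ ∫ s in Ioo 0 s₃, 1 / Real.sqrt (g s) := by
      apply setIntegral_mono_set hGint
      · exact Filter.Eventually.of_forall fun s => hGnonneg s
      · exact HasSubset.Subset.eventuallyLE (Ioo_subset_Ioo le_rfl hrs)
    rw [← hLval]
    exact le_trans step1 step2
  -- C4
  have hpae : AEStronglyMeasurable (fun s => p s / Real.sqrt (g s))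
      (volume.restrict (Ioo 0 s₃)) := by
    have h1 : AEMeasurable p (volume.restrict (Ioo 0 s₃)) :=
      ((hpm.mono Ioo_subset_Icc_self).aemeasurable measurableSet_Ioo)
    have h2 := h1.mul (Real.continuous_sqrt.measurable.comp_aemeasurable hgae).inv
    simpa [div_eq_mul_inv, Pi.mul_def, Pi.inv_def, Function.comp_def] using h2.aestronglyMeasurable
  have hPint : IntegrableOn (fun s => p s / Real.sqrt (g s)) (Ioo 0 s₃) := by
    refine ((hGint.integrable.const_mul (|q| + η)).mono' hpae ?_)
    rw [ae_restrict_iff' measurableSet_Ioo]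
    refine Filter.Eventually.of_forall fun s hs => ?_
    have h1 : |p s| ≤ |q| + η := by
      have := hpq s hs
      have := abs_sub_abs_le_abs_sub (p s) q
      linarith
    have hgs : 0 < Real.sqrt (g s) := Real.sqrt_pos.2 (hgpos s hs)
    rw [Real.norm_eq_abs, abs_div, abs_of_nonneg (Real.sqrt_nonneg _)]
    calc |p s| / Real.sqrt (g s) ≤ (|q| + η) / Real.sqrt (g s) :=
          (div_le_div_iff_of_pos_right hgs).2 h1
      _ = (|q| + η) * (1 / Real.sqrt (g s)) := by ring
  -- C5
  have hQint : IntegrableOn (fun s => q * (1 / Real.sqrt (g s))) (Ioo 0 s₃) :=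
    hGint.integrable.const_mul q
  have hC5 : |(∫ s in Ioo 0 s₃, p s / Real.sqrt (g s))
      - q * ∫ s in Ioo 0 s₃, 1 / Real.sqrt (g s)|
      ≤ η * ∫ s in Ioo 0 s₃, 1 / Real.sqrt (g s) := by
    have e1 : q * (∫ s in Ioo 0 s₃, 1 / Real.sqrt (g s))
        = ∫ s in Ioo 0 s₃, q * (1 / Real.sqrt (g s)) := (integral_const_mul q _).symm
    rw [e1, ← integral_sub hPint.integrable hQint.integrable]
    have e2 : η * (∫ s in Ioo 0 s₃, 1 / Real.sqrt (g s))
        = ∫ s in Ioo 0 s₃, η * (1 / Real.sqrt (g s)) := (integral_const_mul η _).symm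
    rw [e2]
    calc |∫ s in Ioo 0 s₃, (p s / Real.sqrt (g s) - q * (1 / Real.sqrt (g s)))|
        ≤ ∫ s in Ioo 0 s₃, |p s / Real.sqrt (g s) - q * (1 / Real.sqrt (g s))| :=
          by simpa [Real.norm_eq_abs] using
            norm_integral_le_integral_norm (μ := volume.restrict (Ioo 0 s₃))
              (fun s => p s / Real.sqrt (g s) - q * (1 / Real.sqrt (g s)))
      _ ≤ ∫ s in Ioo 0 s₃, η * (1 / Real.sqrt (g s)) := by
          apply setIntegral_mono_on
            ((hPint.integrable.sub hQint.integrable).abs) (hGint.integrable.const_mul η)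
            measurableSet_Ioo
          intro s hs
          show |p s / Real.sqrt (g s) - q * (1 / Real.sqrt (g s))|
            ≤ η * (1 / Real.sqrt (g s))
          have hgs : 0 < Real.sqrt (g s) := Real.sqrt_pos.2 (hgpos s hs)
          have heq : p s / Real.sqrt (g s) - q * (1 / Real.sqrt (g s))
              = (p s - q) / Real.sqrt (g s) := by ring
          rw [heq, abs_div, abs_of_nonneg (Real.sqrt_nonneg _), div_eq_mul_one_div]
          apply mul_le_mul_of_nonneg_right (hpq s hs) (hGnonneg s)
  exact ⟨hGint, hPint, hGup, hGlow, hC5⟩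


lemma sqrt_half_eq {a : ℝ} (ha : 0 < a) :
    Real.pi / Real.sqrt (a / 2) = Real.pi * Real.sqrt (2 / a) := by
  rw [show (2 / a) = (a / 2)⁻¹ by rw [inv_div], Real.sqrt_inv]
  rw [div_eq_mul_inv]

lemma error_tendsto {a : ℝ} (ha : 0 < a) (M : ℝ) :
    Filter.Tendsto (fun η : ℝ =>
      η * (Real.pi / Real.sqrt (a * (1 - η) / 2))
      + M * (|Real.pi / Real.sqrt (a * (1 - η) / 2) - Real.pi * Real.sqrt (2 / a)|
        + |2 * Real.arcsin (Real.sqrt ((a * (1 - η) / 2) / (a * (1 + η) / 2)))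
            / Real.sqrt (a * (1 - η) / 2) - Real.pi * Real.sqrt (2 / a)|))
      (nhds 0) (nhds 0) := by
  have hs0 : Real.sqrt (a * (1 - (0:ℝ)) / 2) ≠ 0 := by
    rw [ne_eq, Real.sqrt_eq_zero (by norm_num; positivity)]
    · norm_num; positivity
  have hc1 : ContinuousAt (fun η : ℝ => Real.sqrt (a * (1 - η) / 2)) 0 :=
    (Real.continuous_sqrt.comp (by continuity)).continuousAt
  have hc2 : ContinuousAt (fun η : ℝ => Real.pi / Real.sqrt (a * (1 - η) / 2)) 0 :=
    (continuousAt_const.div hc1 hs0)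
  have hc3 : ContinuousAt (fun η : ℝ =>
      Real.arcsin (Real.sqrt ((a * (1 - η) / 2) / (a * (1 + η) / 2)))) 0 := by
    apply Real.continuous_arcsin.continuousAt.comp
    apply Real.continuous_sqrt.continuousAt.comp
    apply ContinuousAt.div (Continuous.continuousAt (by continuity)) (Continuous.continuousAt (by continuity))
    norm_num; positivity
  have hcont : ContinuousAt (fun η : ℝ =>
      η * (Real.pi / Real.sqrt (a * (1 - η) / 2))
      + M * (|Real.pi / Real.sqrt (a * (1 - η) / 2) - Real.pi * Real.sqrt (2 / a)|
        + |2 * Real.arcsin (Real.sqrt ((a * (1 - η) / 2) / (a * (1 + η) / 2)))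
            / Real.sqrt (a * (1 - η) / 2) - Real.pi * Real.sqrt (2 / a)|)) 0 := by
    apply ContinuousAt.add
    · exact continuousAt_id.mul hc2
    · apply continuousAt_const.mul
      apply ContinuousAt.add
      · exact (hc2.sub continuousAt_const).abs
      · exact ((((continuousAt_const.mul hc3)).div hc1 hs0).sub continuousAt_const).abs
  have hval : (0:ℝ) * (Real.pi / Real.sqrt (a * (1 - (0:ℝ)) / 2))
      + M * (|Real.pi / Real.sqrt (a * (1 - (0:ℝ)) / 2) - Real.pi * Real.sqrt (2 / a)|
        + |2 * Real.arcsin (Real.sqrt ((a * (1 - (0:ℝ)) / 2) / (a * (1 + (0:ℝ)) / 2)))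
            / Real.sqrt (a * (1 - (0:ℝ)) / 2) - Real.pi * Real.sqrt (2 / a)|) = 0 := by
    have h1 : (a * (1 - (0:ℝ)) / 2) = a / 2 := by ring
    have h2 : ((a * (1 - (0:ℝ)) / 2) / (a * (1 + (0:ℝ)) / 2)) = 1 := by
      field_simp; norm_num
    rw [h2, h1, Real.sqrt_one, Real.arcsin_one,
      show 2 * (Real.pi / 2) = Real.pi by ring, sqrt_half_eq ha]
    simp
  have := hcont.tendsto
  rw [hval] at this
  exact this


lemma mono_aux {A B l u c v₀ : ℝ} {W : ℝ → ℝ} (hWd : DifferentiableOn ℝ W (Ioo A B))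
    (hsub : Icc l u ⊆ Ioo A B)
    (hderiv : ∀ v ∈ Ioo l u, 2 * c * (v - v₀) ≤ deriv W v) :
    MonotoneOn (fun v => W v - c * (v - v₀) ^ 2) (Icc l u) := by
  have hdiff : ∀ v ∈ Ioo l u, HasDerivAt (fun v => W v - c * (v - v₀) ^ 2)
      (deriv W v - 2 * c * (v - v₀)) v := by
    intro v hv
    have hW : HasDerivAt W (deriv W v) v :=
      (hWd.differentiableAt (isOpen_Ioo.mem_nhds (hsub (Ioo_subset_Icc_self hv)))).hasDerivAt
    have hq : HasDerivAt (fun v => c * (v - v₀) ^ 2) (2 * c * (v - v₀)) v := by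
      have := (((hasDerivAt_id v).sub_const v₀).pow 2).const_mul c
      exact this.congr_deriv (by simp; ring)
    exact hW.sub hq
  apply monotoneOn_of_deriv_nonneg (convex_Icc l u)
  · exact (hWd.continuousOn.mono hsub).sub (Continuous.continuousOn (by continuity))
  · rw [interior_Icc]
    exact fun v hv => (hdiff v hv).differentiableAt.differentiableWithinAt
  · rw [interior_Icc]
    intro v hv
    rw [(hdiff v hv).deriv]
    linarith [hderiv v hv]

lemma anti_aux {A B l u c v₀ : ℝ} {W : ℝ → ℝ} (hWd : DifferentiableOn ℝ W (Ioo A B))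
    (hsub : Icc l u ⊆ Ioo A B)
    (hderiv : ∀ v ∈ Ioo l u, deriv W v ≤ 2 * c * (v - v₀)) :
    AntitoneOn (fun v => W v - c * (v - v₀) ^ 2) (Icc l u) := by
  have hdiff : ∀ v ∈ Ioo l u, HasDerivAt (fun v => W v - c * (v - v₀) ^ 2)
      (deriv W v - 2 * c * (v - v₀)) v := by
    intro v hv
    have hW : HasDerivAt W (deriv W v) v :=
      (hWd.differentiableAt (isOpen_Ioo.mem_nhds (hsub (Ioo_subset_Icc_self hv)))).hasDerivAt
    have hq : HasDerivAt (fun v => c * (v - v₀) ^ 2) (2 * c * (v - v₀)) v := by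
      have := (((hasDerivAt_id v).sub_const v₀).pow 2).const_mul c
      exact this.congr_deriv (by simp; ring)
    exact hW.sub hq
  apply antitoneOn_of_deriv_nonpos (convex_Icc l u)
  · exact (hWd.continuousOn.mono hsub).sub (Continuous.continuousOn (by continuity))
  · rw [interior_Icc]
    exact fun v hv => (hdiff v hv).differentiableAt.differentiableWithinAt
  · rw [interior_Icc]
    intro v hv
    rw [(hdiff v hv).deriv]
    linarith [hderiv v hv]


set_option maxHeartbeats 4000000 in
/-- Harmonic (small amplitude) limit of singular integrals along the orbit:
`∫_{v₂(μ)}^{v₃(μ)} φ(v)/√(μ - W(v)) dv → π φ(v₀) √(2/W''(v₀))` as `μ → μ₀⁺`. -/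
theorem harmonic_limit_of_singular_integral
    (A B : ℝ) (hAB : A < B) (W : ℝ → ℝ)
    (hW : ContDiffOn ℝ (⊤ : ℕ∞) W (Set.Ioo A B))
    (v₀ : ℝ) (hv₀ : v₀ ∈ Set.Ioo A B)
    (hW1 : deriv W v₀ = 0) (hW2 : 0 < deriv (deriv W) v₀)
    (hneg : ∀ v ∈ Set.Ioo A v₀, deriv W v < 0)
    (hpos : ∀ v ∈ Set.Ioo v₀ B, 0 < deriv W v)
    (μbar : ℝ) (hμbar : W v₀ < μbar)
    (v₂ v₃ : ℝ → ℝ)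
    (hv : ∀ μ ∈ Set.Ioo (W v₀) μbar,
      v₂ μ ∈ Set.Ioo A v₀ ∧ v₃ μ ∈ Set.Ioo v₀ B ∧ W (v₂ μ) = μ ∧ W (v₃ μ) = μ) :
    ∀ φ : ℝ → ℝ, ContinuousOn φ (Set.Ioo A B) →
      Filter.Tendsto
        (fun μ => ∫ v in Set.Ioo (v₂ μ) (v₃ μ), φ v / Real.sqrt (μ - W v))
        (nhdsWithin (W v₀) (Set.Ioi (W v₀)))
        (nhds (Real.pi * φ v₀ * Real.sqrt (2 / deriv (deriv W) v₀))) := by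
  intro φ hφ
  have hA := hv₀.1
  have hB := hv₀.2
  set μ₀ := W v₀ with hμ₀def
  set a := deriv (deriv W) v₀ with hadef
  have haa : 0 < a := hW2
  -- basic regularity
  have hWd : DifferentiableOn ℝ W (Ioo A B) := hW.differentiableOn (by simp)
  have hWc : ContinuousOn W (Ioo A B) := hWd.continuousOn
  have hW'c : ContDiffOn ℝ (⊤ : ℕ∞) (deriv W) (Ioo A B) :=
    hW.deriv_of_isOpen isOpen_Ioo (by simp)
  have hW'd : DifferentiableOn ℝ (deriv W) (Ioo A B) := hW'c.differentiableOn (by simp)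
  have hW'' : HasDerivAt (deriv W) a v₀ :=
    (hW'd.differentiableAt (isOpen_Ioo.mem_nhds hv₀)).hasDerivAt
  -- global monotonicity
  have hmonoR : StrictMonoOn W (Ico v₀ B) := by
    apply strictMonoOn_of_deriv_pos (convex_Ico _ _)
      (hWc.mono (fun x hx => ⟨lt_of_lt_of_le hA hx.1, hx.2⟩))
    rw [interior_Ico]; exact hpos
  have hantiL : StrictAntiOn W (Ioc A v₀) := by
    apply strictAntiOn_of_deriv_neg (convex_Ioc _ _)
      (hWc.mono (fun x hx => ⟨hx.1, lt_of_le_of_lt hx.2 hB⟩))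
    rw [interior_Ioc]; exact hneg
  rw [Metric.tendsto_nhdsWithin_nhds]
  intro ε hε
  -- choose η
  obtain ⟨η, hη01, hEη⟩ : ∃ η : ℝ, η ∈ Ioo (0:ℝ) 1 ∧
      η * (Real.pi / Real.sqrt (a * (1 - η) / 2))
      + |φ v₀| * (|Real.pi / Real.sqrt (a * (1 - η) / 2) - Real.pi * Real.sqrt (2 / a)|
        + |2 * Real.arcsin (Real.sqrt ((a * (1 - η) / 2) / (a * (1 + η) / 2)))
            / Real.sqrt (a * (1 - η) / 2) - Real.pi * Real.sqrt (2 / a)|) < ε := by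
    have h1 := (error_tendsto haa (|φ v₀|)).eventually_lt_const hε
    have h2 : ∀ᶠ x : ℝ in nhdsWithin 0 (Ioi 0), x ∈ Ioo (0:ℝ) 1 :=
      Filter.eventually_of_mem (Ioo_mem_nhdsGT one_pos) (fun x hx => hx)
    have h3 := (h1.filter_mono nhdsWithin_le_nhds).and h2
    obtain ⟨η, hη1, hη2⟩ := h3.exists
    exact ⟨η, hη2, hη1⟩
  have hη0 : 0 < η := hη01.1
  have hη1 : η < 1 := hη01.2
  set c₁ := a * (1 - η) / 2 with hc₁def
  set c₂ := a * (1 + η) / 2 with hc₂def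
  have hc₁pos : 0 < c₁ := by rw [hc₁def]; have : 0 < 1 - η := by linarith
                             positivity
  have hc₂pos : 0 < c₂ := by rw [hc₂def]; have : 0 < 1 + η := by linarith
                             positivity
  have hc₁₂ : c₁ ≤ c₂ := by rw [hc₁def, hc₂def]; nlinarith
  -- Taylor-type bounds on a small interval
  obtain ⟨δ, hδpos, hδA, hδd2, hδφ⟩ : ∃ δ, 0 < δ ∧ Icc (v₀ - δ) (v₀ + δ) ⊆ Ioo A B ∧
      (∀ v, |v - v₀| ≤ δ → |deriv W v - a * (v - v₀)| ≤ a * η * |v - v₀|) ∧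
      (∀ v, |v - v₀| ≤ δ → |φ v - φ v₀| ≤ η) := by
    have e1 : ∀ᶠ v in nhds v₀, |deriv W v - a * (v - v₀)| ≤ a * η * |v - v₀| := by
      have h := hW''
      rw [hasDerivAt_iff_isLittleO] at h
      have h2 := (Asymptotics.isLittleO_iff.mp h) (show (0:ℝ) < a * η by positivity)
      filter_upwards [h2] with v hv
      rw [hW1] at hv
      simp only [Real.norm_eq_abs, smul_eq_mul, sub_zero] at hv
      calc |deriv W v - a * (v - v₀)| = |deriv W v - (v - v₀) * a| := by ring_nf
        _ ≤ a * η * |v - v₀| := hv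
    have e2 : ∀ᶠ v in nhds v₀, |φ v - φ v₀| ≤ η := by
      have hc : ContinuousAt φ v₀ := hφ.continuousAt (isOpen_Ioo.mem_nhds hv₀)
      filter_upwards [hc (Metric.closedBall_mem_nhds (φ v₀) hη0)] with v hv
      simp only [Set.mem_preimage, Metric.mem_closedBall, Real.dist_eq] at hv
      exact hv
    have e3 : ∀ᶠ v in nhds v₀, v ∈ Ioo A B := isOpen_Ioo.eventually_mem hv₀
    obtain ⟨δ', hδ'pos, hball⟩ := Metric.eventually_nhds_iff.mp ((e1.and e2).and e3)
    refine ⟨δ' / 2, by positivity, ?_, ?_, ?_⟩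
    · intro x hx
      have hx1 : |x - v₀| ≤ δ' / 2 := by
        rw [abs_le]; exact ⟨by linarith [hx.1], by linarith [hx.2]⟩
      exact (hball (show dist x v₀ < δ' by rw [Real.dist_eq]; linarith [abs_le.mp hx1])).2
    · intro v hvd
      exact ((hball (show dist v v₀ < δ' by rw [Real.dist_eq]; linarith)).1).1
    · intro v hvd
      exact ((hball (show dist v v₀ < δ' by rw [Real.dist_eq]; linarith)).1).2
  -- the four monotonicity facts
  have hsubR : Icc v₀ (v₀ + δ) ⊆ Ioo A B := fun x hx => hδA ⟨by linarith [hx.1], hx.2⟩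
  have hsubL : Icc (v₀ - δ) v₀ ⊆ Ioo A B := fun x hx => hδA ⟨hx.1, by linarith [hx.2]⟩
  have hR1 : MonotoneOn (fun v => W v - c₁ * (v - v₀) ^ 2) (Icc v₀ (v₀ + δ)) := by
    apply mono_aux hWd hsubR
    intro v hvI
    have hs0 : 0 < v - v₀ := by linarith [hvI.1]
    have habs : |v - v₀| = v - v₀ := abs_of_pos hs0
    have h := hδd2 v (by rw [habs]; linarith [hvI.2])
    rw [habs] at h
    have h' := abs_le.mp h
    rw [hc₁def]; nlinarith [h'.1]
  have hR2 : AntitoneOn (fun v => W v - c₂ * (v - v₀) ^ 2) (Icc v₀ (v₀ + δ)) := by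
    apply anti_aux hWd hsubR
    intro v hvI
    have hs0 : 0 < v - v₀ := by linarith [hvI.1]
    have habs : |v - v₀| = v - v₀ := abs_of_pos hs0
    have h := hδd2 v (by rw [habs]; linarith [hvI.2])
    rw [habs] at h
    have h' := abs_le.mp h
    rw [hc₂def]; nlinarith [h'.2]
  have hL1 : AntitoneOn (fun v => W v - c₁ * (v - v₀) ^ 2) (Icc (v₀ - δ) v₀) := by
    apply anti_aux hWd hsubL
    intro v hvI
    have hs0 : v - v₀ < 0 := by linarith [hvI.2]
    have habs : |v - v₀| = -(v - v₀) := abs_of_neg hs0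
    have h := hδd2 v (by rw [habs]; linarith [hvI.1])
    rw [habs] at h
    have h' := abs_le.mp h
    rw [hc₁def]; nlinarith [h'.2]
  have hL2 : MonotoneOn (fun v => W v - c₂ * (v - v₀) ^ 2) (Icc (v₀ - δ) v₀) := by
    apply mono_aux hWd hsubL
    intro v hvI
    have hs0 : v - v₀ < 0 := by linarith [hvI.2]
    have habs : |v - v₀| = -(v - v₀) := abs_of_neg hs0
    have h := hδd2 v (by rw [habs]; linarith [hvI.1])
    rw [habs] at h
    have h' := abs_le.mp h
    rw [hc₂def]; nlinarith [h'.1]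
  -- the threshold
  refine ⟨min (μbar - μ₀) (c₁ * δ ^ 2), by
    apply lt_min (by linarith) (mul_pos hc₁pos (by positivity)), ?_⟩
  intro μ hμIoi hdist
  have hμgt : μ₀ < μ := hμIoi
  rw [Real.dist_eq] at hdist
  have habsμ := abs_lt.mp hdist
  have hμlt1 : μ < μbar := by
    have := min_le_left (μbar - μ₀) (c₁ * δ ^ 2); linarith [habsμ.2]
  have hμlt2 : μ - μ₀ < c₁ * δ ^ 2 := by
    have := min_le_right (μbar - μ₀) (c₁ * δ ^ 2); linarith [habsμ.2]
  obtain ⟨hv2m, hv3m, hW2eq, hW3eq⟩ := hv μ ⟨hμgt, hμlt1⟩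
  -- locations
  have ha₃ : v₃ μ < v₀ + δ := by
    by_contra hcon
    push_neg at hcon
    have h2 : μ₀ + c₁ * δ ^ 2 ≤ W (v₀ + δ) := by
      have := hR1 (left_mem_Icc.2 (by linarith)) (right_mem_Icc.2 (by linarith))
        (by linarith : v₀ ≤ v₀ + δ)
      simp only [sub_self, ne_eq, OfNat.ofNat_ne_zero, not_false_eq_true, zero_pow,
        mul_zero, sub_zero, add_sub_cancel_left] at this
      linarith [this]
    have h1 : W (v₀ + δ) ≤ W (v₃ μ) := by
      rcases eq_or_lt_of_le hcon with h | h
      · rw [h]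
      · exact (hmonoR.monotoneOn) ⟨by linarith, by linarith [hv3m.2]⟩
          ⟨(hv3m.1).le, hv3m.2⟩ hcon
    rw [hW3eq] at h1
    linarith
  have ha₂ : v₀ - δ < v₂ μ := by
    by_contra hcon
    push_neg at hcon
    have h2 : μ₀ + c₁ * δ ^ 2 ≤ W (v₀ - δ) := by
      have := hL1 (left_mem_Icc.2 (by linarith)) (right_mem_Icc.2 (by linarith))
        (by linarith : v₀ - δ ≤ v₀)
      simp only [sub_self, ne_eq, OfNat.ofNat_ne_zero, not_false_eq_true, zero_pow,
        mul_zero, sub_zero] at this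
      have hsq : (v₀ - δ - v₀) ^ 2 = δ ^ 2 := by ring
      rw [hsq] at this
      linarith [this]
    have h1 : W (v₀ - δ) ≤ W (v₂ μ) := by
      rcases eq_or_lt_of_le hcon with h | h
      · rw [← h]
      · have hAδ : A < v₀ - δ := by linarith [hv2m.1]
        exact le_of_lt ((hantiL) ⟨hv2m.1, hv2m.2.le⟩ ⟨hAδ, by linarith⟩ h)
    rw [hW2eq] at h1
    linarith
  have hs₃pos : 0 < v₃ μ - v₀ := by linarith [hv3m.1]
  have hs₂pos : 0 < v₀ - v₂ μ := by linarith [hv2m.2]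
  have hs₃δ : v₃ μ - v₀ < δ := by linarith
  have hs₂δ : v₀ - v₂ μ < δ := by linarith
  have hv₃Icc : v₃ μ ∈ Icc v₀ (v₀ + δ) := ⟨by linarith [hv3m.1], by linarith⟩
  have hv₂Icc : v₂ μ ∈ Icc (v₀ - δ) v₀ := ⟨by linarith, by linarith [hv2m.2]⟩
  have hv₀IccR : v₀ ∈ Icc v₀ (v₀ + δ) := left_mem_Icc.2 (by linarith)
  have hv₀IccL : v₀ ∈ Icc (v₀ - δ) v₀ := right_mem_Icc.2 (by linarith)
  -- right-side hypotheses
  have hε1R : c₁ * (v₃ μ - v₀) ^ 2 ≤ μ - μ₀ := by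
    have key := hR1 hv₀IccR hv₃Icc (by linarith [hv3m.1])
    simp only [sub_self] at key
    rw [hW3eq] at key
    nlinarith [key]
  have hε2R : μ - μ₀ ≤ c₂ * (v₃ μ - v₀) ^ 2 := by
    have key := hR2 hv₀IccR hv₃Icc (by linarith [hv3m.1])
    simp only [sub_self] at key
    rw [hW3eq] at key
    nlinarith [key]
  have hgposR : ∀ s ∈ Ioo 0 (v₃ μ - v₀), 0 < μ - W (s + v₀) := by
    intro s hs
    have h1 : W (s + v₀) < W (v₃ μ) :=
      hmonoR ⟨by linarith [hs.1], by linarith [hs.2, hv3m.2]⟩ ⟨hv3m.1.le, hv3m.2⟩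
        (by linarith [hs.2])
    rw [hW3eq] at h1
    linarith
  have hglowR : ∀ s ∈ Ioo 0 (v₃ μ - v₀), c₁ * ((v₃ μ - v₀) ^ 2 - s ^ 2) ≤ μ - W (s + v₀) := by
    intro s hs
    have key := hR1 (show s + v₀ ∈ Icc v₀ (v₀ + δ) from ⟨by linarith [hs.1], by linarith [hs.2]⟩)
      hv₃Icc (by linarith [hs.2])
    have key' : W (s + v₀) - c₁ * (s + v₀ - v₀) ^ 2
        ≤ W (v₃ μ) - c₁ * (v₃ μ - v₀) ^ 2 := key
    rw [hW3eq] at key'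
    have e : s + v₀ - v₀ = s := by ring
    rw [e] at key'
    nlinarith [key']
  have hgupR : ∀ s ∈ Ioo 0 (v₃ μ - v₀), μ - W (s + v₀) ≤ (μ - μ₀) - c₁ * s ^ 2 := by
    intro s hs
    have key := hR1 hv₀IccR
      (show s + v₀ ∈ Icc v₀ (v₀ + δ) from ⟨by linarith [hs.1], by linarith [hs.2]⟩)
      (by linarith [hs.1])
    have key' : W v₀ - c₁ * (v₀ - v₀) ^ 2
        ≤ W (s + v₀) - c₁ * (s + v₀ - v₀) ^ 2 := key
    have e : s + v₀ - v₀ = s := by ring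
    rw [e] at key'
    have e2 : v₀ - v₀ = (0:ℝ) := by ring
    rw [e2] at key'
    nlinarith [key']
  have hgmR : ContinuousOn (fun s => μ - W (s + v₀)) (Icc 0 (v₃ μ - v₀)) := by
    apply continuousOn_const.sub
    apply hWc.comp (Continuous.continuousOn (by continuity))
    intro s hs
    simp only [mem_Icc] at hs
    show s + v₀ ∈ Ioo A B
    exact hsubR ⟨by linarith [hs.1], by linarith [hs.2]⟩
  have hpqR : ∀ s ∈ Ioo 0 (v₃ μ - v₀), |φ (s + v₀) - φ v₀| ≤ η := by
    intro s hs
    apply hδφ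
    rw [show s + v₀ - v₀ = s by ring, abs_of_pos hs.1]
    linarith [hs.2]
  have hpmR : ContinuousOn (fun s => φ (s + v₀)) (Icc 0 (v₃ μ - v₀)) := by
    apply hφ.comp (Continuous.continuousOn (by continuity))
    intro s hs
    simp only [mem_Icc] at hs
    show s + v₀ ∈ Ioo A B
    exact hsubR ⟨by linarith [hs.1], by linarith [hs.2]⟩
  obtain ⟨hGiR, hPiR, hupR, hlowR, habsR⟩ :=
    side_estimate (g := fun s => μ - W (s + v₀)) (p := fun s => φ (s + v₀)) (q := φ v₀)
      hc₁pos hc₁₂ hs₃pos hε1R hε2R hgposR hglowR hgupR hgmR hη0.le hpqR hpmR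
  -- left-side hypotheses
  have hε1L : c₁ * (v₀ - v₂ μ) ^ 2 ≤ μ - μ₀ := by
    have key := hL1 hv₂Icc hv₀IccL (by linarith [hv2m.2])
    simp only [sub_self] at key
    rw [hW2eq] at key
    nlinarith [key]
  have hε2L : μ - μ₀ ≤ c₂ * (v₀ - v₂ μ) ^ 2 := by
    have key := hL2 hv₂Icc hv₀IccL (by linarith [hv2m.2])
    simp only [sub_self] at key
    rw [hW2eq] at key
    nlinarith [key]
  have hgposL : ∀ s ∈ Ioo 0 (v₀ - v₂ μ), 0 < μ - W (v₀ - s) := by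
    intro s hs
    have h1 : W (v₀ - s) < W (v₂ μ) :=
      hantiL ⟨hv2m.1, hv2m.2.le⟩ ⟨by linarith [hs.2, hv2m.1], by linarith [hs.1]⟩
        (by linarith [hs.2])
    rw [hW2eq] at h1
    linarith
  have hglowL : ∀ s ∈ Ioo 0 (v₀ - v₂ μ), c₁ * ((v₀ - v₂ μ) ^ 2 - s ^ 2) ≤ μ - W (v₀ - s) := by
    intro s hs
    have key := hL1 hv₂Icc
      (show v₀ - s ∈ Icc (v₀ - δ) v₀ from ⟨by linarith [hs.2], by linarith [hs.1]⟩)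
      (by linarith [hs.2])
    have key' : W (v₀ - s) - c₁ * (v₀ - s - v₀) ^ 2
        ≤ W (v₂ μ) - c₁ * (v₂ μ - v₀) ^ 2 := key
    rw [hW2eq] at key'
    have e : v₀ - s - v₀ = -s := by ring
    rw [e] at key'
    nlinarith [key']
  have hgupL : ∀ s ∈ Ioo 0 (v₀ - v₂ μ), μ - W (v₀ - s) ≤ (μ - μ₀) - c₁ * s ^ 2 := by
    intro s hs
    have key := hL1 (show v₀ - s ∈ Icc (v₀ - δ) v₀ from ⟨by linarith [hs.2], by linarith [hs.1]⟩)
      hv₀IccL (by linarith [hs.1])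
    have key' : W v₀ - c₁ * (v₀ - v₀) ^ 2
        ≤ W (v₀ - s) - c₁ * (v₀ - s - v₀) ^ 2 := key
    have e : v₀ - s - v₀ = -s := by ring
    rw [e] at key'
    have e2 : v₀ - v₀ = (0:ℝ) := by ring
    rw [e2] at key'
    nlinarith [key']
  have hgmL : ContinuousOn (fun s => μ - W (v₀ - s)) (Icc 0 (v₀ - v₂ μ)) := by
    apply continuousOn_const.sub
    apply hWc.comp (Continuous.continuousOn (by continuity))
    intro s hs
    simp only [mem_Icc] at hs
    show v₀ - s ∈ Ioo A B
    exact hsubL ⟨by linarith [hs.2], by linarith [hs.1]⟩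
  have hpqL : ∀ s ∈ Ioo 0 (v₀ - v₂ μ), |φ (v₀ - s) - φ v₀| ≤ η := by
    intro s hs
    apply hδφ
    rw [show v₀ - s - v₀ = -s by ring, abs_neg, abs_of_pos hs.1]
    linarith [hs.2]
  have hpmL : ContinuousOn (fun s => φ (v₀ - s)) (Icc 0 (v₀ - v₂ μ)) := by
    apply hφ.comp (Continuous.continuousOn (by continuity))
    intro s hs
    simp only [mem_Icc] at hs
    show v₀ - s ∈ Ioo A B
    exact hsubL ⟨by linarith [hs.2], by linarith [hs.1]⟩
  obtain ⟨hGiL, hPiL, hupL, hlowL, habsL⟩ :=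
    side_estimate (g := fun s => μ - W (v₀ - s)) (p := fun s => φ (v₀ - s)) (q := φ v₀)
      hc₁pos hc₁₂ hs₂pos hε1L hε2L hgposL hglowL hgupL hgmL hη0.le hpqL hpmL
  -- transfer of integrals from (v₂ μ, v₃ μ) to the two normalized sides
  have transfer : ∀ f : ℝ → ℝ, IntegrableOn (fun s => f (v₀ - s)) (Ioo 0 (v₀ - v₂ μ)) →
      IntegrableOn (fun s => f (s + v₀)) (Ioo 0 (v₃ μ - v₀)) →
      (∫ v in Ioo (v₂ μ) (v₃ μ), f v)
        = (∫ s in Ioo 0 (v₀ - v₂ μ), f (v₀ - s)) + (∫ s in Ioo 0 (v₃ μ - v₀), f (s + v₀)) := by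
    intro f hIntL hIntR
    have hIL : IntervalIntegrable (fun s => f (v₀ - s)) volume 0 (v₀ - v₂ μ) := by
      rw [intervalIntegrable_iff_integrableOn_Ioo_of_le hs₂pos.le]; exact hIntL
    have hIR : IntervalIntegrable (fun s => f (s + v₀)) volume 0 (v₃ μ - v₀) := by
      rw [intervalIntegrable_iff_integrableOn_Ioo_of_le hs₃pos.le]; exact hIntR
    have hL' : IntervalIntegrable f volume (v₂ μ) v₀ := by
      have h := hIL.comp_sub_left v₀
      simp only [sub_sub_cancel, sub_zero] at h
      exact h.symm
    have hR' : IntervalIntegrable f volume v₀ (v₃ μ) := by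
      have h := hIR.comp_sub_right v₀
      simp only [sub_add_cancel, zero_add] at h
      exact h
    have e1 : (∫ s in (0:ℝ)..(v₀ - v₂ μ), f (v₀ - s)) = ∫ v in (v₂ μ)..v₀, f v := by
      rw [intervalIntegral.integral_comp_sub_left f v₀]
      simp only [sub_sub_cancel, sub_zero]
    have e2 : (∫ s in (0:ℝ)..(v₃ μ - v₀), f (s + v₀)) = ∫ v in v₀..(v₃ μ), f v := by
      rw [intervalIntegral.integral_comp_add_right f v₀]
      simp only [sub_add_cancel, zero_add]
    calc (∫ v in Ioo (v₂ μ) (v₃ μ), f v) = ∫ v in Ioc (v₂ μ) (v₃ μ), f v :=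
          integral_Ioc_eq_integral_Ioo.symm
      _ = ∫ v in (v₂ μ)..(v₃ μ), f v :=
          (intervalIntegral.integral_of_le (by linarith [hv2m.2, hv3m.1])).symm
      _ = (∫ v in (v₂ μ)..v₀, f v) + ∫ v in v₀..(v₃ μ), f v :=
          (intervalIntegral.integral_add_adjacent_intervals hL' hR').symm
      _ = (∫ s in (0:ℝ)..(v₀ - v₂ μ), f (v₀ - s)) + ∫ s in (0:ℝ)..(v₃ μ - v₀), f (s + v₀) := by
          rw [e1, e2]
      _ = (∫ s in Ioo 0 (v₀ - v₂ μ), f (v₀ - s)) + ∫ s in Ioo 0 (v₃ μ - v₀), f (s + v₀) := by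
          rw [intervalIntegral.integral_of_le hs₂pos.le, intervalIntegral.integral_of_le hs₃pos.le,
            integral_Ioc_eq_integral_Ioo, integral_Ioc_eq_integral_Ioo]
  have hFeq : (∫ v in Ioo (v₂ μ) (v₃ μ), φ v / Real.sqrt (μ - W v))
      = (∫ s in Ioo 0 (v₀ - v₂ μ), φ (v₀ - s) / Real.sqrt (μ - W (v₀ - s)))
      + (∫ s in Ioo 0 (v₃ μ - v₀), φ (s + v₀) / Real.sqrt (μ - W (s + v₀))) :=
    transfer (fun v => φ v / Real.sqrt (μ - W v)) hPiL hPiR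
  -- final arithmetic
  rw [Real.dist_eq, hFeq]
  set FL := ∫ s in Ioo 0 (v₀ - v₂ μ), φ (v₀ - s) / Real.sqrt (μ - W (v₀ - s)) with hFL
  set FR := ∫ s in Ioo 0 (v₃ μ - v₀), φ (s + v₀) / Real.sqrt (μ - W (s + v₀)) with hFR
  set IL := ∫ s in Ioo 0 (v₀ - v₂ μ), 1 / Real.sqrt (μ - W (v₀ - s)) with hIL
  set IR := ∫ s in Ioo 0 (v₃ μ - v₀), 1 / Real.sqrt (μ - W (s + v₀)) with hIR
  set T := Real.pi * Real.sqrt (2 / a) with hT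
  set AR := Real.arcsin (Real.sqrt (c₁ / c₂)) with hAR
  have hsc₁ : 0 < Real.sqrt c₁ := Real.sqrt_pos.2 hc₁pos
  have h2up : IL + IR ≤ Real.pi / Real.sqrt c₁ := by
    have hhalf : Real.pi / (2 * Real.sqrt c₁) + Real.pi / (2 * Real.sqrt c₁)
        = Real.pi / Real.sqrt c₁ := by field_simp; ring
    linarith [hupL, hupR]
  have h2low : 2 * AR / Real.sqrt c₁ ≤ IL + IR := by
    have hhalf : AR / Real.sqrt c₁ + AR / Real.sqrt c₁ = 2 * AR / Real.sqrt c₁ := by ring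
    linarith [hlowL, hlowR]
  have hstep1 : |(FL + FR) - φ v₀ * (IL + IR)| ≤ η * (IL + IR) := by
    have e : (FL + FR) - φ v₀ * (IL + IR) = (FL - φ v₀ * IL) + (FR - φ v₀ * IR) := by ring
    rw [e]
    calc |(FL - φ v₀ * IL) + (FR - φ v₀ * IR)| ≤ |FL - φ v₀ * IL| + |FR - φ v₀ * IR| :=
          abs_add_le _ _
      _ ≤ η * IL + η * IR := add_le_add habsL habsR
      _ = η * (IL + IR) := by ring
  have hstep2 : |(IL + IR) - T| ≤ |Real.pi / Real.sqrt c₁ - T| + |2 * AR / Real.sqrt c₁ - T| := by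
    rw [abs_le]
    constructor
    · have h1 := neg_abs_le (2 * AR / Real.sqrt c₁ - T)
      have h2 := abs_nonneg (Real.pi / Real.sqrt c₁ - T)
      linarith
    · have h1 := le_abs_self (Real.pi / Real.sqrt c₁ - T)
      have h2 := abs_nonneg (2 * AR / Real.sqrt c₁ - T)
      linarith
  have hfinal : |FL + FR - Real.pi * φ v₀ * Real.sqrt (2 / a)|
      ≤ η * (Real.pi / Real.sqrt c₁)
        + |φ v₀| * (|Real.pi / Real.sqrt c₁ - T| + |2 * AR / Real.sqrt c₁ - T|) := by
    have e : FL + FR - Real.pi * φ v₀ * Real.sqrt (2 / a)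
        = ((FL + FR) - φ v₀ * (IL + IR)) + φ v₀ * ((IL + IR) - T) := by
      rw [hT]; ring
    rw [e]
    calc |((FL + FR) - φ v₀ * (IL + IR)) + φ v₀ * ((IL + IR) - T)|
        ≤ |(FL + FR) - φ v₀ * (IL + IR)| + |φ v₀ * ((IL + IR) - T)| := abs_add_le _ _
      _ = |(FL + FR) - φ v₀ * (IL + IR)| + |φ v₀| * |(IL + IR) - T| := by rw [abs_mul]
      _ ≤ η * (IL + IR) + |φ v₀| * (|Real.pi / Real.sqrt c₁ - T| + |2 * AR / Real.sqrt c₁ - T|) := by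
          apply add_le_add hstep1
          exact mul_le_mul_of_nonneg_left hstep2 (abs_nonneg _)
      _ ≤ η * (Real.pi / Real.sqrt c₁)
          + |φ v₀| * (|Real.pi / Real.sqrt c₁ - T| + |2 * AR / Real.sqrt c₁ - T|) := by
          refine add_le_add ?_ le_rfl
          exact mul_le_mul_of_nonneg_left h2up hη0.le
  exact lt_of_le_of_lt hfinal hEη
end

section
/- In the harmonic (small amplitude) setting, let κ : (A,B) → ℝ be infinitely differentiable and positive, and define the action Θ(μ) := 2·∫_{v₂(μ)}^{v₃(μ)} √(2κ(v)(μ − W(v))) dv for μ ∈ (μ₀, μ̄), and the harmonic period Ξ₀ := 2π·√(κ(v₀)/W''(v₀)). Then there exist μ₁ ∈ (μ₀, μ̄) and C > 0 such that for all μ ∈ (μ₀, μ₁): |Θ(μ) − Ξ₀·(μ − μ₀)| ≤ C·(μ − μ₀)². -/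
open MeasureTheory Set intervalIntegral Real


/-- Differentiation under the integral sign for `v ↦ ∫ t in 0..1, c t * f (v₀ + t*(v-v₀))`. -/
lemma param_hasDerivAt {U : Set ℝ} (hU : IsOpen U) (hUc : Convex ℝ U)
    (c : ℝ → ℝ) (hc : Continuous c) (f : ℝ → ℝ) (hf : ContDiffOn ℝ 1 f U)
    {v₀ : ℝ} (hv₀ : v₀ ∈ U) {v : ℝ} (hv : v ∈ U) :
    HasDerivAt (fun x => ∫ t in (0:ℝ)..1, c t * f (v₀ + t*(x-v₀)))
      (∫ t in (0:ℝ)..1, (c t * t) * deriv f (v₀ + t*(v-v₀))) v := by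
  obtain ⟨ε, hε, hball⟩ : ∃ ε > 0, Metric.ball v ε ⊆ U := Metric.isOpen_iff.1 hU v hv
  set K : Set ℝ := Icc (min v₀ (v - ε/2)) (max v₀ (v + ε/2)) with hK
  have hKU : K ⊆ U := by
    have h1 : min v₀ (v - ε/2) ∈ U := by
      rcases min_cases v₀ (v - ε/2) with ⟨h, _⟩ | ⟨h, _⟩
      · rw [h]; exact hv₀
      · rw [h]; refine hball (Metric.mem_ball.2 ?_)
        rw [Real.dist_eq, show v - ε/2 - v = -(ε/2) by ring, abs_neg, abs_of_pos (by linarith)]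
        linarith
    have h2 : max v₀ (v + ε/2) ∈ U := by
      rcases max_cases v₀ (v + ε/2) with ⟨h, _⟩ | ⟨h, _⟩
      · rw [h]; exact hv₀
      · rw [h]; refine hball (Metric.mem_ball.2 ?_)
        rw [Real.dist_eq, show v + ε/2 - v = ε/2 by ring, abs_of_pos (by linarith)]
        linarith
    have := hUc.ordConnected.out h1 h2
    exact this
  have hseg : ∀ x ∈ Metric.ball v (ε/2), ∀ t ∈ Set.Icc (0:ℝ) 1, v₀ + t*(x-v₀) ∈ K := by
    intro x hx t ht
    have hxd : |x - v| < ε/2 := by simpa [Real.dist_eq] using hx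
    have hxl : v - ε/2 ≤ x := by cases abs_lt.1 hxd; linarith
    have hxr : x ≤ v + ε/2 := by cases abs_lt.1 hxd; linarith
    have h2 : v₀ + t*(x-v₀) ∈ Set.Icc (min v₀ x) (max v₀ x) := by
      rcases le_total v₀ x with h | h
      · constructor
        · have : 0 ≤ t*(x-v₀) := mul_nonneg ht.1 (by linarith)
          simp only [min_le_iff]; left; linarith
        · have : t*(x-v₀) ≤ 1*(x-v₀) := mul_le_mul_of_nonneg_right ht.2 (by linarith)
          simp only [le_max_iff]; right; linarith
      · constructor
        · have : (1:ℝ)*(x-v₀) ≤ t*(x-v₀) := by nlinarith [ht.1, ht.2]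
          simp only [min_le_iff]; right; linarith
        · have : t*(x-v₀) ≤ 0 := mul_nonpos_of_nonneg_of_nonpos ht.1 (by linarith)
          simp only [le_max_iff]; left; linarith
    refine ⟨le_trans (min_le_min le_rfl hxl) h2.1, le_trans h2.2 (max_le_max le_rfl hxr)⟩
  have hdf : ContinuousOn (deriv f) U := hf.continuousOn_deriv_of_isOpen hU le_rfl
  obtain ⟨Cf, hCf⟩ := isCompact_Icc.exists_bound_of_continuousOn (hdf.mono hKU)
  obtain ⟨Cc, hCc⟩ := isCompact_Icc.exists_bound_of_continuousOn
    (hc.continuousOn : ContinuousOn c (Icc (0:ℝ) 1))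
  have hCf0 : 0 ≤ Cf := le_trans (norm_nonneg _) (hCf _ (hseg v (Metric.mem_ball_self (by linarith)) 0 ⟨le_rfl, zero_le_one⟩))
  have hCc0 : 0 ≤ Cc := le_trans (norm_nonneg _) (hCc 0 ⟨le_rfl, zero_le_one⟩)
  -- continuity in t facts
  have hmem : ∀ x ∈ Metric.ball v (ε/2), ContinuousOn (fun t => c t * f (v₀ + t*(x-v₀))) (Icc (0:ℝ) 1) := by
    intro x hx
    refine hc.continuousOn.mul ?_
    refine (hf.continuousOn.mono hKU).comp (by fun_prop) ?_
    intro t ht; exact hseg x hx t ht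
  have hmemD : ∀ x ∈ Metric.ball v (ε/2), ContinuousOn (fun t => (c t * t) * deriv f (v₀ + t*(x-v₀))) (Icc (0:ℝ) 1) := by
    intro x hx
    refine (hc.continuousOn.mul continuousOn_id).mul ?_
    refine (hdf.mono hKU).comp (by fun_prop) ?_
    intro t ht; exact hseg x hx t ht
  have huIcc : Set.uIcc (0:ℝ) 1 = Icc 0 1 := uIcc_of_le zero_le_one
  have huIoc : Set.uIoc (0:ℝ) 1 ⊆ Icc 0 1 := by rw [Set.uIoc_of_le zero_le_one]; exact Ioc_subset_Icc_self
  have hvball : v ∈ Metric.ball v (ε/2) := Metric.mem_ball_self (by linarith)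
  have key := intervalIntegral.hasDerivAt_integral_of_dominated_loc_of_deriv_le
    (F := fun x t => c t * f (v₀ + t*(x-v₀)))
    (F' := fun x t => (c t * t) * deriv f (v₀ + t*(x-v₀)))
    (x₀ := v) (a := 0) (b := 1) (μ := volume) (bound := fun _ => Cc * Cf)
    (Metric.ball_mem_nhds v (show (0:ℝ) < ε/2 by linarith))
    ?_ ?_ ?_ ?_ ?_ ?_
  · exact key.2
  · filter_upwards [Metric.ball_mem_nhds v (show (0:ℝ) < ε/2 by linarith)] with x hx
    exact ((hmem x hx).mono huIoc).aestronglyMeasurable measurableSet_uIoc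
  · exact ContinuousOn.intervalIntegrable (by rw [huIcc]; exact hmem v hvball)
  · exact ((hmemD v hvball).mono huIoc).aestronglyMeasurable measurableSet_uIoc
  · refine Filter.Eventually.of_forall (fun t => ?_)
    intro ht x hx
    have hm := hseg x hx t (huIoc ht)
    have : ‖c t * t * deriv f (v₀ + t*(x-v₀))‖ = ‖c t‖ * ‖t‖ * ‖deriv f (v₀ + t*(x-v₀))‖ := by
      simp [norm_mul]
    rw [this]
    have h1 : ‖c t‖ ≤ Cc := hCc t (huIoc ht)
    have h2 : ‖deriv f (v₀ + t*(x-v₀))‖ ≤ Cf := hCf _ hm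
    have h3 : ‖t‖ ≤ 1 := by
      have := huIoc ht; rw [Real.norm_eq_abs, abs_le]; exact ⟨by linarith [this.1], this.2⟩
    calc ‖c t‖ * ‖t‖ * ‖deriv f (v₀ + t*(x-v₀))‖ ≤ Cc * 1 * Cf := by
          apply mul_le_mul _ h2 (norm_nonneg _) (by positivity)
          exact mul_le_mul h1 h3 (norm_nonneg _) hCc0
      _ = Cc * Cf := by ring
  · exact intervalIntegrable_const
  · refine Filter.Eventually.of_forall (fun t => ?_)
    intro ht x hx
    have hm := hseg x hx t (huIoc ht)
    have haff : HasDerivAt (fun x : ℝ => v₀ + t*(x-v₀)) t x := by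
      simpa using (((hasDerivAt_id x).sub_const v₀).const_mul t).const_add v₀
    have hfd : HasDerivAt f (deriv f (v₀ + t*(x-v₀))) (v₀ + t*(x-v₀)) := by
      have : DifferentiableAt ℝ f (v₀ + t*(x-v₀)) :=
        (hf.differentiableOn (by norm_num)).differentiableAt (hU.mem_nhds (hKU hm))
      exact this.hasDerivAt
    have := (hfd.comp x haff).const_mul (c t)
    refine this.congr_deriv ?_
    ring

lemma contDiffOn_of_chain {U : Set ℝ} (hU : IsOpen U) {f g : ℝ → ℝ} {n : ℕ}
    (h : ∀ v ∈ U, HasDerivAt f (g v) v) (hg : ContDiffOn ℝ n g U) :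
    ContDiffOn ℝ (n+1) f U := by
  rw [contDiffOn_succ_iff_deriv_of_isOpen hU]
  refine ⟨fun v hv => ((h v hv).differentiableAt).differentiableWithinAt, ?_, ?_⟩
  · intro hn; exact absurd hn (by exact_mod_cast (by simp : (n : WithTop ℕ∞) ≠ ⊤))
  · exact hg.congr fun v hv => (h v hv).deriv

/-- Quadratic Taylor bound from a `C²` function on an open set containing `[-r,r]`. -/
lemma taylor_quadratic_bound {h : ℝ → ℝ} {r : ℝ} {U : Set ℝ} (hU : IsOpen U)
    (hIcc : Icc (-r) r ⊆ U) (hh : ContDiffOn ℝ 2 h U) (hr : 0 < r) :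
    ∃ M ≥ (0:ℝ), ∀ y ∈ Icc (-r) r, |h y - h 0 - deriv h 0 * y| ≤ M * y^2 := by
  have h0 : (0:ℝ) ∈ Icc (-r) r := ⟨by linarith, by linarith⟩
  have hd1 : ContDiffOn ℝ 1 (deriv h) U := hh.deriv_of_isOpen hU (by norm_num)
  have hd2 : ContinuousOn (deriv (deriv h)) U := hd1.continuousOn_deriv_of_isOpen hU le_rfl
  obtain ⟨L, hL⟩ := isCompact_Icc.exists_bound_of_continuousOn (hd2.mono hIcc)
  have hL0 : 0 ≤ L := le_trans (norm_nonneg _) (hL 0 h0)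
  refine ⟨L, hL0, fun y hy => ?_⟩
  have huIcc : uIcc (0:ℝ) y ⊆ Icc (-r) r := by
    rw [uIcc]
    apply Icc_subset_Icc
    · simp only [le_inf_iff]; exact ⟨by linarith, hy.1⟩
    · simp only [sup_le_iff]; exact ⟨by linarith, hy.2⟩
  -- first: |deriv h t - deriv h 0| ≤ L * |t|
  have step1 : ∀ t ∈ Icc (-r) r, |deriv h t - deriv h 0| ≤ L * |t| := by
    intro t ht
    have hsub : uIcc (0:ℝ) t ⊆ Icc (-r) r := by
      rw [uIcc]
      apply Icc_subset_Icc
      · simp only [le_inf_iff]; exact ⟨by linarith, ht.1⟩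
      · simp only [sup_le_iff]; exact ⟨by linarith, ht.2⟩
    have hftc : deriv h t - deriv h 0 = ∫ u in (0:ℝ)..t, deriv (deriv h) u := by
      symm
      apply intervalIntegral.integral_eq_sub_of_hasDerivAt
      · intro u hu
        have huU : u ∈ U := hIcc (hsub hu)
        exact ((hd1.differentiableOn (by norm_num)).differentiableAt (hU.mem_nhds huU)).hasDerivAt
      · exact ContinuousOn.intervalIntegrable ((hd2.mono hIcc).mono hsub)
    rw [hftc]
    have := intervalIntegral.norm_integral_le_of_norm_le_const
      (C := L) (f := deriv (deriv h)) (a := 0) (b := t) ?_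
    · simpa using this
    · intro u hu
      exact hL u (hsub (uIoc_subset_uIcc hu))
  -- second integral
  have hint1 : IntervalIntegrable (deriv h) volume 0 y :=
    ContinuousOn.intervalIntegrable (hd1.continuousOn.mono (fun x hx => hIcc (huIcc hx)))
  have hftc2 : h y - h 0 - deriv h 0 * y = ∫ t in (0:ℝ)..y, (deriv h t - deriv h 0) := by
    have heq : ∫ t in (0:ℝ)..y, (deriv h t - deriv h 0) =
        (∫ t in (0:ℝ)..y, deriv h t) - deriv h 0 * y := by
      rw [intervalIntegral.integral_sub hint1 intervalIntegrable_const,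
        intervalIntegral.integral_const, smul_eq_mul, sub_zero]
      ring
    rw [heq]
    have : ∫ t in (0:ℝ)..y, deriv h t = h y - h 0 := by
      apply intervalIntegral.integral_eq_sub_of_hasDerivAt
      · intro u hu
        have huU : u ∈ U := hIcc (huIcc hu)
        exact ((hh.differentiableOn (by norm_num)).differentiableAt (hU.mem_nhds huU)).hasDerivAt
      · exact hint1
    rw [this]
  rw [hftc2]
  have := intervalIntegral.norm_integral_le_of_norm_le_const
    (C := L * |y|) (f := fun t => deriv h t - deriv h 0) (a := 0) (b := y) ?_
  · calc |∫ t in (0:ℝ)..y, (deriv h t - deriv h 0)| ≤ L * |y| * |y - 0| := by simpa using this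
      _ = L * y^2 := by rw [sub_zero]; rw [show L * |y| * |y| = L * (|y| * |y|) by ring, abs_mul_abs_self]; ring
  · intro u hu
    have huI : u ∈ uIcc (0:ℝ) y := uIoc_subset_uIcc hu
    have h1 := step1 u (huIcc huI)
    have h2 : |u| ≤ |y| := by
      rcases le_total 0 y with h | h
      · rw [uIcc_of_le h] at huI; rw [abs_of_nonneg huI.1, abs_of_nonneg h]; exact huI.2
      · rw [uIcc_of_ge h] at huI; rw [abs_of_nonpos huI.2, abs_of_nonpos h]; linarith [huI.1]
    calc ‖deriv h u - deriv h 0‖ ≤ L * |u| := h1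
      _ ≤ L * |y| := by nlinarith [abs_nonneg u]

-- reuse earlier lemmas by axiomatizing here for speed; final file will have real proofs
set_option maxHeartbeats 1000000 in
lemma Q_exists {A B : ℝ} {W : ℝ → ℝ} (hW : ContDiffOn ℝ (⊤:ℕ∞) W (Set.Ioo A B))
    {v₀ : ℝ} (hv₀ : v₀ ∈ Set.Ioo A B) (hW1 : deriv W v₀ = 0) :
    ∃ Q : ℝ → ℝ, ContDiffOn ℝ 3 Q (Set.Ioo A B) ∧ Q v₀ = deriv (deriv W) v₀ / 2 ∧
      ∀ v ∈ Set.Ioo A B, W v = W v₀ + (v - v₀)^2 * Q v := by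
  set U := Set.Ioo A B with hUdef
  have hUo : IsOpen U := isOpen_Ioo
  have hUc : Convex ℝ U := convex_Ioo A B
  have htop : ∀ {f : ℝ → ℝ}, ContDiffOn ℝ (⊤:ℕ∞) f U → ContDiffOn ℝ (⊤:ℕ∞) (deriv f) U :=
    fun hf => hf.deriv_of_isOpen hUo (by exact_mod_cast le_top)
  have hone : ∀ {f : ℝ → ℝ}, ContDiffOn ℝ (⊤:ℕ∞) f U → ContDiffOn ℝ 1 f U :=
    fun hf => hf.of_le (by exact_mod_cast le_top)
  set W1 := deriv W with hW1d
  set W2 := deriv W1 with hW2d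
  set W3 := deriv W2 with hW3d
  set W4 := deriv W3 with hW4d
  set W5 := deriv W4 with hW5d
  have hW1c : ContDiffOn ℝ (⊤:ℕ∞) W1 U := htop hW
  have hW2c : ContDiffOn ℝ (⊤:ℕ∞) W2 U := htop hW1c
  have hW3c : ContDiffOn ℝ (⊤:ℕ∞) W3 U := htop hW2c
  have hW4c : ContDiffOn ℝ (⊤:ℕ∞) W4 U := htop hW3c
  have hW5c : ContDiffOn ℝ (⊤:ℕ∞) W5 U := htop hW4c
  set Q : ℝ → ℝ := fun v => ∫ t in (0:ℝ)..1, (1-t) * W2 (v₀ + t*(v-v₀)) with hQdef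
  set Q1 : ℝ → ℝ := fun v => ∫ t in (0:ℝ)..1, ((1-t)*t) * W3 (v₀ + t*(v-v₀)) with hQ1def
  set Q2 : ℝ → ℝ := fun v => ∫ t in (0:ℝ)..1, (((1-t)*t)*t) * W4 (v₀ + t*(v-v₀)) with hQ2def
  set Q3 : ℝ → ℝ := fun v => ∫ t in (0:ℝ)..1, ((((1-t)*t)*t)*t) * W5 (v₀ + t*(v-v₀)) with hQ3def
  have hD0 : ∀ v ∈ U, HasDerivAt Q (Q1 v) v := fun v hv =>
    param_hasDerivAt hUo hUc (fun t => 1-t) (by fun_prop) W2 (hone hW2c) hv₀ hv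
  have hD1 : ∀ v ∈ U, HasDerivAt Q1 (Q2 v) v := fun v hv =>
    param_hasDerivAt hUo hUc (fun t => (1-t)*t) (by fun_prop) W3 (hone hW3c) hv₀ hv
  have hD2 : ∀ v ∈ U, HasDerivAt Q2 (Q3 v) v := fun v hv =>
    param_hasDerivAt hUo hUc (fun t => ((1-t)*t)*t) (by fun_prop) W4 (hone hW4c) hv₀ hv
  have hD3 : ∀ v ∈ U, HasDerivAt Q3
      (∫ t in (0:ℝ)..1, (((((1-t)*t)*t)*t)*t) * deriv W5 (v₀ + t*(v-v₀))) v := fun v hv =>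
    param_hasDerivAt hUo hUc (fun t => (((1-t)*t)*t)*t) (by fun_prop) W5 (hone hW5c) hv₀ hv
  have hQ3cont : ContDiffOn ℝ 0 Q3 U := by
    rw [contDiffOn_zero]
    exact fun v hv => ((hD3 v hv).continuousAt).continuousWithinAt
  have hQ2c : ContDiffOn ℝ 1 Q2 U := by
    have := contDiffOn_of_chain hUo hD2 hQ3cont; exact_mod_cast this
  have hQ1c : ContDiffOn ℝ 2 Q1 U := by
    have := contDiffOn_of_chain hUo hD1 hQ2c; exact_mod_cast this
  have hQc : ContDiffOn ℝ 3 Q U := by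
    have := contDiffOn_of_chain hUo hD0 hQ1c; exact_mod_cast this
  refine ⟨Q, hQc, ?_, ?_⟩
  · have : Q v₀ = ∫ t in (0:ℝ)..1, (1-t) * W2 v₀ := by
      simp [hQdef]
    rw [this]
    have : (fun t : ℝ => (1-t) * W2 v₀) = fun t : ℝ => W2 v₀ * (1-t) := by
      funext t; ring
    rw [this, intervalIntegral.integral_const_mul]
    have : ∫ t in (0:ℝ)..1, (1-t) = 1/2 := by
      rw [intervalIntegral.integral_sub intervalIntegrable_const
        intervalIntegral.intervalIntegrable_id, integral_id, intervalIntegral.integral_const]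
      norm_num
    rw [this]; rw [hW2d, hW1d]; ring
  · intro v hv
    set x := v - v₀ with hxdef
    have hseg : ∀ t ∈ Set.Icc (0:ℝ) 1, v₀ + t*x ∈ U := by
      intro t ht
      have := hUc.add_smul_sub_mem hv₀ hv ht
      simpa using this
    set G : ℝ → ℝ := fun t => (1-t) * (x * W1 (v₀ + t*x)) + W (v₀ + t*x) with hGdef
    have hG : ∀ t ∈ Set.uIcc (0:ℝ) 1, HasDerivAt G ((1-t) * (x^2 * W2 (v₀ + t*x))) t := by
      intro t ht
      rw [Set.uIcc_of_le zero_le_one] at ht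
      have hp : v₀ + t*x ∈ U := hseg t ht
      have haff : HasDerivAt (fun t : ℝ => v₀ + t*x) x t := by
        simpa using ((hasDerivAt_id t).mul_const x).const_add v₀
      have hWd : HasDerivAt W (W1 (v₀ + t*x)) (v₀ + t*x) :=
        ((hW.differentiableOn (by simp)).differentiableAt
          (hUo.mem_nhds hp)).hasDerivAt
      have hW1dd : HasDerivAt W1 (W2 (v₀ + t*x)) (v₀ + t*x) :=
        ((hW1c.differentiableOn (by simp)).differentiableAt
          (hUo.mem_nhds hp)).hasDerivAt
      have h1 : HasDerivAt (fun t : ℝ => W (v₀ + t*x)) (W1 (v₀ + t*x) * x) t := by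
        have := hWd.comp t haff
        exact this
      have h2 : HasDerivAt (fun t : ℝ => W1 (v₀ + t*x)) (W2 (v₀ + t*x) * x) t := by
        have := hW1dd.comp t haff
        exact this
      have h3 : HasDerivAt (fun t : ℝ => x * W1 (v₀ + t*x)) (x * (W2 (v₀ + t*x) * x)) t :=
        h2.const_mul x
      have h4 : HasDerivAt (fun t : ℝ => 1 - t) (-1) t := by
        simpa using (hasDerivAt_id t).const_sub 1
      have h5 := (h4.mul h3).add h1
      refine h5.congr_deriv ?_
      ring
    have hint : IntervalIntegrable (fun t => (1-t) * (x^2 * W2 (v₀ + t*x))) volume 0 1 := by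
      apply ContinuousOn.intervalIntegrable
      rw [Set.uIcc_of_le zero_le_one]
      refine ContinuousOn.mul (by fun_prop) (ContinuousOn.mul continuousOn_const ?_)
      exact (hW2c.continuousOn).comp (by fun_prop) (fun t ht => hseg t ht)
    have hftc := intervalIntegral.integral_eq_sub_of_hasDerivAt hG hint
    have hG1 : G 1 = W v := by simp [hGdef, hxdef]
    have hG0 : G 0 = x * W1 v₀ + W v₀ := by simp [hGdef]
    have hz : deriv W v₀ = 0 := hW1
    rw [hG1, hG0, hW1d, hz, mul_zero, zero_add] at hftc
    have hQx : ∫ t in (0:ℝ)..1, (1-t) * (x^2 * W2 (v₀ + t*x)) = x^2 * Q v := by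
      rw [hQdef]
      simp only []
      rw [← intervalIntegral.integral_const_mul]
      congr 1; funext t; ring
    rw [hQx] at hftc
    rw [← hxdef] at *
    linarith [hftc]

lemma integral_sqrt_parabola {s : ℝ} (hs : 0 < s) :
    ∫ y in (-s)..s, Real.sqrt (s^2 - y^2) = π/2 * s^2 := by
  have h1 : ∀ x : ℝ, Real.sqrt (s^2 - (s*x)^2) = s * Real.sqrt (1 - x^2) := by
    intro x
    rw [show s^2 - (s*x)^2 = s^2*(1-x^2) by ring, Real.sqrt_mul (sq_nonneg s),
      Real.sqrt_sq hs.le]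
  have h3 := intervalIntegral.integral_comp_mul_left
    (a := (-1:ℝ)) (b := 1) (fun y => Real.sqrt (s^2 - y^2)) hs.ne'
  simp only [mul_neg_one, mul_one] at h3
  have h2 : ∫ x in (-1:ℝ)..1, Real.sqrt (s^2 - (s*x)^2) = s * (π/2) := by
    simp_rw [h1]
    rw [intervalIntegral.integral_const_mul, integral_sqrt_one_sub_sq]
  rw [h2] at h3
  have := h3.symm
  rw [smul_eq_mul] at this
  field_simp at this
  nlinarith [this]

lemma integral_odd_sqrt_zero (s : ℝ) :
    ∫ y in (-s)..s, y * Real.sqrt (s^2 - y^2) = 0 := by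
  have h := intervalIntegral.integral_comp_neg (a := (-s:ℝ)) (b := s)
    (fun y => y * Real.sqrt (s^2 - y^2))
  simp only [neg_neg] at h
  have h2 : (fun x : ℝ => (-x) * Real.sqrt (s^2 - (-x)^2)) =
      fun x : ℝ => -(x * Real.sqrt (s^2 - x^2)) := by
    funext x; rw [neg_sq]; ring
  rw [h2, intervalIntegral.integral_neg] at h
  linarith [h]

lemma core_estimate {h : ℝ → ℝ} {r M c₀ c₁ : ℝ} (hr : 0 < r) (hM : 0 ≤ M)
    (hcont : ContinuousOn h (Icc (-r) r))
    (hTay : ∀ y ∈ Icc (-r) r, |h y - c₀ - c₁ * y| ≤ M * y^2)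
    {s : ℝ} (hs : 0 < s) (hsr : s ≤ r) :
    |(∫ y in (-s)..s, h y * Real.sqrt (s^2 - y^2)) - c₀ * (π/2 * s^2)| ≤ 2*M*s^4 := by
  have hsub : Icc (-s) s ⊆ Icc (-r) r := Icc_subset_Icc (by linarith) hsr
  have huIcc : uIcc (-s) s = Icc (-s) s := uIcc_of_le (by linarith)
  have hsq : Continuous fun y : ℝ => Real.sqrt (s^2 - y^2) := by
    apply Real.continuous_sqrt.comp; continuity
  have hcont' : ContinuousOn h (uIcc (-s) s) := by rw [huIcc]; exact hcont.mono hsub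
  have hint1 : IntervalIntegrable (fun y => h y * Real.sqrt (s^2 - y^2)) volume (-s) s :=
    (hcont'.mul hsq.continuousOn).intervalIntegrable
  have hint2 : IntervalIntegrable (fun y => c₀ * Real.sqrt (s^2 - y^2)) volume (-s) s :=
    (continuousOn_const.mul hsq.continuousOn).intervalIntegrable
  have hint3 : IntervalIntegrable (fun y => c₁ * (y * Real.sqrt (s^2 - y^2))) volume (-s) s := by
    apply ContinuousOn.intervalIntegrable
    exact continuousOn_const.mul (continuousOn_id.mul hsq.continuousOn)
  have esplit : ∫ y in (-s)..s, (h y - c₀ - c₁ * y) * Real.sqrt (s^2 - y^2) =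
      (∫ y in (-s)..s, h y * Real.sqrt (s^2 - y^2)) - c₀ * (π/2 * s^2) := by
    have : (fun y => (h y - c₀ - c₁ * y) * Real.sqrt (s^2 - y^2)) =
        fun y => h y * Real.sqrt (s^2 - y^2) - c₀ * Real.sqrt (s^2 - y^2)
          - c₁ * (y * Real.sqrt (s^2 - y^2)) := by
      funext y; ring
    rw [this, intervalIntegral.integral_sub (hint1.sub hint2) hint3,
      intervalIntegral.integral_sub hint1 hint2,
      intervalIntegral.integral_const_mul, intervalIntegral.integral_const_mul,
      integral_sqrt_parabola hs, integral_odd_sqrt_zero]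
    ring
  rw [← esplit]
  have hbound : ∀ y ∈ Set.uIoc (-s) s, ‖(h y - c₀ - c₁ * y) * Real.sqrt (s^2 - y^2)‖ ≤ M * s^2 * s := by
    intro y hy
    have hyIcc : y ∈ Icc (-s) s := by rw [← huIcc]; exact uIoc_subset_uIcc hy
    have hy2 : y^2 ≤ s^2 := by
      have h1 : |y| ≤ s := abs_le.2 ⟨hyIcc.1, hyIcc.2⟩
      nlinarith [abs_nonneg y, sq_abs y]
    have h1 : |h y - c₀ - c₁ * y| ≤ M * s^2 := le_trans (hTay y (hsub hyIcc))
      (by nlinarith)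
    have h2 : Real.sqrt (s^2 - y^2) ≤ s := by
      have h3 := Real.sqrt_le_sqrt (show s^2 - y^2 ≤ s^2 by nlinarith)
      rwa [Real.sqrt_sq hs.le] at h3
    rw [norm_mul, Real.norm_eq_abs, Real.norm_eq_abs,
      abs_of_nonneg (Real.sqrt_nonneg _)]
    apply mul_le_mul h1 h2 (Real.sqrt_nonneg _) (by positivity)
  have := intervalIntegral.norm_integral_le_of_norm_le_const hbound
  calc |∫ y in (-s)..s, (h y - c₀ - c₁ * y) * Real.sqrt (s^2 - y^2)|
      ≤ M * s^2 * s * |s - (-s)| := by simpa using this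
    _ = 2*M*s^4 := by rw [show s - (-s) = 2*s by ring, abs_of_pos (by linarith)]; ring

lemma two_le_infty : (2 : WithTop ℕ∞) ≤ ((⊤:ℕ∞) : WithTop ℕ∞) := by
  refine le_trans ?_ (WithTop.coe_le_coe.2 (le_top : (2:ℕ∞) ≤ ⊤))
  norm_cast

lemma sqrt_alg {k a : ℝ} (hk : 0 < k) (ha : 0 < a) :
    2 * π * Real.sqrt (k / a) = π * (Real.sqrt (2*k) * (Real.sqrt (a/2))⁻¹) := by
  have h2 : Real.sqrt (k/a) * Real.sqrt (a/2) = Real.sqrt (k/2) := by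
    rw [← Real.sqrt_mul (by positivity)]
    congr 1; field_simp
  have h3 : Real.sqrt (2*k) = 2 * Real.sqrt (k/2) := by
    have h4 : Real.sqrt (2*k) = Real.sqrt 4 * Real.sqrt (k/2) := by
      rw [← Real.sqrt_mul (by norm_num : (0:ℝ) ≤ 4)]
      congr 1; ring
    rw [h4, show (4:ℝ) = 2^2 by norm_num, Real.sqrt_sq (by norm_num : (0:ℝ) ≤ 2)]
  have hs2pos : 0 < Real.sqrt (a/2) := Real.sqrt_pos.2 (by positivity)
  rw [h3, ← h2]
  field_simp

set_option maxHeartbeats 1600000 in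
/-- Small amplitude expansion of the action:
`Θ(μ) = Ξ₀ (μ - μ₀) + O((μ - μ₀)²)` where `Ξ₀ = 2π √(κ(v₀)/W''(v₀))` is the
harmonic period. -/
theorem harmonic_limit_of_action
    (A B : ℝ) (hAB : A < B) (W : ℝ → ℝ)
    (hW : ContDiffOn ℝ (⊤ : ℕ∞) W (Set.Ioo A B))
    (v₀ : ℝ) (hv₀ : v₀ ∈ Set.Ioo A B)
    (hW1 : deriv W v₀ = 0) (hW2 : 0 < deriv (deriv W) v₀)
    (hneg : ∀ v ∈ Set.Ioo A v₀, deriv W v < 0)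
    (hpos : ∀ v ∈ Set.Ioo v₀ B, 0 < deriv W v)
    (μbar : ℝ) (hμbar : W v₀ < μbar)
    (v₂ v₃ : ℝ → ℝ)
    (hv : ∀ μ ∈ Set.Ioo (W v₀) μbar,
      v₂ μ ∈ Set.Ioo A v₀ ∧ v₃ μ ∈ Set.Ioo v₀ B ∧ W (v₂ μ) = μ ∧ W (v₃ μ) = μ)
    (κ : ℝ → ℝ) (hκ : ContDiffOn ℝ (⊤ : ℕ∞) κ (Set.Ioo A B))
    (hκpos : ∀ v ∈ Set.Ioo A B, 0 < κ v) :
    ∃ μ₁ ∈ Set.Ioo (W v₀) μbar, ∃ C > (0:ℝ), ∀ μ ∈ Set.Ioo (W v₀) μ₁,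
      |(2 * ∫ v in Set.Ioo (v₂ μ) (v₃ μ), Real.sqrt (2 * κ v * (μ - W v)))
        - (2 * Real.pi * Real.sqrt (κ v₀ / deriv (deriv W) v₀)) * (μ - W v₀)|
      ≤ C * (μ - W v₀) ^ 2 := by
  obtain ⟨Q, hQc3, hQ0, hQid⟩ := Q_exists hW hv₀ hW1
  set μ₀ := W v₀ with hμ₀def
  set a := deriv (deriv W) v₀ with hadef
  have hQpos0 : 0 < Q v₀ := by rw [hQ0]; positivity
  -- δ₁ : positivity of Q and inclusion in (A,B)
  have hQca : ContinuousAt Q v₀ :=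
    (hQc3.continuousOn.continuousAt (isOpen_Ioo.mem_nhds hv₀))
  have hev1 : ∀ᶠ x in nhds v₀, 0 < Q x ∧ x ∈ Set.Ioo A B :=
    (hQca.eventually (eventually_gt_nhds hQpos0)).and
      (isOpen_Ioo.eventually_mem hv₀)
  obtain ⟨δ₁, hδ₁, hball₁⟩ := Metric.eventually_nhds_iff_ball.1 hev1
  set J₁ := Metric.ball v₀ δ₁ with hJ₁def
  have hJ₁o : IsOpen J₁ := Metric.isOpen_ball
  have hv₀J₁ : v₀ ∈ J₁ := Metric.mem_ball_self hδ₁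
  have hQposJ : ∀ v ∈ J₁, 0 < Q v := fun v hv => (hball₁ v hv).1
  have hJ₁AB : J₁ ⊆ Set.Ioo A B := fun v hv => (hball₁ v hv).2
  -- g and its properties
  set g : ℝ → ℝ := fun v => (v - v₀) * Real.sqrt (Q v) with hgdef
  have hgC3 : ContDiffOn ℝ 3 g J₁ := by
    intro v hv
    have h1 : ContDiffAt ℝ 3 Q v := hQc3.contDiffAt (isOpen_Ioo.mem_nhds (hJ₁AB hv))
    have h2 : ContDiffAt ℝ 3 (fun v => Real.sqrt (Q v)) v :=
      (Real.contDiffAt_sqrt (ne_of_gt (hQposJ v hv))).comp v h1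
    exact (((contDiffAt_id (𝕜 := ℝ) (x := v)).sub contDiffAt_const).mul h2).contDiffWithinAt
  set m₀ := Real.sqrt (Q v₀) with hm₀def
  have hm₀ : 0 < m₀ := Real.sqrt_pos.2 hQpos0
  have hg0 : g v₀ = 0 := by simp [hgdef]
  have hsqdiff : HasDerivAt (fun v => Real.sqrt (Q v)) (deriv (fun v => Real.sqrt (Q v)) v₀) v₀ := by
    have h2 : ContDiffAt ℝ 3 (fun v => Real.sqrt (Q v)) v₀ :=
      (Real.contDiffAt_sqrt (ne_of_gt hQpos0)).comp v₀
        (hQc3.contDiffAt (isOpen_Ioo.mem_nhds hv₀))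
    exact (h2.differentiableAt (by norm_num)).hasDerivAt
  have hgder : HasDerivAt g m₀ v₀ := by
    have := ((hasDerivAt_id v₀).sub_const v₀).mul hsqdiff
    refine this.congr_deriv ?_
    simp [hm₀def]
  -- quadratic identity
  have hg2 : ∀ v ∈ J₁, W v = μ₀ + (g v)^2 := by
    intro v hv
    rw [hgdef]
    simp only []
    rw [mul_pow, Real.sq_sqrt (hQposJ v hv).le]
    exact hQid v (hJ₁AB hv)
  -- IFT
  have hgCAt : ContDiffAt ℝ 3 g v₀ := hgC3.contDiffAt (hJ₁o.mem_nhds hv₀J₁)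
  have h13 : (3 : WithTop ℕ∞) ≠ 0 := by norm_num
  have hFD : HasFDerivAt g
      ((ContinuousLinearEquiv.unitsEquivAut ℝ (Units.mk0 m₀ hm₀.ne')) : ℝ →L[ℝ] ℝ) v₀ :=
    hgder.hasFDerivAt_equiv hm₀.ne'
  set ψ := hgCAt.localInverse hFD h13 with hψdef
  have hψcdg : ContDiffAt ℝ 3 ψ (g v₀) := hgCAt.to_localInverse hFD h13
  have hψcd : ContDiffAt ℝ 3 ψ 0 := by rwa [hg0] at hψcdg
  have hsf : HasStrictFDerivAt g
      ((ContinuousLinearEquiv.unitsEquivAut ℝ (Units.mk0 m₀ hm₀.ne')) : ℝ →L[ℝ] ℝ) v₀ :=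
    hgCAt.hasStrictFDerivAt' hFD h13
  have hψ0 : ψ 0 = v₀ := by
    have := hgCAt.localInverse_apply_image hFD h13
    rwa [hg0] at this
  have hright : ∀ᶠ y in nhds (0:ℝ), g (ψ y) = y := by
    have := hsf.eventually_right_inverse (f := g)
    rwa [hg0] at this
  have hψder : HasDerivAt ψ m₀⁻¹ 0 := by
    have hgstrict : HasStrictDerivAt g m₀ v₀ := by
      have := hgCAt.hasStrictDerivAt h13
      rwa [hgder.deriv] at this
    have h1 : HasStrictDerivAt (hgstrict.localInverse g m₀ v₀ hm₀.ne') m₀⁻¹ (g v₀) :=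
      hgstrict.to_localInverse hm₀.ne'
    have h2 : HasStrictDerivAt ψ m₀⁻¹ (g v₀) := h1
    rw [hg0] at h2
    exact h2.hasDerivAt
  have hψderiv0 : deriv ψ 0 = m₀⁻¹ := hψder.deriv
  -- J₂ : where deriv g > 0
  have hdgcont : ContinuousAt (deriv g) v₀ :=
    (hgC3.continuousOn_deriv_of_isOpen hJ₁o (by norm_num)).continuousAt (hJ₁o.mem_nhds hv₀J₁)
  have hdg0 : deriv g v₀ = m₀ := hgder.deriv
  have hev2 : ∀ᶠ x in nhds v₀, 0 < deriv g x ∧ x ∈ J₁ :=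
    (hdgcont.eventually (eventually_gt_nhds (by rw [hdg0]; exact hm₀))).and
      (hJ₁o.eventually_mem hv₀J₁)
  obtain ⟨δ₂, hδ₂, hball₂⟩ := Metric.eventually_nhds_iff_ball.1 hev2
  set J₂ := Metric.ball v₀ δ₂ with hJ₂def
  have hJ₂o : IsOpen J₂ := Metric.isOpen_ball
  have hv₀J₂ : v₀ ∈ J₂ := Metric.mem_ball_self hδ₂
  have hJ₂J₁ : J₂ ⊆ J₁ := fun v hv => (hball₂ v hv).2
  have hJ₂convex : Convex ℝ J₂ := convex_ball v₀ δ₂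
  have hgmono : StrictMonoOn g J₂ := by
    apply strictMonoOn_of_deriv_pos hJ₂convex ((hgC3.continuousOn).mono hJ₂J₁)
    intro x hx
    exact (hball₂ x (by rwa [hJ₂o.interior_eq] at hx)).1
  have hginj : InjOn g J₂ := hgmono.injOn
  -- ψ regularity neighborhood
  obtain ⟨u, hu_nhds, hψC3u⟩ := hψcd.contDiffOn le_rfl (by simp)
  set U₀ := interior u with hU₀def
  have hU₀o : IsOpen U₀ := isOpen_interior
  have h0U₀ : (0:ℝ) ∈ U₀ := mem_interior_iff_mem_nhds.2 hu_nhds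
  have hψC3 : ContDiffOn ℝ 3 ψ U₀ := hψC3u.mono interior_subset
  have hψcont : ContinuousOn ψ U₀ := hψC3.continuousOn
  set U₁ := U₀ ∩ ψ ⁻¹' J₂ with hU₁def
  have hU₁o : IsOpen U₁ := hψcont.isOpen_inter_preimage hU₀o hJ₂o
  have h0U₁ : (0:ℝ) ∈ U₁ := ⟨h0U₀, by simp [hψ0, hv₀J₂]⟩
  -- choose r
  have hev3 : ∀ᶠ y in nhds (0:ℝ), g (ψ y) = y ∧ y ∈ U₁ :=
    hright.and (hU₁o.eventually_mem h0U₁)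
  obtain ⟨δ₃, hδ₃, hball₃⟩ := Metric.eventually_nhds_iff_ball.1 hev3
  set r := δ₃/2 with hrdef
  have hr : 0 < r := by positivity
  have hIccProp : ∀ y ∈ Icc (-r) r, g (ψ y) = y ∧ y ∈ U₀ ∧ ψ y ∈ J₂ := by
    intro y hy
    have : y ∈ Metric.ball (0:ℝ) δ₃ := by
      rw [Metric.mem_ball, Real.dist_eq, sub_zero]
      have := abs_le.2 ⟨hy.1, hy.2⟩
      linarith
    obtain ⟨he, hm⟩ := hball₃ y this
    exact ⟨he, hm.1, hm.2⟩
  have hIccU₁ : Icc (-r) r ⊆ U₁ := by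
    intro y hy; obtain ⟨_, h1, h2⟩ := hIccProp y hy; exact ⟨h1, h2⟩
  -- the function h
  set h : ℝ → ℝ := fun y => Real.sqrt (2 * κ (ψ y)) * deriv ψ y with hhdef
  have hψABmem : ∀ y ∈ U₁, ψ y ∈ Set.Ioo A B := fun y hy => hJ₁AB (hJ₂J₁ hy.2)
  have hhC2 : ContDiffOn ℝ 2 h U₁ := by
    intro y hy
    have c1 : ContDiffAt ℝ 3 ψ y := hψC3.contDiffAt (hU₀o.mem_nhds hy.1)
    have c2 : ContDiffAt ℝ 2 κ (ψ y) :=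
      (hκ.contDiffAt (isOpen_Ioo.mem_nhds (hψABmem y hy))).of_le two_le_infty
    have c3 : ContDiffAt ℝ 2 (fun y => 2 * κ (ψ y)) y :=
      contDiffAt_const.mul (c2.comp y (c1.of_le (by norm_num)))
    have c4 : 2 * κ (ψ y) ≠ 0 := by
      have := hκpos _ (hψABmem y hy); positivity
    have c5 : ContDiffAt ℝ 2 (fun y => Real.sqrt (2 * κ (ψ y))) y :=
      (Real.contDiffAt_sqrt c4).comp y c3
    have c6 : ContDiffAt ℝ 2 (deriv ψ) y :=
      (hψC3.deriv_of_isOpen (m := 2) hU₀o (by norm_num)).contDiffAt (hU₀o.mem_nhds hy.1)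
    exact (c5.mul c6).contDiffWithinAt
  obtain ⟨M, hM0, hTay⟩ := taylor_quadratic_bound hU₁o hIccU₁ hhC2 hr
  have hhcont : ContinuousOn h (Icc (-r) r) := hhC2.continuousOn.mono hIccU₁
  have hκ₀pos : 0 < κ v₀ := hκpos v₀ hv₀
  have hh0 : h 0 = Real.sqrt (2 * κ v₀) * m₀⁻¹ := by
    rw [hhdef]; simp only []; rw [hψ0, hψderiv0]
  -- choose μ₁
  set wl := v₀ - δ₂/2 with hwldef
  set wr := v₀ + δ₂/2 with hwrdef
  have hwlJ₂ : wl ∈ J₂ := by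
    rw [hJ₂def, Metric.mem_ball, Real.dist_eq, hwldef]
    rw [show v₀ - δ₂/2 - v₀ = -(δ₂/2) by ring, abs_neg, abs_of_pos (by linarith)]; linarith
  have hwrJ₂ : wr ∈ J₂ := by
    rw [hJ₂def, Metric.mem_ball, Real.dist_eq, hwrdef]
    rw [show v₀ + δ₂/2 - v₀ = δ₂/2 by ring, abs_of_pos (by linarith)]; linarith
  have hwlAB : wl ∈ Set.Ioo A B := hJ₁AB (hJ₂J₁ hwlJ₂)
  have hwrAB : wr ∈ Set.Ioo A B := hJ₁AB (hJ₂J₁ hwrJ₂)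
  have hwl : wl < v₀ := by rw [hwldef]; linarith
  have hwr : v₀ < wr := by rw [hwrdef]; linarith
  -- W wl > μ₀
  have hWwl : μ₀ < W wl := by
    have hanti : StrictAntiOn W (Icc wl v₀) := by
      apply strictAntiOn_of_deriv_neg (convex_Icc _ _)
      · apply hW.continuousOn.mono
        intro x hx
        exact ⟨lt_of_lt_of_le hwlAB.1 hx.1, lt_of_le_of_lt hx.2 hv₀.2⟩
      · intro x hx
        rw [interior_Icc] at hx
        exact hneg x ⟨lt_trans hwlAB.1 hx.1, hx.2⟩
    exact hanti ⟨le_rfl, hwl.le⟩ ⟨hwl.le, le_rfl⟩ hwl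
  have hWwr : μ₀ < W wr := by
    have hmon : StrictMonoOn W (Icc v₀ wr) := by
      apply strictMonoOn_of_deriv_pos (convex_Icc _ _)
      · apply hW.continuousOn.mono
        intro x hx
        exact ⟨lt_of_lt_of_le hv₀.1 hx.1, lt_of_le_of_lt hx.2 hwrAB.2⟩
      · intro x hx
        rw [interior_Icc] at hx
        exact hpos x ⟨hx.1, lt_trans hx.2 hwrAB.2⟩
    exact hmon ⟨le_rfl, hwr.le⟩ ⟨hwr.le, le_rfl⟩ hwr
  set μ₁ := min (min ((μ₀ + μbar)/2) (μ₀ + r^2)) (min (W wl) (W wr)) with hμ₁def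
  have hμ₁gt : μ₀ < μ₁ := by
    exact lt_min (lt_min (by linarith) (lt_add_of_pos_right _ (pow_pos hr 2))) (lt_min hWwl hWwr)
  have hμ₁lt : μ₁ < μbar := by
    calc μ₁ ≤ (μ₀ + μbar)/2 := le_trans (min_le_left _ _) (min_le_left _ _)
      _ < μbar := by linarith
  refine ⟨μ₁, ⟨hμ₁gt, hμ₁lt⟩, 4*M + 1, by positivity, ?_⟩
  intro μ hμ
  set ε := μ - μ₀ with hεdef
  have hε : 0 < ε := by rw [hεdef]; linarith [hμ.1]
  have hμmem : μ ∈ Set.Ioo μ₀ μbar := ⟨hμ.1, lt_trans hμ.2 hμ₁lt⟩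
  obtain ⟨hv2m, hv3m, hWv2, hWv3⟩ := hv μ hμmem
  set s := Real.sqrt ε with hsdef
  have hs : 0 < s := Real.sqrt_pos.2 hε
  have hs2 : s^2 = ε := Real.sq_sqrt hε.le
  have hsr : s ≤ r := by
    have hεr : ε < r^2 := by
      have : μ < μ₀ + r^2 := lt_of_lt_of_le hμ.2
        (le_trans (min_le_left _ _) (min_le_right _ _))
      rw [hεdef]; linarith
    have h1 := Real.sqrt_le_sqrt hεr.le
    rwa [Real.sqrt_sq hr.le] at h1
  have hμWwl : μ < W wl := lt_of_lt_of_le hμ.2 (le_trans (min_le_right _ _) (min_le_left _ _))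
  have hμWwr : μ < W wr := lt_of_lt_of_le hμ.2 (le_trans (min_le_right _ _) (min_le_right _ _))
  -- v₂ μ ∈ J₂
  have hv2J₂ : v₂ μ ∈ J₂ := by
    have hlt : wl < v₂ μ := by
      by_contra hcon
      push_neg at hcon
      have hanti : StrictAntiOn W (Icc (v₂ μ) v₀) := by
        apply strictAntiOn_of_deriv_neg (convex_Icc _ _)
        · apply hW.continuousOn.mono
          intro x hx
          exact ⟨lt_of_lt_of_le hv2m.1 hx.1, lt_of_le_of_lt hx.2 hv₀.2⟩
        · intro x hx
          rw [interior_Icc] at hx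
          exact hneg x ⟨lt_trans hv2m.1 hx.1, hx.2⟩
      rcases lt_or_eq_of_le hcon with hlt2 | heq
      · have := hanti ⟨le_rfl, hv2m.2.le⟩ ⟨hlt2.le, hwl.le⟩ hlt2
        rw [hWv2] at this
        linarith
      · rw [heq] at hWv2; linarith
    rw [hJ₂def, Metric.mem_ball, Real.dist_eq]
    rw [abs_lt]
    constructor
    · rw [hwldef] at hlt; linarith
    · linarith [hv2m.2]
  have hv3J₂ : v₃ μ ∈ J₂ := by
    have hlt : v₃ μ < wr := by
      by_contra hcon
      push_neg at hcon
      have hmon : StrictMonoOn W (Icc v₀ (v₃ μ)) := by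
        apply strictMonoOn_of_deriv_pos (convex_Icc _ _)
        · apply hW.continuousOn.mono
          intro x hx
          exact ⟨lt_of_lt_of_le hv₀.1 hx.1, lt_of_le_of_lt hx.2 hv3m.2⟩
        · intro x hx
          rw [interior_Icc] at hx
          exact hpos x ⟨hx.1, lt_trans hx.2 hv3m.2⟩
      rcases lt_or_eq_of_le hcon with hlt2 | heq
      · have := hmon ⟨hwr.le, hlt2.le⟩ ⟨hv3m.1.le, le_rfl⟩ hlt2
        rw [hWv3] at this
        linarith
      · rw [← heq] at hWv3; linarith
    rw [hJ₂def, Metric.mem_ball, Real.dist_eq, abs_lt]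
    constructor
    · linarith [hv3m.1]
    · rw [hwrdef] at hlt; linarith
  -- endpoint identification
  have hgv2sq : (g (v₂ μ))^2 = ε := by
    have := hg2 (v₂ μ) (hJ₂J₁ hv2J₂)
    rw [hWv2] at this; linarith
  have hgv3sq : (g (v₃ μ))^2 = ε := by
    have := hg2 (v₃ μ) (hJ₂J₁ hv3J₂)
    rw [hWv3] at this; linarith
  have hgv2neg : g (v₂ μ) < 0 := by
    rw [hgdef]
    exact mul_neg_of_neg_of_pos (by linarith [hv2m.2])
      (Real.sqrt_pos.2 (hQposJ _ (hJ₂J₁ hv2J₂)))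
  have hgv3pos : 0 < g (v₃ μ) := by
    rw [hgdef]
    exact mul_pos (by linarith [hv3m.1]) (Real.sqrt_pos.2 (hQposJ _ (hJ₂J₁ hv3J₂)))
  have hgv2 : g (v₂ μ) = -s := by
    have hfac : (g (v₂ μ) - s) * (g (v₂ μ) + s) = 0 := by linear_combination hgv2sq - hs2
    rcases mul_eq_zero.1 hfac with h1 | h1
    · linarith only [h1, hgv2neg, hs]
    · linarith only [h1]
  have hgv3 : g (v₃ μ) = s := by
    have hfac : (g (v₃ μ) - s) * (g (v₃ μ) + s) = 0 := by linear_combination hgv3sq - hs2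
    rcases mul_eq_zero.1 hfac with h1 | h1
    · linarith only [h1]
    · linarith only [h1, hgv3pos, hs]
  have hmsIcc : -s ∈ Icc (-r) r := ⟨by linarith, by linarith⟩
  have hsIcc : s ∈ Icc (-r) r := ⟨by linarith, by linarith⟩
  obtain ⟨hgψms, hmsU₀, hψmsJ₂⟩ := hIccProp (-s) hmsIcc
  obtain ⟨hgψs, hsU₀, hψsJ₂⟩ := hIccProp s hsIcc
  have hψms : ψ (-s) = v₂ μ := hginj hψmsJ₂ hv2J₂ (by rw [hgψms, hgv2])
  have hψs : ψ s = v₃ μ := hginj hψsJ₂ hv3J₂ (by rw [hgψs, hgv3])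
  -- the integrand
  set F : ℝ → ℝ := fun v => Real.sqrt (2 * κ v * (μ - W v)) with hFdef
  have hFcont : ContinuousOn F (Set.Ioo A B) := by
    apply Real.continuous_sqrt.comp_continuousOn
    exact (continuousOn_const.mul hκ.continuousOn).mul
      (continuousOn_const.sub hW.continuousOn)
  have hv23 : v₂ μ < v₃ μ := lt_trans hv2m.2 hv3m.1
  have hIccr : Icc (-s) s ⊆ Icc (-r) r := Icc_subset_Icc (by linarith) hsr
  have huIccs : uIcc (-s) s = Icc (-s) s := uIcc_of_le (by linarith)
  -- substitution
  have hsub : ∫ y in (-s)..s, deriv ψ y • F (ψ y) = ∫ u in (v₂ μ)..(v₃ μ), F u := by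
    have h1 := intervalIntegral.integral_comp_smul_deriv'' (f := ψ) (f' := deriv ψ) (g := F)
      (a := -s) (b := s) ?_ ?_ ?_ ?_
    · rw [hψms, hψs] at h1
      exact h1
    · exact hψcont.mono (fun y hy => (hIccU₁ (hIccr (huIccs ▸ hy))).1)
    · intro x hx
      rw [min_eq_left (by linarith : -s ≤ s), max_eq_right (by linarith : -s ≤ s)] at hx
      have hxU₀ : x ∈ U₀ := (hIccU₁ (hIccr (Ioo_subset_Icc_self hx))).1
      exact (((hψC3.differentiableOn (by norm_num)).differentiableAt
        (hU₀o.mem_nhds hxU₀)).hasDerivAt).hasDerivWithinAt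
    · exact ((hψC3.deriv_of_isOpen (m := 2) hU₀o (by norm_num)).continuousOn).mono
        (fun y hy => (hIccU₁ (hIccr (huIccs ▸ hy))).1)
    · apply hFcont.mono
      intro z hz
      obtain ⟨y, hy, rfl⟩ := hz
      exact hψABmem y (hIccU₁ (hIccr (huIccs ▸ hy)))
  -- integrand equality
  have hintegrand : ∀ y ∈ uIcc (-s) s, deriv ψ y • F (ψ y) = h y * Real.sqrt (s^2 - y^2) := by
    intro y hy
    rw [huIccs] at hy
    have hyIcc : y ∈ Icc (-r) r := hIccr hy
    obtain ⟨hgψy, hyU₀, hψyJ₂⟩ := hIccProp y hyIcc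
    have hWψy : W (ψ y) = μ₀ + y^2 := by
      rw [hg2 (ψ y) (hJ₂J₁ hψyJ₂), hgψy]
    have hμW : μ - W (ψ y) = s^2 - y^2 := by
      rw [hWψy, hs2]; rw [hεdef]; ring
    rw [hFdef]
    simp only []
    rw [hμW, Real.sqrt_mul (mul_nonneg (by norm_num) (hκpos _ (hψABmem y ⟨hyU₀, hψyJ₂⟩)).le : (0:ℝ) ≤ 2 * κ (ψ y)), hhdef]
    simp only [smul_eq_mul]
    ring
  have hsubst2 : ∫ u in (v₂ μ)..(v₃ μ), F u = ∫ y in (-s)..s, h y * Real.sqrt (s^2 - y^2) := by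
    rw [← hsub]
    exact intervalIntegral.integral_congr hintegrand
  -- set integral to interval integral
  have hsetint : ∫ v in Set.Ioo (v₂ μ) (v₃ μ), F v = ∫ u in (v₂ μ)..(v₃ μ), F u := by
    rw [intervalIntegral.integral_of_le hv23.le, MeasureTheory.integral_Ioc_eq_integral_Ioo]
  -- core estimate
  have hcore := core_estimate hr hM0 hhcont
    (fun y hy => by
      have := hTay y hy
      exact this) hs hsr
  -- final computation
  have hΞ : (2 * π * Real.sqrt (κ v₀ / a)) * ε = 2 * (h 0 * (π/2 * s^2)) := by
    rw [hh0, hs2]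
    have halg := sqrt_alg hκ₀pos hW2
    rw [hm₀def, hQ0]
    linear_combination ε * halg
  calc |2 * (∫ v in Set.Ioo (v₂ μ) (v₃ μ), F v) - (2 * π * Real.sqrt (κ v₀ / a)) * (μ - μ₀)|
      = 2 * |(∫ y in (-s)..s, h y * Real.sqrt (s^2 - y^2)) - h 0 * (π/2 * s^2)| := by
        rw [hsetint, hsubst2, ← hεdef, hΞ]
        rw [show 2 * (∫ y in (-s)..s, h y * Real.sqrt (s^2 - y^2)) - 2 * (h 0 * (π/2 * s^2))
          = 2 * ((∫ y in (-s)..s, h y * Real.sqrt (s^2 - y^2)) - h 0 * (π/2 * s^2)) by ring,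
          abs_mul]
        norm_num
    _ ≤ 2 * (2*M*s^4) := by linarith only [hcore]
    _ = 4*M*ε^2 := by rw [show s^4 = (s^2)^2 by ring, hs2]; ring
    _ ≤ (4*M+1) * ε^2 := by
        calc 4*M*ε^2 ≤ 4*M*ε^2 + ε^2 := le_add_of_nonneg_right (sq_nonneg ε)
          _ = (4*M+1)*ε^2 := by ring
end
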